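/- arXiv:2009.14816 — 7 statements merged into one kernel-verified Lean document; each statement's English description precedes it below -/
import Mathlib

section
/- Fix ν ∈ (1/2, 1). If x₁, x₂ : [0,T] → [0,∞) both solve x' = x^{1/ν-1} with x(0) = 0, then E₁(t) := |x₁(t) - x₂(t)| satisfies E₁(t) ≤ C_ν · t^{ν/(2ν-1)} for all t ∈ [0,T], where C_ν depends only on ν. In particular one can take C_ν such that the bound follows from integrating dE₁/dt ≤ C'_ν E₁^{1/ν - 1}. -/
open Set Filter Topology

/-- ε-approximate bound for a single solution. -/
lemma sol_le_eps (ν : ℝ) (hν1 : 1/2 < ν) (hν2 : ν < 1) (T : ℝ) (x : ℝ → ℝ) (hT : 0 < T)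
    (hc : ContinuousOn x (Icc 0 T)) (hnn : ∀ t ∈ Icc (0:ℝ) T, 0 ≤ x t) (h0 : x 0 = 0)
    (hd : ∀ t ∈ Ioo (0:ℝ) T, HasDerivAt x (x t ^ (1/ν - 1)) t) :
    ∀ t ∈ Icc (0:ℝ) T, ∀ ε > (0:ℝ), x t ≤ (t + ε) ^ (ν/(2*ν - 1)) + ε := by
  set α := 1/ν - 1 with hα
  set p := ν/(2*ν - 1) with hp
  have hν0 : (0:ℝ) < ν := by linarith
  have h2ν : (0:ℝ) < 2*ν - 1 := by linarith
  have hp1 : 1 < p := by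
    rw [hp, lt_div_iff₀ h2ν]; linarith
  have hp0 : (0:ℝ) < p := by linarith
  have hα0 : (0:ℝ) < α := by
    have : 1 < 1/ν := by rw [lt_div_iff₀ hν0]; linarith
    simp only [hα]; linarith
  have hα1 : α ≤ 1 := by
    have : 1/ν ≤ 2 := by rw [div_le_iff₀ hν0]; linarith
    simp only [hα]; linarith
  have hpα : p * α = p - 1 := by
    rw [hp, hα, div_mul_eq_mul_div, div_sub_one h2ν.ne', div_left_inj' h2ν.ne', mul_sub, mul_one_div_cancel hν0.ne']; ring
  intro t ht ε hε
  rcases eq_or_lt_of_le ht.1 with h | h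
  · rw [← h, h0]
    have h1 : (0:ℝ) ≤ (0 + ε) ^ p := Real.rpow_nonneg (by linarith) p
    linarith
  · -- t > 0
    set k := (p + 1)/2 with hk
    have hk1 : 1 < k := by rw [hk]; linarith
    have hkp : k < p := by rw [hk]; linarith
    set η := min ε ((k - 1) * ε ^ p) with hη
    have hη0 : 0 < η :=
      lt_min hε (mul_pos (by linarith) (Real.rpow_pos_of_pos hε p))
    have hcw : ContinuousWithinAt x (Icc 0 T) 0 := hc 0 ⟨le_refl 0, hT.le⟩
    rw [Metric.continuousWithinAt_iff] at hcw
    obtain ⟨δ, hδ0, hδ⟩ := hcw η hη0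
    set s := min (δ/2) t with hs
    have hs0 : 0 < s := lt_min (by linarith) h
    have hst : s ≤ t := min_le_right _ _
    have hsT : s ≤ T := hst.trans ht.2
    have hsmem : s ∈ Icc (0:ℝ) T := ⟨hs0.le, hsT⟩
    have hxs : x s < η := by
      have hdist : dist s 0 < δ := by
        rw [Real.dist_eq, sub_zero, abs_of_nonneg hs0.le]
        calc s ≤ δ/2 := min_le_left _ _
          _ < δ := by linarith
      have := hδ hsmem hdist
      rwa [h0, Real.dist_eq, sub_zero, abs_of_nonneg (hnn s hsmem)] at this
    set c := x s with hc'
    have key : ∀ ⦃y⦄, y ∈ Icc s T → x y ≤ (fun y => (y + ε) ^ p + c) y := by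
      apply image_le_of_deriv_right_lt_deriv_boundary (f := x) (a := s) (b := T)
        (B := fun y => (y + ε) ^ p + c)
        (f' := fun y => x y ^ α) (B' := fun y => p * (y + ε) ^ (p - 1))
      · exact hc.mono (Icc_subset_Icc hs0.le le_rfl)
      · intro y hy
        exact (hd y ⟨lt_of_lt_of_le hs0 hy.1, hy.2⟩).hasDerivWithinAt
      · have h1 : (0:ℝ) ≤ (s + ε) ^ p := Real.rpow_nonneg (by linarith) p
        show x s ≤ (s + ε) ^ p + c
        rw [hc']
        linarith
      · intro y
        have h1 : HasDerivAt (fun u : ℝ => u ^ p) (p * (y + ε) ^ (p - 1)) (y + ε) :=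
          Real.hasDerivAt_rpow_const (Or.inr hp1.le)
        have h2 : HasDerivAt (fun u : ℝ => u + ε) 1 y := (hasDerivAt_id y).add_const ε
        have := (h1.comp y h2).add_const c
        simpa using this
      · intro y hy heq
        have hys : 0 < y := lt_of_lt_of_le hs0 hy.1
        have hyε : (0:ℝ) < y + ε := by linarith
        have hεy : ε ≤ y + ε := by linarith
        have hup : (0:ℝ) < (y + ε) ^ p := Real.rpow_pos_of_pos hyε p
        have hc0 : 0 ≤ c := hnn s hsmem
        have hc_le : c ≤ (k - 1) * (y + ε) ^ p := by
          have h1 : c ≤ (k - 1) * ε ^ p := hxs.le.trans (min_le_right _ _)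
          have h2 : ε ^ p ≤ (y + ε) ^ p := Real.rpow_le_rpow hε.le hεy hp0.le
          nlinarith
        have heq' : x y = (y + ε) ^ p + c := heq
        rw [heq']
        calc ((y + ε) ^ p + c) ^ α
            ≤ ((y + ε) ^ p * k) ^ α := by
              apply Real.rpow_le_rpow (by linarith) (by nlinarith) hα0.le
          _ = ((y + ε) ^ p) ^ α * k ^ α :=
              Real.mul_rpow hup.le (by linarith)
          _ ≤ (y + ε) ^ (p - 1) * k := by
              rw [← Real.rpow_mul hyε.le, hpα]
              have hk' : k ^ α ≤ k := by
                have := Real.rpow_le_rpow_of_exponent_le hk1.le hα1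
                rwa [Real.rpow_one] at this
              exact mul_le_mul_of_nonneg_left hk' (Real.rpow_nonneg hyε.le _)
          _ < (y + ε) ^ (p - 1) * p := by
              exact mul_lt_mul_of_pos_left hkp (Real.rpow_pos_of_pos hyε (p - 1))
          _ = p * (y + ε) ^ (p - 1) := mul_comm _ _
    have hkey : x t ≤ (t + ε) ^ p + c := key ⟨hst, ht.2⟩
    have hcε : c ≤ ε := hxs.le.trans (min_le_left _ _)
    linarith

/-- Bound for a single solution: `x t ≤ t ^ (ν/(2ν-1))`. -/
lemma sol_le (ν : ℝ) (hν1 : 1/2 < ν) (hν2 : ν < 1) (T : ℝ) (x : ℝ → ℝ) (hT : 0 < T)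
    (hc : ContinuousOn x (Icc 0 T)) (hnn : ∀ t ∈ Icc (0:ℝ) T, 0 ≤ x t) (h0 : x 0 = 0)
    (hd : ∀ t ∈ Ioo (0:ℝ) T, HasDerivAt x (x t ^ (1/ν - 1)) t) :
    ∀ t ∈ Icc (0:ℝ) T, x t ≤ t ^ (ν/(2*ν - 1)) := by
  set p := ν/(2*ν - 1) with hp
  have hν0 : (0:ℝ) < ν := by linarith
  have h2ν : (0:ℝ) < 2*ν - 1 := by linarith
  have hp0 : (0:ℝ) < p := div_pos hν0 h2ν
  intro t ht
  rcases eq_or_lt_of_le ht.1 with h | h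
  · rw [← h, h0, Real.zero_rpow hp0.ne']
  · have htend : Tendsto (fun ε : ℝ => (t + ε) ^ p + ε) (𝓝[>] 0) (𝓝 (t ^ p)) := by
      have h1 : Tendsto (fun ε : ℝ => t + ε) (𝓝[>] 0) (𝓝 t) := by
        have : Tendsto (fun ε : ℝ => t + ε) (𝓝 0) (𝓝 (t + 0)) :=
          (continuous_const.add continuous_id).tendsto 0
        rw [add_zero] at this
        exact this.mono_left nhdsWithin_le_nhds
      have h2 : ContinuousAt (fun u : ℝ => u ^ p) t :=
        Real.continuousAt_rpow_const t p (Or.inl h.ne')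
      have h3 : Tendsto (fun ε : ℝ => (t + ε) ^ p) (𝓝[>] 0) (𝓝 (t ^ p)) :=
        h2.tendsto.comp h1
      have h4 : Tendsto (fun ε : ℝ => ε) (𝓝[>] (0:ℝ)) (𝓝 0) :=
        tendsto_id.mono_left nhdsWithin_le_nhds
      have := h3.add h4
      rwa [add_zero] at this
    apply ge_of_tendsto htend
    filter_upwards [self_mem_nhdsWithin] with ε hε
    exact sol_le_eps ν hν1 hν2 T x hT hc hnn h0 hd t ht ε hε

theorem energy_E1_growth (ν : ℝ) (hν1 : 1/2 < ν) (hν2 : ν < 1) :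
    ∃ C > 0, ∀ (T : ℝ) (x₁ x₂ : ℝ → ℝ), 0 < T →
      ContinuousOn x₁ (Icc 0 T) → ContinuousOn x₂ (Icc 0 T) →
      (∀ t ∈ Icc (0:ℝ) T, 0 ≤ x₁ t) → (∀ t ∈ Icc (0:ℝ) T, 0 ≤ x₂ t) →
      x₁ 0 = 0 → x₂ 0 = 0 →
      (∀ t ∈ Ioo (0:ℝ) T, HasDerivAt x₁ (x₁ t ^ (1/ν - 1)) t) →
      (∀ t ∈ Ioo (0:ℝ) T, HasDerivAt x₂ (x₂ t ^ (1/ν - 1)) t) →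
      ∀ t ∈ Icc (0:ℝ) T, |x₁ t - x₂ t| ≤ C * t ^ (ν/(2*ν - 1)) := by
  refine ⟨2, by norm_num, ?_⟩
  intro T x₁ x₂ hT h1c h2c h1n h2n h10 h20 h1d h2d t ht
  have b1 := sol_le ν hν1 hν2 T x₁ hT h1c h1n h10 h1d t ht
  have b2 := sol_le ν hν1 hν2 T x₂ hT h2c h2n h20 h2d t ht
  have hn1 := h1n t ht
  have hn2 := h2n t ht
  rw [abs_le]
  constructor <;> [linarith; linarith]
end

section
/- Let 0 < ν < 1 and let a, b be nonzero complex numbers with arguments in [0, min(π, π/ν)). Then |a^ν - b^ν| is comparable (with constants depending only on ν) to |a-b| · min(|a|^{ν-1}, |b|^{ν-1}), and also comparable to |a-b| · min(|a|^{ν-1}, |b|^{ν-1}, |a-b|^{ν-1}). -/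
open Real

private lemma cpow_polar (ν : ℝ) {a : ℂ} (ha : a ≠ 0) :
    a ^ (ν:ℂ) = ((‖a‖ ^ ν : ℝ) : ℂ) * Complex.exp ((ν * a.arg : ℝ) * Complex.I) := by
  rw [Complex.cpow_def_of_ne_zero ha]
  have h1 : Complex.log a * ν
      = ((ν * Real.log (‖a‖) : ℝ) : ℂ) + ((ν * a.arg : ℝ) : ℂ) * Complex.I := by
    rw [Complex.log]; push_cast; ring
  rw [h1, Complex.exp_add, ← Complex.ofReal_exp]
  congr 2
  rw [Real.rpow_def_of_pos (norm_pos_iff.mpr ha), mul_comm]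



private lemma abs_sub_polar (r s α β : ℝ) :
    ‖(r:ℂ) * Complex.exp ((α:ℝ) * Complex.I) - (s:ℂ) * Complex.exp ((β:ℝ) * Complex.I)‖ ^ 2
      = r^2 + s^2 - 2*r*s*Real.cos (α - β) := by
  rw [Complex.sq_norm, Complex.normSq_apply]
  simp [Complex.exp_mul_I, Real.cos_sub, Complex.cos_ofReal_re, Complex.sin_ofReal_re]
  nlinarith [Real.sin_sq_add_cos_sq α, Real.sin_sq_add_cos_sq β]


private lemma arith_upper (ν t u P Q p : ℝ) (ht0 : 0 < t)
    (hu1 : u ≤ 1) (hP0 : 0 ≤ P) (hQ0 : 0 ≤ Q) (hQ1 : Q ≤ 1)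
    (h1tν : 1 - u ≤ 1 - t) (h1tν0 : 0 ≤ 1 - u) (hu0 : 0 < u)
    (hP2 : P^2 ≤ ν^2*p^2/4 * Q^2) :
    (1-u)^2 + 4*u*P^2 ≤ (1 + 4*ν^2*p^2) * ((1-t)^2 + 4*t*Q^2) := by
  have h1t0 : 0 ≤ 1 - t := le_trans h1tν0 h1tν
  have f1 : (1-u)^2 ≤ (1-t)^2 := by nlinarith
  have f3 : u*Q^2 ≤ 2*t*Q^2 + 4*(1-t)^2 := by
    rcases le_or_gt (1/2 : ℝ) t with h | h
    · nlinarith [sq_nonneg Q]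
    · have hQsq : Q^2 ≤ 1 := by nlinarith
      have h1 : u*Q^2 ≤ 1 := by nlinarith [sq_nonneg Q]
      have h2 : (1:ℝ) ≤ 4*(1-t)^2 := by nlinarith
      nlinarith [mul_nonneg ht0.le (sq_nonneg Q)]
  have f2 : 4*u*P^2 ≤ ν^2*p^2*(u*Q^2) := by
    have h := mul_le_mul_of_nonneg_left hP2 (by positivity : (0:ℝ) ≤ 4*u)
    calc 4*u*P^2 = 4*u*(P^2) := by ring
      _ ≤ 4*u*(ν^2*p^2/4*Q^2) := h
      _ = ν^2*p^2*(u*Q^2) := by ring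
  have hk : (0:ℝ) ≤ ν^2*p^2 := by positivity
  have f5 : ν^2*p^2*(u*Q^2) ≤ ν^2*p^2*(2*t*Q^2 + 4*(1-t)^2) :=
    mul_le_mul_of_nonneg_left f3 hk
  have f6 : 0 ≤ ν^2*p^2*(t*Q^2) := by positivity
  have f4 : 0 ≤ t*Q^2 := by positivity
  nlinarith [f1, f2, f5, f6, f4]

private lemma arith_lower (ν t u P Q p : ℝ) (hν0 : 0 < ν) (ht0 : 0 < t)
    (hP0 : 0 ≤ P) (htu : t ≤ u) (hu0 : 0 < u)
    (hν1t : ν*(1-t) ≤ 1-u) (h1t0 : 0 ≤ 1 - t) (hp1 : (1:ℝ) ≤ p^2)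
    (hQ2 : ν^2*Q^2 ≤ p^2/4 * P^2) :
    ν^2 * ((1-t)^2 + 4*t*Q^2) ≤ p^2 * ((1-u)^2 + 4*u*P^2) := by
  have g1 : ν^2*(1-t)^2 ≤ (1-u)^2 := by
    nlinarith [mul_self_le_mul_self (mul_nonneg hν0.le h1t0) hν1t]
  have g4 : (1-u)^2 ≤ p^2*(1-u)^2 := by nlinarith [sq_nonneg (1-u)]
  have g2 : ν^2*(t*Q^2) ≤ ν^2*(u*Q^2) := by
    apply mul_le_mul_of_nonneg_left _ (by positivity)
    nlinarith [sq_nonneg Q]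
  have g3 : u*(ν^2*Q^2) ≤ u*(p^2/4*P^2) := mul_le_mul_of_nonneg_left hQ2 hu0.le
  have g5 : 0 ≤ p^2*(u*P^2) := by positivity
  nlinarith [g1, g4, g2, g3, g5]

set_option maxHeartbeats 1000000 in
private lemma core_ineq (ν : ℝ) (hν0 : 0 < ν) (hν1 : ν < 1) (t δ : ℝ)
    (ht0 : 0 < t) (ht1 : t ≤ 1) (hδ0 : 0 ≤ δ) (hδπ : δ < π) :
    ((1 - t^ν)^2 + 4*t^ν*Real.sin (ν*δ/2)^2
        ≤ (1 + 4*ν^2*π^2) * ((1 - t)^2 + 4*t*Real.sin (δ/2)^2)) ∧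
    ((1 - t)^2 + 4*t*Real.sin (δ/2)^2
        ≤ (π^2/ν^2) * ((1 - t^ν)^2 + 4*t^ν*Real.sin (ν*δ/2)^2)) := by
  have hπ : (0:ℝ) < π := Real.pi_pos
  obtain ⟨u, hu⟩ : ∃ u, t^ν = u := ⟨_, rfl⟩
  obtain ⟨P, hPd⟩ : ∃ P, Real.sin (ν*δ/2) = P := ⟨_, rfl⟩
  obtain ⟨Q, hQd⟩ : ∃ Q, Real.sin (δ/2) = Q := ⟨_, rfl⟩
  rw [hu, hPd, hQd]
  have hδ2a : 0 ≤ δ/2 := by linarith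
  have hδ2b : δ/2 ≤ π/2 := by linarith
  have hνδa : 0 ≤ ν*δ/2 := by positivity
  have hνδb : ν*δ/2 ≤ π/2 := by nlinarith
  have hQ0 : 0 ≤ Q := hQd ▸ Real.sin_nonneg_of_nonneg_of_le_pi hδ2a (by linarith)
  have hP0 : 0 ≤ P := hPd ▸ Real.sin_nonneg_of_nonneg_of_le_pi hνδa (by linarith)
  have hP1 : P ≤ 1 := hPd ▸ Real.sin_le_one _
  have hQ1 : Q ≤ 1 := hQd ▸ Real.sin_le_one _
  have jQ : 2/π * (δ/2) ≤ Q := hQd ▸ Real.mul_le_sin hδ2a hδ2b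
  have jP : 2/π * (ν*δ/2) ≤ P := hPd ▸ Real.mul_le_sin hνδa hνδb
  have sQ : Q ≤ δ/2 := hQd ▸ Real.sin_le hδ2a
  have sP : P ≤ ν*δ/2 := hPd ▸ Real.sin_le hνδa
  have hPQ : P ≤ ν*(π/2)*Q := by
    have h := mul_le_mul_of_nonneg_left jQ (by positivity : (0:ℝ) ≤ ν*(π/2))
    have e1 : ν*(π/2) * (2/π*(δ/2)) = ν*δ/2 := by field_simp
    rw [e1] at h; linarith
  have hQP : Q ≤ π/(2*ν)*P := by
    have h := mul_le_mul_of_nonneg_left jP (by positivity : (0:ℝ) ≤ π/(2*ν))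
    have e1 : π/(2*ν) * (2/π*(ν*δ/2)) = δ/2 := by field_simp
    rw [e1] at h; linarith
  have hP2 : P^2 ≤ ν^2*π^2/4 * Q^2 := by
    have h := mul_le_mul hPQ hPQ hP0 (mul_nonneg (by positivity) hQ0)
    nlinarith [h]
  have hQ2 : ν^2*Q^2 ≤ π^2/4 * P^2 := by
    have h := mul_le_mul hQP hQP hQ0 (mul_nonneg (by positivity) hP0)
    have e : (π/(2*ν)*P)*(π/(2*ν)*P) = π^2/(4*ν^2)*P^2 := by field_simp; ring
    rw [e] at h
    have h2 := mul_le_mul_of_nonneg_left h (by positivity : (0:ℝ) ≤ ν^2)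
    have e2 : ν^2*(π^2/(4*ν^2)*P^2) = π^2/4*P^2 := by field_simp
    rw [e2] at h2; nlinarith [h2]
  have htν0 : 0 < u := hu ▸ Real.rpow_pos_of_pos ht0 ν
  have htν1 : u ≤ 1 := hu ▸ Real.rpow_le_one ht0.le ht1 hν0.le
  have httν : t ≤ u := by
    rw [← hu]; nth_rewrite 1 [← Real.rpow_one t]
    exact Real.rpow_le_rpow_of_exponent_ge ht0 ht1 hν1.le
  have hbern : u ≤ 1 + ν*(t-1) := by
    have h := rpow_one_add_le_one_add_mul_self (s := t-1) (by linarith) hν0.le hν1.le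
    rw [show (1:ℝ)+(t-1) = t by ring, hu] at h; linarith
  have h1tν : 1 - u ≤ 1 - t := by linarith
  have hν1t : ν*(1-t) ≤ 1 - u := by linarith
  have h1tν0 : 0 ≤ 1 - u := by linarith
  have hπ1 : (1:ℝ) ≤ π^2 := by
    have h3 : (1:ℝ) ≤ π := by linarith [Real.pi_gt_three]
    calc (1:ℝ) = 1*1 := by ring
      _ ≤ π*π := mul_le_mul h3 h3 one_pos.le (by linarith)
      _ = π^2 := by ring
  refine ⟨arith_upper ν t u P Q π ht0 htν1 hP0 hQ0 hQ1 h1tν h1tν0 htν0 hP2, ?_⟩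
  have hν2 : (0:ℝ) < ν^2 := by positivity
  rw [div_mul_eq_mul_div, le_div_iff₀ hν2]
  have := arith_lower ν t u P Q π hν0 ht0 hP0 httν htν0 hν1t (by linarith) hπ1 hQ2
  linarith

private lemma half_angle (x : ℝ) : Real.cos x = 1 - 2*Real.sin (x/2)^2 := by
  have h := Real.cos_two_mul' (x/2)
  have h2 := Real.sin_sq_add_cos_sq (x/2)
  rw [show 2*(x/2) = x by ring] at h
  linarith

set_option maxHeartbeats 800000 in
private lemma sq_comp (ν : ℝ) (hν0 : 0 < ν) (hν1 : ν < 1) (r s α β : ℝ)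
    (hs : 0 < s) (hsr : s ≤ r) (hα0 : 0 ≤ α) (hαπ : α < π) (hβ0 : 0 ≤ β) (hβπ : β < π) :
    ((r^ν)^2 + (s^ν)^2 - 2*(r^ν)*(s^ν)*Real.cos (ν*α - ν*β)
       ≤ (1+4*ν^2*π^2) * ((r^2 + s^2 - 2*r*s*Real.cos (α-β)) * (r^(ν-1))^2))
    ∧ ((r^2 + s^2 - 2*r*s*Real.cos (α-β)) * (r^(ν-1))^2
       ≤ (π^2/ν^2) * ((r^ν)^2 + (s^ν)^2 - 2*(r^ν)*(s^ν)*Real.cos (ν*α - ν*β))) := by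
  have hr : 0 < r := lt_of_lt_of_le hs hsr
  set t := s/r with htdef
  set δ := |α - β| with hδdef
  have ht0 : 0 < t := by positivity
  have ht1 : t ≤ 1 := (div_le_one hr).mpr hsr
  have hδ0 : 0 ≤ δ := abs_nonneg _
  have hδπ : δ < π := abs_sub_lt_iff.mpr ⟨by linarith, by linarith⟩
  have ecos1 : Real.cos (α-β) = 1 - 2*Real.sin (δ/2)^2 := by
    rw [← Real.cos_abs (α-β), ← hδdef, half_angle]
  have ecos2 : Real.cos (ν*α-ν*β) = 1 - 2*Real.sin (ν*δ/2)^2 := by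
    rw [show ν*α - ν*β = ν*(α-β) by ring, ← Real.cos_abs (ν*(α-β)), abs_mul,
      abs_of_nonneg hν0.le, ← hδdef, half_angle]
  have es : s = r*t := by rw [htdef]; field_simp
  have esν : s^ν = r^ν * t^ν := by
    rw [es, Real.mul_rpow hr.le ht0.le]
  have erν : r^(ν-1) = r^ν / r := by rw [Real.rpow_sub hr, Real.rpow_one]
  have eqL : (r^ν)^2 + (s^ν)^2 - 2*(r^ν)*(s^ν)*Real.cos (ν*α - ν*β)
      = (r^ν)^2 * ((1 - t^ν)^2 + 4*t^ν*Real.sin (ν*δ/2)^2) := by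
    rw [ecos2, esν]; ring
  have eqR : (r^2 + s^2 - 2*r*s*Real.cos (α-β)) * (r^(ν-1))^2
      = (r^ν)^2 * ((1 - t)^2 + 4*t*Real.sin (δ/2)^2) := by
    rw [ecos1, erν, es]
    field_simp
    ring
  obtain ⟨c1, c2⟩ := core_ineq ν hν0 hν1 t δ ht0 ht1 hδ0 hδπ
  rw [eqL, eqR]
  constructor
  · have h := mul_le_mul_of_nonneg_left c1 (sq_nonneg (r^ν))
    nlinarith [h]
  · have h := mul_le_mul_of_nonneg_left c2 (sq_nonneg (r^ν))
    nlinarith [h]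

private lemma glue (ν : ℝ) (hν0 : 0 < ν) (hν1 : ν < 1) (a b : ℂ) (ha : a ≠ 0) (hb : b ≠ 0)
    (ha0 : 0 ≤ a.arg) (haπ : a.arg < π) (hb0 : 0 ≤ b.arg) (hbπ : b.arg < π)
    (hba : ‖b‖ ≤ ‖a‖) :
    ‖a ^ (ν:ℂ) - b ^ (ν:ℂ)‖
        ≤ Real.sqrt (1+4*ν^2*π^2) * (‖a-b‖ * ‖a‖ ^ (ν-1))
    ∧ ‖a-b‖ * ‖a‖ ^ (ν-1)
        ≤ Real.sqrt (π^2/ν^2) * ‖a ^ (ν:ℂ) - b ^ (ν:ℂ)‖ := by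
  have hr : 0 < ‖a‖ := norm_pos_iff.mpr ha
  have hs : 0 < ‖b‖ := norm_pos_iff.mpr hb
  have hX2 : ‖a ^ (ν:ℂ) - b ^ (ν:ℂ)‖^2
      = (‖a‖^ν)^2 + (‖b‖^ν)^2
        - 2*(‖a‖^ν)*(‖b‖^ν)*Real.cos (ν*a.arg - ν*b.arg) := by
    rw [cpow_polar ν ha, cpow_polar ν hb, abs_sub_polar]
  have hY2 : ‖a-b‖^2 = (‖a‖)^2 + (‖b‖)^2
      - 2*(‖a‖)*(‖b‖)*Real.cos (a.arg - b.arg) := by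
    conv_lhs => rw [← Complex.norm_mul_exp_arg_mul_I a, ← Complex.norm_mul_exp_arg_mul_I b]
    rw [abs_sub_polar]
  obtain ⟨h1, h2⟩ := sq_comp ν hν0 hν1 (‖a‖) (‖b‖) a.arg b.arg hs hba
    ha0 haπ hb0 hbπ
  have hXnn : 0 ≤ ‖a ^ (ν:ℂ) - b ^ (ν:ℂ)‖ := norm_nonneg _
  have hYnn : 0 ≤ ‖a-b‖ * ‖a‖ ^ (ν-1) :=
    mul_nonneg (norm_nonneg _) (Real.rpow_nonneg hr.le _)
  constructor
  · have hsq : ‖a ^ (ν:ℂ) - b ^ (ν:ℂ)‖^2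
        ≤ (1+4*ν^2*π^2) * (‖a-b‖ * ‖a‖ ^ (ν-1))^2 := by
      rw [hX2, mul_pow, hY2]; exact h1
    calc ‖a ^ (ν:ℂ) - b ^ (ν:ℂ)‖
        = Real.sqrt (‖a ^ (ν:ℂ) - b ^ (ν:ℂ)‖^2) := (Real.sqrt_sq hXnn).symm
      _ ≤ Real.sqrt ((1+4*ν^2*π^2) * (‖a-b‖ * ‖a‖ ^ (ν-1))^2) :=
          Real.sqrt_le_sqrt hsq
      _ = Real.sqrt (1+4*ν^2*π^2) * (‖a-b‖ * ‖a‖ ^ (ν-1)) := by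
          rw [Real.sqrt_mul (by positivity), Real.sqrt_sq hYnn]
  · have hsq : (‖a-b‖ * ‖a‖ ^ (ν-1))^2
        ≤ (π^2/ν^2) * ‖a ^ (ν:ℂ) - b ^ (ν:ℂ)‖^2 := by
      rw [hX2, mul_pow, hY2]; exact h2
    calc ‖a-b‖ * ‖a‖ ^ (ν-1)
        = Real.sqrt ((‖a-b‖ * ‖a‖ ^ (ν-1))^2) := (Real.sqrt_sq hYnn).symm
      _ ≤ Real.sqrt ((π^2/ν^2) * ‖a ^ (ν:ℂ) - b ^ (ν:ℂ)‖^2) := Real.sqrt_le_sqrt hsq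
      _ = Real.sqrt (π^2/ν^2) * ‖a ^ (ν:ℂ) - b ^ (ν:ℂ)‖ := by
          rw [Real.sqrt_mul (by positivity), Real.sqrt_sq hXnn]

private lemma main_aux (ν : ℝ) (hν0 : 0 < ν) (hν1 : ν < 1) (a b : ℂ) (ha : a ≠ 0) (hb : b ≠ 0)
    (ha0 : 0 ≤ a.arg) (haπ : a.arg < π) (hb0 : 0 ≤ b.arg) (hbπ : b.arg < π)
    (hba : ‖b‖ ≤ ‖a‖) :
    (‖a ^ (ν:ℂ) - b ^ (ν:ℂ)‖ ≤
        ((2:ℝ)^(1-ν) * (Real.sqrt (1+4*ν^2*π^2) + Real.sqrt (π^2/ν^2)) + 1) *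
          (‖a - b‖ * min (‖a‖ ^ (ν-1)) (‖b‖ ^ (ν-1))) ∧
       ‖a - b‖ * min (‖a‖ ^ (ν-1)) (‖b‖ ^ (ν-1)) ≤
        ((2:ℝ)^(1-ν) * (Real.sqrt (1+4*ν^2*π^2) + Real.sqrt (π^2/ν^2)) + 1) *
          ‖a ^ (ν:ℂ) - b ^ (ν:ℂ)‖ ∧
       ‖a ^ (ν:ℂ) - b ^ (ν:ℂ)‖ ≤
        ((2:ℝ)^(1-ν) * (Real.sqrt (1+4*ν^2*π^2) + Real.sqrt (π^2/ν^2)) + 1) *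
          (‖a - b‖ *
          min (min (‖a‖ ^ (ν-1)) (‖b‖ ^ (ν-1))) (‖a-b‖ ^ (ν-1))) ∧
       ‖a - b‖ *
          min (min (‖a‖ ^ (ν-1)) (‖b‖ ^ (ν-1))) (‖a-b‖ ^ (ν-1)) ≤
        ((2:ℝ)^(1-ν) * (Real.sqrt (1+4*ν^2*π^2) + Real.sqrt (π^2/ν^2)) + 1) *
          ‖a ^ (ν:ℂ) - b ^ (ν:ℂ)‖) := by
  set C := (2:ℝ)^(1-ν) * (Real.sqrt (1+4*ν^2*π^2) + Real.sqrt (π^2/ν^2)) + 1 with hCdef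
  set s1 := Real.sqrt (1+4*ν^2*π^2) with hs1def
  set s2 := Real.sqrt (π^2/ν^2) with hs2def
  have hr : 0 < ‖a‖ := norm_pos_iff.mpr ha
  have hs : 0 < ‖b‖ := norm_pos_iff.mpr hb
  have hmin : min (‖a‖ ^ (ν-1)) (‖b‖ ^ (ν-1)) = ‖a‖ ^ (ν-1) :=
    min_eq_left (Real.rpow_le_rpow_of_nonpos hs hba (by linarith))
  obtain ⟨g1, g2⟩ := glue ν hν0 hν1 a b ha hb ha0 haπ hb0 hbπ hba
  have hs1 : 0 ≤ s1 := Real.sqrt_nonneg _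
  have hs2 : 0 ≤ s2 := Real.sqrt_nonneg _
  have h2ν : (1:ℝ) ≤ (2:ℝ)^(1-ν) := by
    rw [show (1:ℝ) = (2:ℝ)^(0:ℝ) by rw [Real.rpow_zero]]
    exact Real.rpow_le_rpow_of_exponent_le one_le_two (by linarith)
  have h2ν0 : (0:ℝ) ≤ (2:ℝ)^(1-ν) := by linarith
  have e1 : s1 ≤ (2:ℝ)^(1-ν)*s1 := le_mul_of_one_le_left hs1 h2ν
  have e2 : s2 ≤ (2:ℝ)^(1-ν)*s2 := le_mul_of_one_le_left hs2 h2ν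
  have hCge1 : s1 ≤ C := by
    rw [hCdef]; nlinarith [mul_nonneg h2ν0 hs2]
  have hCge2 : s2 ≤ C := by
    rw [hCdef]; nlinarith [mul_nonneg h2ν0 hs1]
  have hCge3 : (2:ℝ)^(1-ν)*s1 ≤ C := by
    rw [hCdef]; nlinarith [mul_nonneg h2ν0 hs2]
  have hXnn : 0 ≤ ‖a ^ (ν:ℂ) - b ^ (ν:ℂ)‖ := norm_nonneg _
  have hdnn : 0 ≤ ‖a-b‖ := norm_nonneg _
  have hrν : 0 ≤ ‖a‖ ^ (ν-1) := Real.rpow_nonneg hr.le _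
  rw [hmin]
  refine ⟨?_, ?_, ?_, ?_⟩
  · calc ‖a ^ (ν:ℂ) - b ^ (ν:ℂ)‖
        ≤ s1 * (‖a-b‖ * ‖a‖ ^ (ν-1)) := g1
      _ ≤ C * (‖a-b‖ * ‖a‖ ^ (ν-1)) :=
          mul_le_mul_of_nonneg_right hCge1 (mul_nonneg hdnn hrν)
  · calc ‖a-b‖ * ‖a‖ ^ (ν-1)
        ≤ s2 * ‖a ^ (ν:ℂ) - b ^ (ν:ℂ)‖ := g2
      _ ≤ C * ‖a ^ (ν:ℂ) - b ^ (ν:ℂ)‖ := mul_le_mul_of_nonneg_right hCge2 hXnn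
  · by_cases hab : a = b
    · subst hab; simp
    · have hd : 0 < ‖a-b‖ := norm_pos_iff.mpr (sub_ne_zero.mpr hab)
      have hd2r : ‖a-b‖ ≤ 2*‖a‖ := by
        have h := norm_sub_le a b
        linarith
      have hm3 : ‖a‖ ^ (ν-1)
          ≤ (2:ℝ)^(1-ν) * min (‖a‖ ^ (ν-1)) (‖a-b‖ ^ (ν-1)) := by
        have claim2 : ‖a‖ ^ (ν-1) ≤ (2:ℝ)^(1-ν) * ‖a-b‖ ^ (ν-1) := by
          have h1 : (2*‖a‖)^(ν-1) ≤ ‖a-b‖ ^ (ν-1) :=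
            Real.rpow_le_rpow_of_nonpos hd hd2r (by linarith)
          have h2 : (2*‖a‖)^(ν-1) = (2:ℝ)^(ν-1)*‖a‖^(ν-1) :=
            Real.mul_rpow (by norm_num) hr.le
          have h3 : (2:ℝ)^(1-ν) * (2:ℝ)^(ν-1) = 1 := by
            rw [← Real.rpow_add two_pos]; norm_num
          calc ‖a‖ ^ (ν-1)
              = (2:ℝ)^(1-ν) * ((2:ℝ)^(ν-1)*‖a‖^(ν-1)) := by
                rw [← mul_assoc, h3, one_mul]
            _ ≤ (2:ℝ)^(1-ν) * ‖a-b‖ ^ (ν-1) := by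
                rw [← h2]; exact mul_le_mul_of_nonneg_left h1 h2ν0
        rcases min_cases (‖a‖ ^ (ν-1)) (‖a-b‖ ^ (ν-1)) with ⟨h, _⟩ | ⟨h, _⟩
        · rw [h]; exact le_mul_of_one_le_left hrν h2ν
        · rw [h]; exact claim2
      have hm3nn : 0 ≤ min (‖a‖ ^ (ν-1)) (‖a-b‖ ^ (ν-1)) :=
        le_min hrν (Real.rpow_nonneg hd.le _)
      calc ‖a ^ (ν:ℂ) - b ^ (ν:ℂ)‖
          ≤ s1 * (‖a-b‖ * ‖a‖ ^ (ν-1)) := g1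
        _ ≤ s1 * (‖a-b‖ *
              ((2:ℝ)^(1-ν) * min (‖a‖ ^ (ν-1)) (‖a-b‖ ^ (ν-1)))) := by
            apply mul_le_mul_of_nonneg_left _ hs1
            exact mul_le_mul_of_nonneg_left hm3 hdnn
        _ = ((2:ℝ)^(1-ν)*s1) * (‖a-b‖ *
              min (‖a‖ ^ (ν-1)) (‖a-b‖ ^ (ν-1))) := by ring
        _ ≤ C * (‖a-b‖ *
              min (‖a‖ ^ (ν-1)) (‖a-b‖ ^ (ν-1))) :=
            mul_le_mul_of_nonneg_right hCge3 (mul_nonneg hdnn hm3nn)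
  · calc ‖a-b‖ * min (‖a‖ ^ (ν-1)) (‖a-b‖ ^ (ν-1))
        ≤ ‖a-b‖ * ‖a‖ ^ (ν-1) :=
          mul_le_mul_of_nonneg_left (min_le_left _ _) hdnn
      _ ≤ s2 * ‖a ^ (ν:ℂ) - b ^ (ν:ℂ)‖ := g2
      _ ≤ C * ‖a ^ (ν:ℂ) - b ^ (ν:ℂ)‖ := mul_le_mul_of_nonneg_right hCge2 hXnn

theorem cpow_diff_comparable_lt_one (ν : ℝ) (hν0 : 0 < ν) (hν1 : ν < 1) :
    ∃ C > 0, ∀ a b : ℂ, a ≠ 0 → b ≠ 0 →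
      0 ≤ a.arg → a.arg < min π (π / ν) →
      0 ≤ b.arg → b.arg < min π (π / ν) →
      (‖a ^ (ν:ℂ) - b ^ (ν:ℂ)‖ ≤
        C * (‖a - b‖ * min (‖a‖ ^ (ν-1)) (‖b‖ ^ (ν-1))) ∧
       ‖a - b‖ * min (‖a‖ ^ (ν-1)) (‖b‖ ^ (ν-1)) ≤
        C * ‖a ^ (ν:ℂ) - b ^ (ν:ℂ)‖ ∧
       ‖a ^ (ν:ℂ) - b ^ (ν:ℂ)‖ ≤
        C * (‖a - b‖ *
          min (min (‖a‖ ^ (ν-1)) (‖b‖ ^ (ν-1))) (‖a-b‖ ^ (ν-1))) ∧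
       ‖a - b‖ *
          min (min (‖a‖ ^ (ν-1)) (‖b‖ ^ (ν-1))) (‖a-b‖ ^ (ν-1)) ≤
        C * ‖a ^ (ν:ℂ) - b ^ (ν:ℂ)‖) := by
  refine ⟨(2:ℝ)^(1-ν) * (Real.sqrt (1+4*ν^2*π^2) + Real.sqrt (π^2/ν^2)) + 1, ?_, ?_⟩
  · have h2ν : (0:ℝ) < (2:ℝ)^(1-ν) := Real.rpow_pos_of_pos two_pos _
    nlinarith [Real.sqrt_nonneg (1+4*ν^2*π^2), Real.sqrt_nonneg (π^2/ν^2),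
      mul_nonneg h2ν.le (add_nonneg (Real.sqrt_nonneg (1+4*ν^2*π^2)) (Real.sqrt_nonneg (π^2/ν^2)))]
  intro a b ha hb ha0 haπ hb0 hbπ
  have hππ : min π (π/ν) = π := min_eq_left (by
    rw [le_div_iff₀ hν0]
    nlinarith [Real.pi_pos])
  rw [hππ] at haπ hbπ
  rcases le_total (‖b‖) (‖a‖) with hba | hba
  · exact main_aux ν hν0 hν1 a b ha hb ha0 haπ hb0 hbπ hba
  · have h := main_aux ν hν0 hν1 b a hb ha hb0 hbπ ha0 haπ hba
    rw [norm_sub_rev b a, norm_sub_rev (b ^ (ν:ℂ)) (a ^ (ν:ℂ)),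
      min_comm (‖b‖ ^ (ν-1)) (‖a‖ ^ (ν-1))] at h
    exact h
end

section
/- Let ν > 1 and let a, b be nonzero complex numbers with arguments in [0, min(π, π/ν)). Then |a^ν - b^ν| is comparable (with constants depending only on ν) to |a-b| · max(|a|^{ν-1}, |b|^{ν-1}), and also comparable to |a-b| · max(|a|^{ν-1}, |b|^{ν-1}, |a-b|^{ν-1}). -/
open Real
set_option maxHeartbeats 1000000

lemma core_ineq_s6 (ν : ℝ) (hν : 1 < ν) : ∃ K > 0, ∀ r θ : ℝ, 0 < r → r ≤ 1 → |θ| ≤ π / ν →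
    (1 - 2*r^ν*Real.cos (ν*θ) + (r^ν)^2 ≤ K * (1 - 2*r*Real.cos θ + r^2) ∧
     1 - 2*r*Real.cos θ + r^2 ≤ K * (1 - 2*r^ν*Real.cos (ν*θ) + (r^ν)^2)) := by
  have hπ : (0:ℝ) < π := Real.pi_pos
  have hν0 : (0:ℝ) < ν := by linarith
  have hπ2 : (0:ℝ) < π^2 := by positivity
  have hhalf0 : (0:ℝ) < (1/2:ℝ)^ν := by positivity
  have h9 : (9:ℝ) ≤ π^2 := by nlinarith [Real.pi_gt_three]
  obtain ⟨K, hKpos, hKA, hK16, hKM, hK1, hKν2⟩ :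
      ∃ K : ℝ, 0 < K ∧ ν^2*π^2/4 ≤ K ∧ 16 ≤ K ∧ π^2*((1/2:ℝ)^ν)⁻¹/4 ≤ K ∧ 1 ≤ K ∧ ν^2 ≤ K := by
    refine ⟨ν^2*π^2/4 + 16 + π^2 * ((1/2:ℝ)^ν)⁻¹, by positivity, ?_, ?_, ?_, ?_, ?_⟩ <;>
    · have h1 : 0 ≤ ν^2*π^2/4 := by positivity
      have h2 : 0 ≤ π^2 * ((1/2:ℝ)^ν)⁻¹ := by positivity
      nlinarith [mul_nonneg (sq_nonneg ν) (by linarith : (0:ℝ) ≤ π^2 - 4)]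
  refine ⟨K, hKpos, ?_⟩
  intro r θ hr0 hr1 hθ
  have hνθ : |ν*θ| ≤ π := by
    rw [abs_mul, abs_of_pos hν0]
    calc ν * |θ| ≤ ν * (π/ν) := mul_le_mul_of_nonneg_left hθ hν0.le
      _ = π := by field_simp
  have hθπ : |θ| ≤ π := hθ.trans (div_le_self hπ.le (by linarith))
  have hrν0 : 0 < r^ν := Real.rpow_pos_of_pos hr0 ν
  have hrνr : r^ν ≤ r := by
    have := Real.rpow_le_rpow_of_exponent_ge hr0 hr1 hν.le
    simpa using this
  have hrν1 : r^ν ≤ 1 := hrνr.trans hr1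
  have bern : 1 - r^ν ≤ ν*(1-r) := by
    have h := one_add_mul_self_le_rpow_one_add (s := r-1) (by linarith) hν.le
    have e : (1 + (r-1)) = r := by ring
    rw [e] at h; linarith
  have hc2 : 0 ≤ 1 - Real.cos θ := by have := Real.cos_le_one θ; linarith
  have hcν : 0 ≤ 1 - Real.cos (ν*θ) := by have := Real.cos_le_one (ν*θ); linarith
  have cubθ : 1 - Real.cos θ ≤ θ^2/2 := by
    have := Real.one_sub_sq_div_two_le_cos (x := θ); linarith
  have cubνθ : 1 - Real.cos (ν*θ) ≤ (ν*θ)^2/2 := by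
    have := Real.one_sub_sq_div_two_le_cos (x := ν*θ); linarith
  have clbθ : 2/π^2 * θ^2 ≤ 1 - Real.cos θ := by
    have := Real.cos_le_one_sub_mul_cos_sq hθπ; linarith
  have clbνθ : 2/π^2 * (ν*θ)^2 ≤ 1 - Real.cos (ν*θ) := by
    have := Real.cos_le_one_sub_mul_cos_sq hνθ; linarith
  have ering : ∀ x c : ℝ, 1 - 2*x*c + x^2 = (1-x)^2 + 2*x*(1-c) := by intros; ring
  rw [ering, ering]
  constructor
  · -- upper bound
    have A1 : (1-r^ν)^2 ≤ ν^2*(1-r)^2 := by nlinarith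
    have h2 : θ^2 ≤ π^2/2 * (1-Real.cos θ) := by
      have hm := mul_le_mul_of_nonneg_left clbθ (by positivity : (0:ℝ) ≤ π^2/2)
      have e2 : π^2/2 * (2/π^2*θ^2) = θ^2 := by field_simp
      linarith [hm, e2.ge, e2.le]
    have h3 : 1 - Real.cos (ν*θ) ≤ ν^2*π^2/4 * (1-Real.cos θ) := by
      have hm := mul_le_mul_of_nonneg_left h2 (by positivity : (0:ℝ) ≤ ν^2/2)
      nlinarith
    have A2 : 2*r^ν*(1-Real.cos (ν*θ)) ≤ ν^2*π^2/4 * (2*r*(1-Real.cos θ)) := by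
      have hstep1 : 2*r^ν*(1-Real.cos (ν*θ)) ≤ 2*r*(1-Real.cos (ν*θ)) :=
        mul_le_mul_of_nonneg_right (by linarith) hcν
      have hstep2 : 2*r*(1-Real.cos (ν*θ)) ≤ 2*r*(ν^2*π^2/4 * (1-Real.cos θ)) :=
        mul_le_mul_of_nonneg_left h3 (by positivity)
      calc 2*r^ν*(1-Real.cos (ν*θ)) ≤ 2*r*(ν^2*π^2/4 * (1-Real.cos θ)) := hstep1.trans hstep2
        _ = ν^2*π^2/4 * (2*r*(1-Real.cos θ)) := by ring
    have A1' : (1-r^ν)^2 ≤ K*(1-r)^2 := A1.trans (mul_le_mul_of_nonneg_right hKν2 (sq_nonneg _))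
    have A2' : 2*r^ν*(1-Real.cos (ν*θ)) ≤ K*(2*r*(1-Real.cos θ)) :=
      A2.trans (mul_le_mul_of_nonneg_right hKA (by positivity))
    have e3 : K*((1-r)^2 + 2*r*(1-Real.cos θ)) = K*(1-r)^2 + K*(2*r*(1-Real.cos θ)) := by ring
    linarith
  · -- lower bound
    have hhalf : ((1/2:ℝ)^ν) ≤ 1/2 := by
      have := Real.rpow_le_rpow_of_exponent_ge (x := (1/2:ℝ)) (by norm_num) (by norm_num) hν.le
      simpa using this
    rcases le_or_gt r (1/2) with hcase | hcase
    · have hrν : r^ν ≤ (1/2:ℝ)^ν := Real.rpow_le_rpow hr0.le hcase hν0.le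
      have h14 : (1/4:ℝ) ≤ (1-r^ν)^2 := by nlinarith
      have hL : (1-r)^2 + 2*r*(1-Real.cos θ) ≤ 3 := by
        have : 1 - Real.cos θ ≤ 2 := by have := Real.neg_one_le_cos θ; linarith
        nlinarith
      have h4 : (4:ℝ) ≤ K*(1-r^ν)^2 := by nlinarith
      have h0 : 0 ≤ K*(2*r^ν*(1-Real.cos (ν*θ))) := by positivity
      have e3 : K*((1-r^ν)^2 + 2*r^ν*(1-Real.cos (ν*θ)))
          = K*(1-r^ν)^2 + K*(2*r^ν*(1-Real.cos (ν*θ))) := by ring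
      linarith
    · have B1 : (1-r)^2 ≤ (1-r^ν)^2 := by nlinarith
      have hrν : (1/2:ℝ)^ν ≤ r^ν := Real.rpow_le_rpow (by norm_num) hcase.le hν0.le
      have B2 : 2*r*(1-Real.cos θ) ≤ θ^2 := by nlinarith
      have B3 : θ^2 ≤ (π^2*((1/2:ℝ)^ν)⁻¹/4) * (2*r^ν*(1-Real.cos (ν*θ))) := by
        have hg : 2/π^2*θ^2 ≤ 2/π^2*(ν*θ)^2 := by
          have h5 : θ^2 ≤ (ν*θ)^2 := by
            nlinarith [mul_nonneg (by nlinarith : (0:ℝ) ≤ ν^2-1) (sq_nonneg θ)]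
          exact mul_le_mul_of_nonneg_left h5 (by positivity)
        have hlow : 2*(1/2:ℝ)^ν*(2/π^2*θ^2) ≤ 2*r^ν*(1-Real.cos (ν*θ)) := by
          have := hg.trans clbνθ
          have h2r : 2*(1/2:ℝ)^ν ≤ 2*r^ν := by linarith
          exact mul_le_mul h2r this (by positivity) (by positivity)
        have hMpos : (0:ℝ) < π^2*((1/2:ℝ)^ν)⁻¹/4 := by positivity
        have hm := mul_le_mul_of_nonneg_left hlow hMpos.le
        have e4 : (π^2*((1/2:ℝ)^ν)⁻¹/4) * (2*(1/2:ℝ)^ν*(2/π^2*θ^2)) = θ^2 := by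
          field_simp; ring
        linarith [hm, e4.ge, e4.le]
      have C1 : (1-r)^2 ≤ K*(1-r^ν)^2 := by nlinarith [sq_nonneg (1-r^ν)]
      have C2 : 2*r*(1-Real.cos θ) ≤ K*(2*r^ν*(1-Real.cos (ν*θ))) := by
        have hX : 0 ≤ 2*r^ν*(1-Real.cos (ν*θ)) := by positivity
        have := B3.trans (mul_le_mul_of_nonneg_right hKM hX)
        linarith
      have e3 : K*((1-r^ν)^2 + 2*r^ν*(1-Real.cos (ν*θ)))
          = K*(1-r^ν)^2 + K*(2*r^ν*(1-Real.cos (ν*θ))) := by ring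
      linarith

lemma scaled_ineq (ν : ℝ) (hν : 1 < ν) : ∃ C > 0, ∀ A B α β : ℝ, 0 < A → 0 < B → B ≤ A →
    |α-β| ≤ π/ν →
    ((A^ν)^2 - 2*(A^ν*B^ν)*Real.cos (ν*(α-β)) + (B^ν)^2 ≤
      C^2 * ((A^2 - 2*(A*B)*Real.cos (α-β) + B^2) * (A^(ν-1))^2) ∧
     (A^2 - 2*(A*B)*Real.cos (α-β) + B^2) * (A^(ν-1))^2 ≤
      C^2 * ((A^ν)^2 - 2*(A^ν*B^ν)*Real.cos (ν*(α-β)) + (B^ν)^2)) := by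
  obtain ⟨K, hK0, hcore⟩ := core_ineq_s6 ν hν
  refine ⟨Real.sqrt K, Real.sqrt_pos.mpr hK0, ?_⟩
  intro A B α β hA0 hB0 hba hθ
  rw [Real.sq_sqrt hK0.le]
  obtain ⟨h1, h2⟩ := hcore (B/A) (α-β) (div_pos hB0 hA0) ((div_le_one hA0).mpr hba) hθ
  have hAν0 : 0 < A^ν := Real.rpow_pos_of_pos hA0 ν
  have hBν0 : 0 < B^ν := Real.rpow_pos_of_pos hB0 ν
  have hdiv : (B/A)^ν = B^ν/A^ν := Real.div_rpow hB0.le hA0.le ν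
  have ee1 : (A^ν)^2 * (1 - 2*((B/A)^ν)*Real.cos (ν*(α-β)) + ((B/A)^ν)^2)
      = (A^ν)^2 - 2*(A^ν*B^ν)*Real.cos (ν*(α-β)) + (B^ν)^2 := by
    rw [hdiv]; field_simp
  have ee2 : A^2 * (1 - 2*(B/A)*Real.cos (α-β) + (B/A)^2)
      = A^2 - 2*(A*B)*Real.cos (α-β) + B^2 := by
    field_simp
  have hprod : A^(ν-1) * A = A^ν := by
    have h := (Real.rpow_add hA0 (ν-1) 1).symm
    rw [Real.rpow_one] at h
    rw [h]; norm_num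
  have hsqprod : (A^(ν-1))^2 * A^2 = (A^ν)^2 := by rw [← hprod]; ring
  constructor
  · calc (A^ν)^2 - 2*(A^ν*B^ν)*Real.cos (ν*(α-β)) + (B^ν)^2
        = (A^ν)^2 * (1 - 2*((B/A)^ν)*Real.cos (ν*(α-β)) + ((B/A)^ν)^2) := ee1.symm
      _ ≤ (A^ν)^2 * (K * (1 - 2*(B/A)*Real.cos (α-β) + (B/A)^2)) :=
          mul_le_mul_of_nonneg_left h1 (by positivity)
      _ = K * ((A^2 * (1 - 2*(B/A)*Real.cos (α-β) + (B/A)^2)) * (A^(ν-1))^2) := by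
          rw [← hsqprod]; ring
      _ = K * ((A^2 - 2*(A*B)*Real.cos (α-β) + B^2) * (A^(ν-1))^2) := by rw [ee2]
  · calc (A^2 - 2*(A*B)*Real.cos (α-β) + B^2) * (A^(ν-1))^2
        = (A^2 * (1 - 2*(B/A)*Real.cos (α-β) + (B/A)^2)) * (A^(ν-1))^2 := by rw [ee2]
      _ = (A^ν)^2 * (1 - 2*(B/A)*Real.cos (α-β) + (B/A)^2) := by rw [← hsqprod]; ring
      _ ≤ (A^ν)^2 * (K * (1 - 2*((B/A)^ν)*Real.cos (ν*(α-β)) + ((B/A)^ν)^2)) :=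
          mul_le_mul_of_nonneg_left h2 (by positivity)
      _ = K * ((A^ν)^2 * (1 - 2*((B/A)^ν)*Real.cos (ν*(α-β)) + ((B/A)^ν)^2)) := by ring
      _ = K * ((A^ν)^2 - 2*(A^ν*B^ν)*Real.cos (ν*(α-β)) + (B^ν)^2) := by rw [ee1]

lemma cpow_re_eq (ν : ℝ) (a : ℂ) (ha : a ≠ 0) :
    (a ^ (ν:ℂ)).re = ‖a‖ ^ ν * Real.cos (ν * a.arg) ∧
    (a ^ (ν:ℂ)).im = ‖a‖ ^ ν * Real.sin (ν * a.arg) := by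
  have hA0 : 0 < ‖a‖ := norm_pos_iff.mpr ha
  have hre : (Complex.log a * (ν:ℂ)).re = Real.log (‖a‖) * ν := by
    simp [Complex.mul_re, Complex.log_re, Complex.log_im]
  have him : (Complex.log a * (ν:ℂ)).im = ν * a.arg := by
    simp [Complex.mul_im, Complex.log_re, Complex.log_im]; ring
  rw [Complex.cpow_def_of_ne_zero ha]
  rw [Real.rpow_def_of_pos hA0]
  constructor
  · rw [Complex.exp_re, hre, him]
  · rw [Complex.exp_im, hre, him]

lemma key_ineq (ν : ℝ) (hν : 1 < ν) : ∃ C > 0, ∀ a b : ℂ, a ≠ 0 → b ≠ 0 →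
    0 ≤ a.arg → a.arg < π/ν → 0 ≤ b.arg → b.arg < π/ν → ‖b‖ ≤ ‖a‖ →
    (‖a ^ (ν:ℂ) - b ^ (ν:ℂ)‖ ≤ C * (‖a-b‖ * ‖a‖ ^ (ν-1)) ∧
     ‖a-b‖ * ‖a‖ ^ (ν-1) ≤ C * ‖a ^ (ν:ℂ) - b ^ (ν:ℂ)‖) := by
  obtain ⟨C, hC0, hs⟩ := scaled_ineq ν hν
  refine ⟨C, hC0, ?_⟩
  intro a b ha hb hα0 hα1 hβ0 hβ1 hba
  have hA0 : 0 < ‖a‖ := norm_pos_iff.mpr ha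
  have hB0 : 0 < ‖b‖ := norm_pos_iff.mpr hb
  have hθ : |a.arg - b.arg| ≤ π/ν := by
    rw [abs_sub_le_iff]; constructor <;> linarith
  obtain ⟨hup, hdown⟩ := hs (‖a‖) (‖b‖) a.arg b.arg hA0 hB0 hba hθ
  obtain ⟨hare, haim⟩ := cpow_re_eq ν a ha
  obtain ⟨hbre, hbim⟩ := cpow_re_eq ν b hb
  have hsq : ∀ u v : ℂ, ‖u - v‖^2 = (u.re - v.re)^2 + (u.im - v.im)^2 := by
    intro u v
    rw [Complex.sq_norm, Complex.normSq_apply]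
    simp [Complex.sub_re, Complex.sub_im]
    ring
  have E1 : ‖a ^ (ν:ℂ) - b ^ (ν:ℂ)‖^2 =
      (‖a‖^ν)^2 - 2*(‖a‖^ν*‖b‖^ν)*Real.cos (ν*(a.arg - b.arg))
        + (‖b‖^ν)^2 := by
    have hco : Real.cos (ν*(a.arg - b.arg)) =
        Real.cos (ν*a.arg)*Real.cos (ν*b.arg) + Real.sin (ν*a.arg)*Real.sin (ν*b.arg) := by
      rw [show ν*(a.arg-b.arg) = ν*a.arg - ν*b.arg from by ring, Real.cos_sub]
    have hcs1 := Real.sin_sq_add_cos_sq (ν*a.arg)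
    have hcs2 := Real.sin_sq_add_cos_sq (ν*b.arg)
    rw [hsq, hare, haim, hbre, hbim]
    linear_combination (‖a‖^ν)^2*hcs1 + (‖b‖^ν)^2*hcs2
      + 2*(‖a‖^ν)*(‖b‖^ν)*hco
  have E2 : ‖a - b‖^2 =
      (‖a‖)^2 - 2*(‖a‖*‖b‖)*Real.cos (a.arg - b.arg)
        + (‖b‖)^2 := by
    have hco := Real.cos_sub a.arg b.arg
    have hcs1 := Real.sin_sq_add_cos_sq a.arg
    have hcs2 := Real.sin_sq_add_cos_sq b.arg
    rw [hsq, ← Complex.norm_mul_cos_arg a, ← Complex.norm_mul_sin_arg a,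
      ← Complex.norm_mul_cos_arg b, ← Complex.norm_mul_sin_arg b]
    linear_combination (‖a‖)^2*hcs1 + (‖b‖)^2*hcs2
      + 2*(‖a‖)*(‖b‖)*hco
  constructor
  · have h2 : ‖a ^ (ν:ℂ) - b ^ (ν:ℂ)‖^2
        ≤ (C * (‖a-b‖ * ‖a‖ ^ (ν-1)))^2 := by
      rw [E1]
      refine hup.trans_eq ?_
      rw [← E2]; ring
    have h3 := Real.sqrt_le_sqrt h2
    rwa [Real.sqrt_sq (norm_nonneg _), Real.sqrt_sq (by positivity)] at h3
  · have h2 : (‖a-b‖ * ‖a‖ ^ (ν-1))^2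
        ≤ (C * ‖a ^ (ν:ℂ) - b ^ (ν:ℂ)‖)^2 := by
      have e : (‖a-b‖ * ‖a‖ ^ (ν-1))^2
          = ((‖a‖)^2 - 2*(‖a‖*‖b‖)*Real.cos (a.arg - b.arg)
            + (‖b‖)^2) * (‖a‖^(ν-1))^2 := by
        rw [← E2]; ring
      rw [e]
      refine hdown.trans_eq ?_
      rw [← E1]; ring
    have h3 := Real.sqrt_le_sqrt h2
    rwa [Real.sqrt_sq (by positivity), Real.sqrt_sq (by positivity)] at h3

lemma main_half (ν : ℝ) (hν1 : 1 < ν) : ∃ C > 0, ∀ a b : ℂ, a ≠ 0 → b ≠ 0 →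
    0 ≤ a.arg → a.arg < min π (π / ν) →
    0 ≤ b.arg → b.arg < min π (π / ν) → ‖b‖ ≤ ‖a‖ →
    (‖a ^ (ν:ℂ) - b ^ (ν:ℂ)‖ ≤
      C * (‖a - b‖ * max (‖a‖ ^ (ν-1)) (‖b‖ ^ (ν-1))) ∧
     ‖a - b‖ * max (‖a‖ ^ (ν-1)) (‖b‖ ^ (ν-1)) ≤
      C * ‖a ^ (ν:ℂ) - b ^ (ν:ℂ)‖ ∧
     ‖a ^ (ν:ℂ) - b ^ (ν:ℂ)‖ ≤
      C * (‖a - b‖ *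
        max (max (‖a‖ ^ (ν-1)) (‖b‖ ^ (ν-1))) (‖a-b‖ ^ (ν-1))) ∧
     ‖a - b‖ *
        max (max (‖a‖ ^ (ν-1)) (‖b‖ ^ (ν-1))) (‖a-b‖ ^ (ν-1)) ≤
      C * ‖a ^ (ν:ℂ) - b ^ (ν:ℂ)‖) := by
  obtain ⟨C, hC0, hkey⟩ := key_ineq ν hν1
  have h21 : (1:ℝ) ≤ (2:ℝ)^(ν-1) := by
    have := Real.rpow_le_rpow_of_exponent_le (by norm_num : (1:ℝ) ≤ 2)
      (by linarith : (0:ℝ) ≤ ν-1)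
    simpa using this
  have h2p0 : (0:ℝ) < (2:ℝ)^(ν-1) := by positivity
  refine ⟨C * 2^(ν-1), by positivity, ?_⟩
  intro a b ha hb hα0 hα1 hβ0 hβ1 hba
  obtain ⟨g1, g2⟩ := hkey a b ha hb hα0 (lt_of_lt_of_le hα1 (min_le_right _ _))
    hβ0 (lt_of_lt_of_le hβ1 (min_le_right _ _)) hba
  have hA0 : 0 < ‖a‖ := norm_pos_iff.mpr ha
  have hBnn := norm_nonneg b
  have habnn := norm_nonneg (a-b)
  have habνnn := norm_nonneg (a ^ (ν:ℂ) - b ^ (ν:ℂ))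
  have hAp : 0 ≤ ‖a‖ ^ (ν-1) := Real.rpow_nonneg hA0.le _
  have hmax : max (‖a‖ ^ (ν-1)) (‖b‖ ^ (ν-1)) = ‖a‖ ^ (ν-1) :=
    max_eq_left (Real.rpow_le_rpow hBnn hba (by linarith))
  have habd : ‖a-b‖ ≤ 2 * ‖a‖ := by
    calc ‖a-b‖ ≤ ‖a‖ + ‖b‖ := by
          simpa using norm_sub_le a b
      _ ≤ 2 * ‖a‖ := by linarith
  have hpow2 : ‖a-b‖ ^ (ν-1) ≤ 2^(ν-1) * ‖a‖ ^ (ν-1) := by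
    have h := Real.rpow_le_rpow habnn habd (by linarith : (0:ℝ) ≤ ν-1)
    rwa [Real.mul_rpow (by norm_num) hA0.le] at h
  have htmax : max (max (‖a‖ ^ (ν-1)) (‖b‖ ^ (ν-1)))
      (‖a-b‖ ^ (ν-1)) ≤ 2^(ν-1) * ‖a‖ ^ (ν-1) := by
    rw [hmax]; exact max_le (le_mul_of_one_le_left hAp h21) hpow2
  have hmaxle : ‖a‖ ^ (ν-1) ≤ max (max (‖a‖ ^ (ν-1))
      (‖b‖ ^ (ν-1))) (‖a-b‖ ^ (ν-1)) :=
    (le_max_left _ _).trans (le_max_left _ _)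
  have htnn : 0 ≤ max (max (‖a‖ ^ (ν-1)) (‖b‖ ^ (ν-1)))
      (‖a-b‖ ^ (ν-1)) := hAp.trans hmaxle
  have hCle : C ≤ C * 2^(ν-1) := le_mul_of_one_le_right hC0.le h21
  refine ⟨?_, ?_, ?_, ?_⟩
  · rw [hmax]
    calc ‖a ^ (ν:ℂ) - b ^ (ν:ℂ)‖
        ≤ C * (‖a-b‖ * ‖a‖ ^ (ν-1)) := g1
      _ ≤ C * 2^(ν-1) * (‖a-b‖ * ‖a‖ ^ (ν-1)) :=
          mul_le_mul_of_nonneg_right hCle (mul_nonneg habnn hAp)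
  · rw [hmax]
    calc ‖a-b‖ * ‖a‖ ^ (ν-1)
        ≤ C * ‖a ^ (ν:ℂ) - b ^ (ν:ℂ)‖ := g2
      _ ≤ C * 2^(ν-1) * ‖a ^ (ν:ℂ) - b ^ (ν:ℂ)‖ :=
          mul_le_mul_of_nonneg_right hCle habνnn
  · calc ‖a ^ (ν:ℂ) - b ^ (ν:ℂ)‖
        ≤ C * (‖a-b‖ * ‖a‖ ^ (ν-1)) := g1
      _ ≤ C * (‖a-b‖ * max (max (‖a‖ ^ (ν-1))
            (‖b‖ ^ (ν-1))) (‖a-b‖ ^ (ν-1))) :=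
          mul_le_mul_of_nonneg_left (mul_le_mul_of_nonneg_left hmaxle habnn) hC0.le
      _ ≤ C * 2^(ν-1) * (‖a-b‖ * max (max (‖a‖ ^ (ν-1))
            (‖b‖ ^ (ν-1))) (‖a-b‖ ^ (ν-1))) :=
          mul_le_mul_of_nonneg_right hCle (mul_nonneg habnn htnn)
  · calc ‖a-b‖ * max (max (‖a‖ ^ (ν-1)) (‖b‖ ^ (ν-1)))
          (‖a-b‖ ^ (ν-1))
        ≤ ‖a-b‖ * (2^(ν-1) * ‖a‖ ^ (ν-1)) :=
          mul_le_mul_of_nonneg_left htmax habnn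
      _ = 2^(ν-1) * (‖a-b‖ * ‖a‖ ^ (ν-1)) := by ring
      _ ≤ 2^(ν-1) * (C * ‖a ^ (ν:ℂ) - b ^ (ν:ℂ)‖) :=
          mul_le_mul_of_nonneg_left g2 h2p0.le
      _ = C * 2^(ν-1) * ‖a ^ (ν:ℂ) - b ^ (ν:ℂ)‖ := by ring

theorem cpow_diff_comparable_gt_one (ν : ℝ) (hν1 : 1 < ν) :
    ∃ C > 0, ∀ a b : ℂ, a ≠ 0 → b ≠ 0 →
      0 ≤ a.arg → a.arg < min π (π / ν) →
      0 ≤ b.arg → b.arg < min π (π / ν) →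
      (‖a ^ (ν:ℂ) - b ^ (ν:ℂ)‖ ≤
        C * (‖a - b‖ * max (‖a‖ ^ (ν-1)) (‖b‖ ^ (ν-1))) ∧
       ‖a - b‖ * max (‖a‖ ^ (ν-1)) (‖b‖ ^ (ν-1)) ≤
        C * ‖a ^ (ν:ℂ) - b ^ (ν:ℂ)‖ ∧
       ‖a ^ (ν:ℂ) - b ^ (ν:ℂ)‖ ≤
        C * (‖a - b‖ *
          max (max (‖a‖ ^ (ν-1)) (‖b‖ ^ (ν-1))) (‖a-b‖ ^ (ν-1))) ∧
       ‖a - b‖ *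
          max (max (‖a‖ ^ (ν-1)) (‖b‖ ^ (ν-1))) (‖a-b‖ ^ (ν-1)) ≤
        C * ‖a ^ (ν:ℂ) - b ^ (ν:ℂ)‖) := by
  obtain ⟨C, hC0, H⟩ := main_half ν hν1
  refine ⟨C, hC0, ?_⟩
  intro a b ha hb hα0 hα1 hβ0 hβ1
  rcases le_total (‖b‖) (‖a‖) with hba | hab
  · exact H a b ha hb hα0 hα1 hβ0 hβ1 hba
  · have h := H b a hb ha hβ0 hβ1 hα0 hα1 hab
    rwa [norm_sub_rev b a, norm_sub_rev (b ^ (ν:ℂ)) (a ^ (ν:ℂ)),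
      max_comm (‖b‖ ^ (ν-1)) (‖a‖ ^ (ν-1))] at h
end

section
/- Let z₁, z₂ ∈ ℂ with z₁ ≠ z₂ and let f ∈ L¹(ℂ) ∩ L^∞(ℂ). Then |z₁ - z₂| · ∫_ℂ |f(s)| / (|s - z₁| · |s - z₂|) ds ≤ C · (‖f‖_{L¹} + ‖f‖_{L^∞}) · φ(|z₁ - z₂|), where φ(x) = x·max(-ln x, 1) and C is a universal constant. -/
open MeasureTheory

open Set Metric MeasureTheory Measure ENNReal


lemma lintegral_fun_norm_complex (g : ℝ → ℝ≥0∞) (hg : Measurable g) :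
    ∫⁻ x : ℂ, g ‖x‖ = volume (ball (0:ℂ) 1) *
      (2 * ∫⁻ y in Ioi (0:ℝ), ENNReal.ofReal y * g y) := by
  have h0 : (volume : Measure ℂ).restrict {(0:ℂ)}ᶜ = volume :=
    MeasureTheory.restrict_compl_singleton (0:ℂ)
  have hdim : Module.finrank ℝ ℂ = 2 := Complex.finrank_real_complex
  calc ∫⁻ x : ℂ, g ‖x‖
      = ∫⁻ x in {(0:ℂ)}ᶜ, g ‖x‖ := by rw [h0]
    _ = ∫⁻ x : ({(0:ℂ)}ᶜ : Set ℂ), g ‖(x:ℂ)‖ ∂((volume : Measure ℂ).comap (↑)) :=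
        (lintegral_subtype_comap (measurableSet_singleton 0).compl _).symm
    _ = ∫⁻ p : sphere (0:ℂ) 1 × Ioi (0:ℝ), g p.2
          ∂((volume : Measure ℂ).toSphere.prod (.volumeIoiPow (Module.finrank ℝ ℂ - 1))) :=
        (lintegral_congr fun x => by simp [homeomorphUnitSphereProd]).trans
        ((measurePreserving_homeomorphUnitSphereProd (volume : Measure ℂ)).lintegral_comp
          (hg.comp (measurable_subtype_coe.comp measurable_snd)))
    _ = ∫⁻ y : Ioi (0:ℝ), g y
          ∂(Measure.map Prod.snd
            ((volume : Measure ℂ).toSphere.prod (.volumeIoiPow (Module.finrank ℝ ℂ - 1)))) :=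
        (lintegral_map (f := fun y : Ioi (0:ℝ) => g y)
          (hg.comp measurable_subtype_coe) measurable_snd).symm
    _ = (volume : Measure ℂ).toSphere univ *
          ∫⁻ y : Ioi (0:ℝ), g y ∂(Measure.volumeIoiPow (Module.finrank ℝ ℂ - 1)) := by
        rw [Measure.map_snd_prod, lintegral_smul_measure, smul_eq_mul]
    _ = volume (ball (0:ℂ) 1) * (2 * ∫⁻ y in Ioi (0:ℝ), ENNReal.ofReal y * g y) := by
        rw [Measure.toSphere_apply_univ, hdim, Measure.volumeIoiPow,
          lintegral_withDensity_eq_lintegral_mul _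
            (f := fun r : Ioi (0:ℝ) => ENNReal.ofReal ((r:ℝ) ^ (2-1)))
            (by exact (measurable_subtype_coe.pow_const _).ennreal_ofReal)
            (g := fun y : Ioi (0:ℝ) => g ↑y)
            (hg.comp measurable_subtype_coe)]
        simp only [Pi.mul_apply]
        rw [lintegral_subtype_comap measurableSet_Ioi
            (fun a : ℝ => ENNReal.ofReal (a ^ (2-1)) * g a)]
        norm_num
        ring

lemma lintegral_ball_inv0 (r : ℝ) :
    ∫⁻ x : ℂ, (ball (0:ℂ) r).indicator (fun s => ENNReal.ofReal ‖s‖⁻¹) x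
      = volume (ball (0:ℂ) 1) * (2 * ENNReal.ofReal r) := by
  have hmeas : Measurable fun y : ℝ => (Iio r).indicator (fun y => ENNReal.ofReal y⁻¹) y :=
    (measurable_inv.ennreal_ofReal).indicator measurableSet_Iio
  have h1 : ∀ x : ℂ, (ball (0:ℂ) r).indicator (fun s => ENNReal.ofReal ‖s‖⁻¹) x
      = (Iio r).indicator (fun y => ENNReal.ofReal y⁻¹) ‖x‖ := by
    intro x
    by_cases h : ‖x‖ < r
    · rw [indicator_of_mem (by simpa [mem_ball_zero_iff] using h),
        indicator_of_mem (by simpa using h)]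
    · rw [indicator_of_notMem (by simpa [mem_ball_zero_iff] using h),
        indicator_of_notMem (by simpa using h)]
  simp only [h1]
  rw [lintegral_fun_norm_complex _ hmeas]
  congr 2
  have : ∀ᵐ y ∂(volume.restrict (Ioi (0:ℝ))),
      ENNReal.ofReal y * (Iio r).indicator (fun y => ENNReal.ofReal y⁻¹) y
      = (Iio r).indicator (fun _ => 1) y := by
    filter_upwards [ae_restrict_mem measurableSet_Ioi] with y hy
    by_cases h : y < r
    · rw [indicator_of_mem (mem_Iio.2 h), indicator_of_mem (mem_Iio.2 h),
        ← ENNReal.ofReal_mul (le_of_lt hy),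
        mul_inv_cancel₀ (ne_of_gt hy), ENNReal.ofReal_one]
    · rw [indicator_of_notMem (by simpa using h), indicator_of_notMem (by simpa using h),
        mul_zero]
  rw [lintegral_congr_ae this, lintegral_indicator measurableSet_Iio,
    Measure.restrict_restrict measurableSet_Iio, lintegral_one, Measure.restrict_apply_univ,
    Set.Iio_inter_Ioi, Real.volume_Ioo, sub_zero]


lemma lintegral_annulus_inv_sq0 {r R : ℝ} (hr : 0 < r) (hR : r ≤ R) :
    ∫⁻ x : ℂ, ((closedBall (0:ℂ) R \ ball (0:ℂ) r)).indicator
        (fun s => ENNReal.ofReal (‖s‖⁻¹ * ‖s‖⁻¹)) x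
      = volume (ball (0:ℂ) 1) * (2 * ENNReal.ofReal (Real.log R - Real.log r)) := by
  have hmeas : Measurable fun y : ℝ =>
      (Icc r R).indicator (fun y => ENNReal.ofReal (y⁻¹ * y⁻¹)) y :=
    ((measurable_inv.mul measurable_inv).ennreal_ofReal).indicator measurableSet_Icc
  have h1 : ∀ x : ℂ, ((closedBall (0:ℂ) R \ ball (0:ℂ) r)).indicator
        (fun s => ENNReal.ofReal (‖s‖⁻¹ * ‖s‖⁻¹)) x
      = (Icc r R).indicator (fun y => ENNReal.ofReal (y⁻¹ * y⁻¹)) ‖x‖ := by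
    intro x
    have hx : x ∈ closedBall (0:ℂ) R \ ball (0:ℂ) r ↔ ‖x‖ ∈ Icc r R := by
      simp [mem_closedBall_zero_iff, mem_ball_zero_iff, mem_Icc, and_comm, not_lt]
    by_cases h : ‖x‖ ∈ Icc r R
    · rw [indicator_of_mem (hx.2 h), indicator_of_mem h]
    · rw [indicator_of_notMem (fun hm => h (hx.1 hm)), indicator_of_notMem h]
  simp only [h1]
  rw [lintegral_fun_norm_complex _ hmeas]
  congr 2
  have hae : ∀ᵐ y ∂(volume.restrict (Ioi (0:ℝ))),
      ENNReal.ofReal y * (Icc r R).indicator (fun y => ENNReal.ofReal (y⁻¹ * y⁻¹)) y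
      = (Icc r R).indicator (fun y => ENNReal.ofReal y⁻¹) y := by
    filter_upwards [ae_restrict_mem measurableSet_Ioi] with y hy
    by_cases h : y ∈ Icc r R
    · rw [indicator_of_mem h, indicator_of_mem h, ← ENNReal.ofReal_mul (le_of_lt hy),
        ← mul_assoc, mul_inv_cancel₀ (ne_of_gt hy), one_mul]
    · rw [indicator_of_notMem h, indicator_of_notMem h, mul_zero]
  rw [lintegral_congr_ae hae, lintegral_indicator measurableSet_Icc,
    Measure.restrict_restrict measurableSet_Icc]
  have hss : Icc r R ∩ Ioi 0 = Icc r R := by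
    apply inter_eq_left.2
    intro y hy
    exact lt_of_lt_of_le hr hy.1
  rw [hss]
  have hint : IntegrableOn (fun y : ℝ => y⁻¹) (Icc r R) := by
    apply ContinuousOn.integrableOn_compact isCompact_Icc
    exact ContinuousOn.inv₀ continuousOn_id (fun x hx => ne_of_gt (lt_of_lt_of_le hr hx.1))
  have hpos : 0 ≤ᵐ[volume.restrict (Icc r R)] fun y : ℝ => y⁻¹ := by
    filter_upwards [ae_restrict_mem measurableSet_Icc] with y hy
    exact inv_nonneg.2 (le_of_lt (lt_of_lt_of_le hr hy.1))
  rw [← ofReal_integral_eq_lintegral_ofReal hint hpos]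
  congr 1
  rw [integral_Icc_eq_integral_Ioc, ← intervalIntegral.integral_of_le hR,
    integral_inv (by rw [Set.uIcc_of_le hR]; exact fun h => absurd h.1 (not_le.2 hr)),
    Real.log_div (ne_of_gt (lt_of_lt_of_le hr hR)) (ne_of_gt hr)]

lemma lintegral_ball_inv (z : ℂ) (r : ℝ) :
    ∫⁻ s in ball z r, ENNReal.ofReal (‖s - z‖)⁻¹
      = volume (ball (0:ℂ) 1) * (2 * ENNReal.ofReal r) := by
  rw [← lintegral_indicator measurableSet_ball]
  have hmem : ∀ x : ℂ, x ∈ ball z r ↔ x - z ∈ ball (0:ℂ) r := by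
    intro x; simp [mem_ball_iff_norm, mem_ball_zero_iff, Complex.dist_eq]
  have h1 : ∀ x : ℂ, (ball z r).indicator
        (fun s => ENNReal.ofReal (‖s - z‖)⁻¹) x
      = (ball (0:ℂ) r).indicator (fun s => ENNReal.ofReal ‖s‖⁻¹) (x - z) := by
    intro x
    by_cases h : x ∈ ball z r
    · rw [indicator_of_mem h, indicator_of_mem ((hmem x).1 h)]
    · rw [indicator_of_notMem h, indicator_of_notMem (fun hc => h ((hmem x).2 hc))]
  simp only [h1]
  rw [lintegral_sub_right_eq_self
    (fun x => (ball (0:ℂ) r).indicator (fun s => ENNReal.ofReal ‖s‖⁻¹) x) z,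
    lintegral_ball_inv0]

lemma lintegral_annulus_inv_sq (z : ℂ) {r R : ℝ} (hr : 0 < r) (hR : r ≤ R) :
    ∫⁻ s in closedBall z R \ ball z r,
        ENNReal.ofReal ((‖s - z‖)⁻¹ * (‖s - z‖)⁻¹)
      = volume (ball (0:ℂ) 1) * (2 * ENNReal.ofReal (Real.log R - Real.log r)) := by
  rw [← lintegral_indicator (measurableSet_closedBall.diff measurableSet_ball)]
  have hmem : ∀ x : ℂ, x ∈ closedBall z R \ ball z r ↔
      x - z ∈ closedBall (0:ℂ) R \ ball (0:ℂ) r := by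
    intro x
    simp [mem_closedBall_iff_norm, mem_ball_iff_norm, mem_closedBall_zero_iff,
      mem_ball_zero_iff, Complex.dist_eq]
  have h1 : ∀ x : ℂ, (closedBall z R \ ball z r).indicator
        (fun s => ENNReal.ofReal ((‖s - z‖)⁻¹ * (‖s - z‖)⁻¹)) x
      = (closedBall (0:ℂ) R \ ball (0:ℂ) r).indicator
          (fun s => ENNReal.ofReal (‖s‖⁻¹ * ‖s‖⁻¹)) (x - z) := by
    intro x
    by_cases h : x ∈ closedBall z R \ ball z r
    · rw [indicator_of_mem h, indicator_of_mem ((hmem x).1 h)]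
    · rw [indicator_of_notMem h, indicator_of_notMem (fun hc => h ((hmem x).2 hc))]
  simp only [h1]
  rw [lintegral_sub_right_eq_self
    (fun x => (closedBall (0:ℂ) R \ ball (0:ℂ) r).indicator
      (fun s => ENNReal.ofReal (‖s‖⁻¹ * ‖s‖⁻¹)) x) z,
    lintegral_annulus_inv_sq0 hr hR]

/-- The weight function φ(x) = x · max(-ln x, 1); note φ(0) = 0 since `Real.log 0 = 0`. -/
noncomputable def phi (x : ℝ) : ℝ := x * max (-Real.log x) 1

theorem Itwo_estimate :
    ∃ C > 0, ∀ (z₁ z₂ : ℂ) (f : ℂ → ℝ), z₁ ≠ z₂ → Measurable f →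
      MemLp f 1 volume → MemLp f ⊤ volume →
      ENNReal.ofReal (‖z₁ - z₂‖) *
        ∫⁻ s, ENNReal.ofReal (|f s| / (‖s - z₁‖ * ‖s - z₂‖)) ≤
      ENNReal.ofReal (C * ((eLpNorm f 1 volume).toReal + (eLpNorm f ⊤ volume).toReal) *
        phi (‖z₁ - z₂‖)) := by
  set b : ℝ := (volume (ball (0:ℂ) 1)).toReal with hb_def
  have hb0 : 0 ≤ b := ENNReal.toReal_nonneg
  refine ⟨24 * b + 2, by positivity, fun z₁ z₂ f hne hmf h1 htop => ?_⟩
  set B := volume (ball (0:ℂ) 1) with hB_def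
  have hBb : B = ENNReal.ofReal b := (ofReal_toReal measure_ball_lt_top.ne).symm
  set d := ‖z₁ - z₂‖ with hd_def
  have hd : 0 < d := norm_pos_iff.mpr (sub_ne_zero.2 hne)
  set T := max 1 (2*d) with hT_def
  have hT1 : (1:ℝ) ≤ T := le_max_left _ _
  have hTd : 2*d ≤ T := le_max_right _ _
  set M := eLpNorm f ⊤ volume with hM_def
  set E := eLpNorm f 1 volume with hE_def
  set m := M.toReal with hm_def
  set e := E.toReal with he_def
  have hm0 : 0 ≤ m := ENNReal.toReal_nonneg
  have he0 : 0 ≤ e := ENNReal.toReal_nonneg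
  have hMne : M ≠ ⊤ := htop.2.ne
  have hMm : M = ENNReal.ofReal m := (ofReal_toReal hMne).symm
  have hEe : E = ENNReal.ofReal e := (ofReal_toReal h1.2.ne).symm
  -- triangle inequality helper
  have htri : ∀ s : ℂ, d - ‖s - z₁‖ ≤ ‖s - z₂‖ := by
    intro s
    have h1 := norm_sub_le_norm_sub_add_norm_sub z₁ s z₂
    have h2 : ‖z₁ - s‖ = ‖s - z₁‖ := norm_sub_rev z₁ s
    rw [hd_def]; linarith
  -- a.e. bound by M
  have haef : ∀ᵐ s, ENNReal.ofReal |f s| ≤ M := by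
    filter_upwards [ae_le_eLpNormEssSup (f := f) (μ := volume)] with s hs
    rw [← Real.norm_eq_abs, ofReal_norm_eq_enorm, hM_def, eLpNorm_exponent_top]
    exact hs
  -- pointwise factorization
  have hK : ∀ s : ℂ, ENNReal.ofReal (|f s| / (‖s - z₁‖ * ‖s - z₂‖))
      = ENNReal.ofReal |f s| * ENNReal.ofReal (‖s - z₁‖)⁻¹ *
        ENNReal.ofReal (‖s - z₂‖)⁻¹ := by
    intro s
    rw [div_eq_mul_inv, mul_inv, ← mul_assoc,
      ofReal_mul (mul_nonneg (abs_nonneg _) (inv_nonneg.2 (norm_nonneg _))),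
      ofReal_mul (abs_nonneg _)]
  set S₁ := ball z₁ (d/2) with hS₁_def
  set S₂ := ball z₂ (d/2) with hS₂_def
  set S₃ := ball z₁ (2*d) \ (S₁ ∪ S₂) with hS₃_def
  set S₄ := closedBall z₁ T \ ball z₁ (2*d) with hS₄_def
  set S₅ := (closedBall z₁ T)ᶜ with hS₅_def
  set K := fun s : ℂ => ENNReal.ofReal (|f s| / (‖s - z₁‖ * ‖s - z₂‖))
    with hK_def
  -- region bounds
  have htri2 : ∀ s : ℂ, ‖s - z₁‖ - d ≤ ‖s - z₂‖ := by
    intro s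
    have h1 := norm_sub_le_norm_sub_add_norm_sub s z₂ z₁
    have h2 : ‖z₂ - z₁‖ = d := by rw [hd_def, norm_sub_rev]
    linarith
  have hreg1 : ∫⁻ s in S₁, K s ≤ 2 * B * M := by
    have hae : ∀ᵐ s ∂(volume.restrict S₁), K s ≤
        (M * ENNReal.ofReal (2/d)) * ENNReal.ofReal (‖s - z₁‖)⁻¹ := by
      rw [hS₁_def]
      filter_upwards [ae_restrict_of_ae haef, ae_restrict_mem measurableSet_ball] with s hfs hs
      have h2 : ‖s - z₁‖ < d/2 := by
        simpa [Complex.dist_eq] using mem_ball.1 hs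
      have hge : d/2 ≤ ‖s - z₂‖ := by have := htri s; linarith
      have hinv : (‖s - z₂‖)⁻¹ ≤ 2/d := by
        rw [show (2:ℝ)/d = (d/2)⁻¹ by rw [inv_div]]
        exact inv_anti₀ (by positivity) hge
      rw [hK_def]
      simp only
      rw [hK s]
      calc ENNReal.ofReal |f s| * ENNReal.ofReal (‖s - z₁‖)⁻¹ *
            ENNReal.ofReal (‖s - z₂‖)⁻¹
          ≤ M * ENNReal.ofReal (‖s - z₁‖)⁻¹ * ENNReal.ofReal (2/d) :=
            mul_le_mul' (mul_le_mul' hfs le_rfl) (ofReal_le_ofReal hinv)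
        _ = (M * ENNReal.ofReal (2/d)) * ENNReal.ofReal (‖s - z₁‖)⁻¹ := by ring
    calc ∫⁻ s in S₁, K s
        ≤ ∫⁻ s in S₁, (M * ENNReal.ofReal (2/d)) * ENNReal.ofReal (‖s-z₁‖)⁻¹ :=
          lintegral_mono_ae hae
      _ = (M * ENNReal.ofReal (2/d)) * ∫⁻ s in S₁, ENNReal.ofReal (‖s-z₁‖)⁻¹ :=
          lintegral_const_mul' _ _ (mul_ne_top hMne ofReal_ne_top)
      _ = (M * ENNReal.ofReal (2/d)) * (B * (2 * ENNReal.ofReal (d/2))) := by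
          rw [hS₁_def, lintegral_ball_inv, hB_def]
      _ = (2*B*M) * (ENNReal.ofReal (2/d) * ENNReal.ofReal (d/2)) := by ring
      _ = 2*B*M := by
          rw [← ofReal_mul (by positivity), show (2/d)*(d/2) = 1 by field_simp,
            ofReal_one, mul_one]
  have hreg2 : ∫⁻ s in S₂, K s ≤ 2 * B * M := by
    have hae : ∀ᵐ s ∂(volume.restrict S₂), K s ≤
        (M * ENNReal.ofReal (2/d)) * ENNReal.ofReal (‖s - z₂‖)⁻¹ := by
      rw [hS₂_def]
      filter_upwards [ae_restrict_of_ae haef, ae_restrict_mem measurableSet_ball] with s hfs hs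
      have h2 : ‖s - z₂‖ < d/2 := by
        simpa [Complex.dist_eq] using mem_ball.1 hs
      have hge : d/2 ≤ ‖s - z₁‖ := by have := htri s; linarith
      have hinv : (‖s - z₁‖)⁻¹ ≤ 2/d := by
        rw [show (2:ℝ)/d = (d/2)⁻¹ by rw [inv_div]]
        exact inv_anti₀ (by positivity) hge
      rw [hK_def]
      simp only
      rw [hK s]
      calc ENNReal.ofReal |f s| * ENNReal.ofReal (‖s - z₁‖)⁻¹ *
            ENNReal.ofReal (‖s - z₂‖)⁻¹
          ≤ M * ENNReal.ofReal (2/d) * ENNReal.ofReal (‖s - z₂‖)⁻¹ :=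
            mul_le_mul' (mul_le_mul' hfs (ofReal_le_ofReal hinv)) le_rfl
        _ = (M * ENNReal.ofReal (2/d)) * ENNReal.ofReal (‖s - z₂‖)⁻¹ := by ring
    calc ∫⁻ s in S₂, K s
        ≤ ∫⁻ s in S₂, (M * ENNReal.ofReal (2/d)) * ENNReal.ofReal (‖s-z₂‖)⁻¹ :=
          lintegral_mono_ae hae
      _ = (M * ENNReal.ofReal (2/d)) * ∫⁻ s in S₂, ENNReal.ofReal (‖s-z₂‖)⁻¹ :=
          lintegral_const_mul' _ _ (mul_ne_top hMne ofReal_ne_top)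
      _ = (M * ENNReal.ofReal (2/d)) * (B * (2 * ENNReal.ofReal (d/2))) := by
          rw [hS₂_def, lintegral_ball_inv, hB_def]
      _ = (2*B*M) * (ENNReal.ofReal (2/d) * ENNReal.ofReal (d/2)) := by ring
      _ = 2*B*M := by
          rw [← ofReal_mul (by positivity), show (2/d)*(d/2) = 1 by field_simp,
            ofReal_one, mul_one]

  have hreg3 : ∫⁻ s in S₃, K s ≤ 16 * B * M := by
    have hmeas3 : MeasurableSet S₃ := by
      rw [hS₃_def, hS₁_def, hS₂_def]
      exact measurableSet_ball.diff (measurableSet_ball.union measurableSet_ball)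
    have hae : ∀ᵐ s ∂(volume.restrict S₃), K s ≤
        M * ENNReal.ofReal (2/d) * ENNReal.ofReal (2/d) := by
      filter_upwards [ae_restrict_of_ae haef, ae_restrict_mem hmeas3] with s hfs hs
      rw [hS₃_def, hS₁_def, hS₂_def] at hs
      obtain ⟨-, hs2⟩ := hs
      rw [mem_union, not_or] at hs2
      have hge1 : d/2 ≤ ‖s - z₁‖ := by
        have := hs2.1
        simp only [mem_ball, not_lt, Complex.dist_eq] at this
        exact this
      have hge2 : d/2 ≤ ‖s - z₂‖ := by
        have := hs2.2
        simp only [mem_ball, not_lt, Complex.dist_eq] at this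
        exact this
      have hinv1 : (‖s - z₁‖)⁻¹ ≤ 2/d := by
        rw [show (2:ℝ)/d = (d/2)⁻¹ by rw [inv_div]]
        exact inv_anti₀ (by positivity) hge1
      have hinv2 : (‖s - z₂‖)⁻¹ ≤ 2/d := by
        rw [show (2:ℝ)/d = (d/2)⁻¹ by rw [inv_div]]
        exact inv_anti₀ (by positivity) hge2
      rw [hK_def]
      simp only
      rw [hK s]
      exact mul_le_mul' (mul_le_mul' hfs (ofReal_le_ofReal hinv1)) (ofReal_le_ofReal hinv2)
    calc ∫⁻ s in S₃, K s
        ≤ ∫⁻ _ in S₃, M * ENNReal.ofReal (2/d) * ENNReal.ofReal (2/d) :=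
          lintegral_mono_ae hae
      _ = M * ENNReal.ofReal (2/d) * ENNReal.ofReal (2/d) * volume S₃ := setLIntegral_const _ _
      _ ≤ M * ENNReal.ofReal (2/d) * ENNReal.ofReal (2/d) * volume (ball z₁ (2*d)) := by
          refine mul_le_mul_right (measure_mono ?_) _
          rw [hS₃_def]; exact diff_subset
      _ = M * ENNReal.ofReal (2/d) * ENNReal.ofReal (2/d) *
            (ENNReal.ofReal ((2*d) ^ Module.finrank ℝ ℂ) * B) := by
          rw [Measure.addHaar_ball volume z₁ (by positivity), hB_def]
      _ = M * B * (ENNReal.ofReal (2/d) * (ENNReal.ofReal (2/d) *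
            ENNReal.ofReal ((2*d)^2))) := by
          rw [Complex.finrank_real_complex]; ring
      _ = 16 * B * M := by
          rw [← ofReal_mul (by positivity), ← ofReal_mul (by positivity),
            show (2/d) * ((2/d) * (2*d)^2) = 16 by field_simp; ring,
            show (16:ℝ≥0∞) = ENNReal.ofReal 16 by rw [ofReal_ofNat]]
          ring
  have hreg4 : ∫⁻ s in S₄, K s ≤
      4 * B * M * ENNReal.ofReal (Real.log T - Real.log (2*d)) := by
    have hmeas4 : MeasurableSet S₄ := by
      rw [hS₄_def]; exact measurableSet_closedBall.diff measurableSet_ball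
    have hae : ∀ᵐ s ∂(volume.restrict S₄), K s ≤
        (2*M) * ENNReal.ofReal ((‖s - z₁‖)⁻¹ * (‖s - z₁‖)⁻¹) := by
      filter_upwards [ae_restrict_of_ae haef, ae_restrict_mem hmeas4] with s hfs hs
      rw [hS₄_def] at hs
      obtain ⟨hsT, hs2⟩ := hs
      have ha1T : ‖s - z₁‖ ≤ T := by
        simpa [Complex.dist_eq] using mem_closedBall.1 hsT
      have ha1 : 2*d ≤ ‖s - z₁‖ := by
        have := hs2
        simp only [mem_ball, not_lt, Complex.dist_eq] at this
        exact this
      have ha1pos : 0 < ‖s - z₁‖ := by linarith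
      have ha2 : ‖s - z₁‖ / 2 ≤ ‖s - z₂‖ := by
        have := htri2 s; linarith
      have hinv : (‖s - z₂‖)⁻¹ ≤ 2 * (‖s - z₁‖)⁻¹ := by
        rw [show 2 * (‖s - z₁‖)⁻¹ = (‖s - z₁‖ / 2)⁻¹ by
          rw [inv_div]; ring]
        exact inv_anti₀ (by positivity) ha2
      rw [hK_def]
      simp only
      rw [hK s]
      calc ENNReal.ofReal |f s| * ENNReal.ofReal (‖s - z₁‖)⁻¹ *
            ENNReal.ofReal (‖s - z₂‖)⁻¹
          ≤ M * ENNReal.ofReal (‖s - z₁‖)⁻¹ *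
            ENNReal.ofReal (2 * (‖s - z₁‖)⁻¹) :=
            mul_le_mul' (mul_le_mul' hfs le_rfl) (ofReal_le_ofReal hinv)
        _ = (2*M) * ENNReal.ofReal ((‖s - z₁‖)⁻¹ * (‖s - z₁‖)⁻¹) := by
            rw [ofReal_mul (by norm_num : (0:ℝ) ≤ 2), ofReal_ofNat,
              ofReal_mul (by positivity)]
            ring
    calc ∫⁻ s in S₄, K s
        ≤ ∫⁻ s in S₄, (2*M) *
            ENNReal.ofReal ((‖s - z₁‖)⁻¹ * (‖s - z₁‖)⁻¹) :=
          lintegral_mono_ae hae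
      _ = (2*M) * ∫⁻ s in S₄,
            ENNReal.ofReal ((‖s - z₁‖)⁻¹ * (‖s - z₁‖)⁻¹) :=
          lintegral_const_mul' _ _ (mul_ne_top (by simp) hMne)
      _ = (2*M) * (B * (2 * ENNReal.ofReal (Real.log T - Real.log (2*d)))) := by
          rw [hS₄_def, lintegral_annulus_inv_sq z₁ (by positivity) hTd, hB_def]
      _ = 4 * B * M * ENNReal.ofReal (Real.log T - Real.log (2*d)) := by ring
  have hreg5 : ∫⁻ s in S₅, K s ≤ 2 * E := by
    have hae : ∀ᵐ s ∂(volume.restrict S₅), K s ≤ 2 * ENNReal.ofReal |f s| := by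
      filter_upwards [ae_restrict_mem (by rw [hS₅_def]; exact measurableSet_closedBall.compl)]
        with s hs
      rw [hS₅_def] at hs
      have ha1 : T < ‖s - z₁‖ := by
        have := hs
        simp only [mem_compl_iff, mem_closedBall, not_le, Complex.dist_eq] at this
        exact this
      have ha1pos : (0:ℝ) < 1 := one_pos
      have hinv1 : (‖s - z₁‖)⁻¹ ≤ 1 := by
        rw [← inv_one]
        exact inv_anti₀ one_pos (by linarith)
      have ha2 : 1/2 ≤ ‖s - z₂‖ := by
        have h := htri2 s
        have : 2*d ≤ T := hTd
        linarith
      have hinv2 : (‖s - z₂‖)⁻¹ ≤ 2 := by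
        rw [show (2:ℝ) = (1/2)⁻¹ by norm_num]
        exact inv_anti₀ (by norm_num) ha2
      rw [hK_def]
      simp only
      rw [hK s]
      calc ENNReal.ofReal |f s| * ENNReal.ofReal (‖s - z₁‖)⁻¹ *
            ENNReal.ofReal (‖s - z₂‖)⁻¹
          ≤ ENNReal.ofReal |f s| * ENNReal.ofReal (1:ℝ) * ENNReal.ofReal (2:ℝ) :=
            mul_le_mul' (mul_le_mul' le_rfl (ofReal_le_ofReal hinv1)) (ofReal_le_ofReal hinv2)
        _ = 2 * ENNReal.ofReal |f s| := by rw [ofReal_one, ofReal_ofNat]; ring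
    calc ∫⁻ s in S₅, K s
        ≤ ∫⁻ s in S₅, 2 * ENNReal.ofReal |f s| := lintegral_mono_ae hae
      _ = 2 * ∫⁻ s in S₅, ENNReal.ofReal |f s| := lintegral_const_mul' _ _ (by simp)
      _ ≤ 2 * ∫⁻ s, ENNReal.ofReal |f s| :=
          mul_le_mul_right (setLIntegral_le_lintegral _ _) _
      _ = 2 * E := by
          rw [hE_def, eLpNorm_one_eq_lintegral_enorm]
          congr 1
          refine lintegral_congr fun s => ?_
          rw [← Real.norm_eq_abs, ofReal_norm_eq_enorm]
  have hcover : (univ : Set ℂ) ⊆ S₁ ∪ (S₂ ∪ (S₃ ∪ (S₄ ∪ S₅))) := by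
    intro x _
    by_cases h5 : x ∈ closedBall z₁ T
    · by_cases h3 : x ∈ ball z₁ (2*d)
      · by_cases h12 : x ∈ S₁ ∪ S₂
        · rcases h12 with h | h
          · exact Or.inl h
          · exact Or.inr (Or.inl h)
        · exact Or.inr (Or.inr (Or.inl ⟨h3, h12⟩))
      · exact Or.inr (Or.inr (Or.inr (Or.inl ⟨h5, h3⟩)))
    · exact Or.inr (Or.inr (Or.inr (Or.inr h5)))
  have htotal : ∫⁻ s, K s ≤
      2 * B * M + (2 * B * M + (16 * B * M +
        (4 * B * M * ENNReal.ofReal (Real.log T - Real.log (2*d)) + 2 * E))) := by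
    calc ∫⁻ s, K s = ∫⁻ s in univ, K s := (setLIntegral_univ _).symm
      _ ≤ ∫⁻ s in S₁ ∪ (S₂ ∪ (S₃ ∪ (S₄ ∪ S₅))), K s := lintegral_mono_set hcover
      _ ≤ _ := by
          refine le_trans (lintegral_union_le _ _ _) (add_le_add hreg1 ?_)
          refine le_trans (lintegral_union_le _ _ _) (add_le_add hreg2 ?_)
          refine le_trans (lintegral_union_le _ _ _) (add_le_add hreg3 ?_)
          exact le_trans (lintegral_union_le _ _ _) (add_le_add hreg4 hreg5)
  -- final arithmetic
  set L := max (-Real.log d) 1 with hL_def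
  have hL1 : (1:ℝ) ≤ L := le_max_right _ _
  have hlg0 : 0 ≤ Real.log T - Real.log (2*d) := by
    have := Real.log_le_log (by positivity) hTd
    linarith
  have hlgL : Real.log T - Real.log (2*d) ≤ L := by
    rcases le_or_gt 1 (2*d) with h | h
    · have hTeq : T = 2*d := max_eq_right h
      rw [hTeq]; simp; linarith
    · have hTeq : T = 1 := max_eq_left h.le
      have hlog2 : Real.log (2*d) = Real.log 2 + Real.log d :=
        Real.log_mul two_ne_zero hd.ne'
      have h2 : (0:ℝ) ≤ Real.log 2 := Real.log_nonneg one_le_two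
      have : -Real.log d ≤ L := le_max_left _ _
      rw [hTeq, Real.log_one, hlog2]
      linarith
  calc ENNReal.ofReal d * ∫⁻ s, K s
      ≤ ENNReal.ofReal d * (2 * B * M + (2 * B * M + (16 * B * M +
          (4 * B * M * ENNReal.ofReal (Real.log T - Real.log (2*d)) + 2 * E)))) :=
        mul_le_mul_right htotal _
    _ = ENNReal.ofReal d * ENNReal.ofReal
          (2*b*m + (2*b*m + (16*b*m + (4*b*m*(Real.log T - Real.log (2*d)) + 2*e)))) := by
        rw [hBb, hMm, hEe]
        rw [← ofReal_ofNat 2, ← ofReal_ofNat 16, ← ofReal_ofNat 4]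
        rw [← ofReal_mul (by norm_num), ← ofReal_mul (by positivity),
          ← ofReal_mul (by norm_num), ← ofReal_mul (by positivity),
          ← ofReal_mul (by norm_num), ← ofReal_mul (by positivity),
          ← ofReal_mul (by positivity), ← ofReal_mul (by norm_num)]
        rw [← ofReal_add (by positivity) (by positivity),
          ← ofReal_add (by positivity) (by positivity),
          ← ofReal_add (by positivity) (by positivity),
          ← ofReal_add (by positivity) (by positivity)]
    _ ≤ ENNReal.ofReal d * ENNReal.ofReal ((24*b*m + 2*e) * L) := by
        refine mul_le_mul_right (ofReal_le_ofReal ?_) _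
        nlinarith [mul_nonneg (mul_nonneg hb0 hm0) hlg0, mul_nonneg hb0 hm0,
          mul_nonneg (mul_nonneg hb0 hm0) (le_trans hlg0 hlgL)]
    _ ≤ ENNReal.ofReal ((24 * b + 2) * (e + m) * phi d) := by
        rw [← ofReal_mul hd.le]
        refine ofReal_le_ofReal ?_
        have hphi : phi d = d * L := rfl
        rw [hphi]
        have hL0 : 0 ≤ L := le_trans zero_le_one hL1
        nlinarith [mul_nonneg hd.le hL0, mul_nonneg hb0 hm0, mul_nonneg hb0 he0,
          mul_nonneg (mul_nonneg hd.le hL0) (mul_nonneg hb0 he0),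
          mul_nonneg (mul_nonneg hd.le hL0) hm0]
end

section
/- Let 0 < ν < 1, z₁, z₂ ∈ ℂ nonzero with z₁ ≠ z₂, and f ∈ L^∞(ℂ) with compact support (or f ∈ L¹ ∩ L^∞). Then |z₁ - z₂| · ∫_ℂ |f(s)| / (|s|^{1-ν} |s - z₁| |s - z₂|) ds ≤ C_ν · ‖f‖_{L^∞} · (1 + min(|z₁|^{ν-1}, |z₂|^{ν-1})) · φ(|z₁ - z₂|), provided f ∈ L¹ ∩ L^∞; here φ(x)=x·max(-ln x, 1). -/
open MeasureTheory Metric Set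
open scoped ENNReal NNReal

namespace IthreeAux



noncomputable def Cball (p : ℝ) : ℝ := 4 * (2:ℝ)^(-p) * (1 - (2:ℝ)^(-(p+2)))⁻¹
noncomputable def Ctail (p : ℝ) : ℝ := 16 * (1 - (2:ℝ)^(p+2))⁻¹

lemma measurable_w (c : ℂ) (p : ℝ) :
    Measurable fun s : ℂ => ENNReal.ofReal (‖s - c‖ ^ p) :=
  ENNReal.measurable_ofReal.comp
    (((continuous_norm.comp (continuous_id.sub continuous_const)).measurable).pow
      measurable_const)

lemma measurableSet_ge (c : ℂ) (a : ℝ) : MeasurableSet {s : ℂ | a ≤ ‖s - c‖} :=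
  (isClosed_le continuous_const
    (continuous_norm.comp (continuous_id.sub continuous_const))).measurableSet

lemma ann_le (c : ℂ) {p a : ℝ} (b : ℝ) (hp : p ≤ 0) (ha : 0 < a) :
    ∫⁻ s in {s : ℂ | a ≤ ‖s - c‖} ∩ Metric.ball c b,
      ENNReal.ofReal (‖s - c‖ ^ p)
      ≤ ENNReal.ofReal (a ^ p) * volume (Metric.ball c b) := by
  have hmeas : MeasurableSet ({s : ℂ | a ≤ ‖s - c‖} ∩ Metric.ball c b) :=
    (measurableSet_ge c a).inter measurableSet_ball
  calc ∫⁻ s in {s : ℂ | a ≤ ‖s - c‖} ∩ Metric.ball c b,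
        ENNReal.ofReal (‖s - c‖ ^ p)
      ≤ ∫⁻ _ in {s : ℂ | a ≤ ‖s - c‖} ∩ Metric.ball c b,
        ENNReal.ofReal (a ^ p) := by
        refine setLIntegral_mono' hmeas fun x hx => ?_
        exact ENNReal.ofReal_le_ofReal (Real.rpow_le_rpow_of_nonpos ha hx.1 hp)
    _ = ENNReal.ofReal (a ^ p) * volume ({s : ℂ | a ≤ ‖s - c‖} ∩ Metric.ball c b) :=
        setLIntegral_const _ _
    _ ≤ ENNReal.ofReal (a ^ p) * volume (Metric.ball c b) := by
        exact mul_le_mul_right (measure_mono inter_subset_right) _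

lemma rpow_npow {u : ℝ} (hu : 0 ≤ u) (n : ℕ) (p : ℝ) : (u^n) ^ p = (u ^ p)^n := by
  rw [← Real.rpow_natCast u n, ← Real.rpow_natCast (u ^ p) n, ← Real.rpow_mul hu,
    ← Real.rpow_mul hu, mul_comm]

lemma tsum_geo_ofReal {c q : ℝ} (hc : 0 ≤ c) (hq0 : 0 ≤ q) (hq1 : q < 1) :
    (∑' k : ℕ, ENNReal.ofReal (c * q ^ k)) ≤ ENNReal.ofReal (c * (1 - q)⁻¹) := by
  have h1 : ∀ k : ℕ, ENNReal.ofReal (c * q ^ k) = ENNReal.ofReal c * ENNReal.ofReal q ^ k := by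
    intro k; rw [ENNReal.ofReal_mul hc, ENNReal.ofReal_pow hq0]
  simp_rw [h1]
  rw [ENNReal.tsum_mul_left, ENNReal.tsum_geometric]
  have h2 : (1 : ℝ≥0∞) - ENNReal.ofReal q = ENNReal.ofReal (1 - q) := by
    rw [ENNReal.ofReal_sub _ hq0, ENNReal.ofReal_one]
  rw [h2, ← ENNReal.ofReal_inv_of_pos (by linarith), ← ENNReal.ofReal_mul hc]



lemma pi_le : (NNReal.pi : ℝ≥0∞) ≤ ENNReal.ofReal 4 := by
  rw [← ENNReal.ofReal_coe_nnreal]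
  exact ENNReal.ofReal_le_ofReal (by rw [NNReal.coe_real_pi]; exact Real.pi_le_four)

lemma lint_ball (c : ℂ) {p : ℝ} (hp₁ : -2 < p) (hp₂ : p < 0) {R : ℝ} (hR : 0 < R) :
    ∫⁻ s in Metric.ball c R, ENNReal.ofReal (‖s - c‖ ^ p)
      ≤ ENNReal.ofReal (Cball p * R ^ (p + 2)) := by
  set u : ℝ := (2:ℝ)⁻¹ with hu
  clear_value u
  have hupos : (0:ℝ) < u := by rw [hu]; norm_num
  have hu0 : (0:ℝ) ≤ u := hupos.le
  have hu1 : u < 1 := by rw [hu]; norm_num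
  set A : ℕ → Set ℂ := fun k =>
    {s : ℂ | R * u^(k+1) ≤ ‖s - c‖} ∩ Metric.ball c (R * u^k) with hA
  have hcover : Metric.ball c R ⊆ {c} ∪ ⋃ k, A k := by
    intro s hs
    rcases eq_or_ne s c with h | h
    · exact Or.inl (by simp [h])
    right
    have habs : 0 < ‖s - c‖ := by
      simpa using (norm_pos_iff.mpr (sub_ne_zero.mpr h))
    set t := ‖s - c‖ with ht
    have htR : t < R := by
      simpa [Complex.dist_eq, ht] using (mem_ball.mp hs)
    have hex : ∃ n : ℕ, R * u^(n+1) ≤ t := by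
      obtain ⟨n, hn⟩ := exists_pow_lt_of_lt_one (div_pos habs hR) hu1
      refine ⟨n, ?_⟩
      have h1 : u ^ (n+1) ≤ u ^ n := pow_le_pow_of_le_one hu0 hu1.le (Nat.le_succ n)
      have h2 : R * u ^ n ≤ t := by
        have := (lt_div_iff₀ hR).mp hn
        nlinarith
      nlinarith
    set k := Nat.find hex with hk
    refine Set.mem_iUnion.2 ⟨k, ⟨Nat.find_spec hex, ?_⟩⟩
    rw [mem_ball, Complex.dist_eq]
    rcases Nat.eq_zero_or_pos k with h0 | h0
    · rw [h0]; simpa using htR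
    · obtain ⟨m, hm⟩ := Nat.exists_eq_succ_of_ne_zero h0.ne'
      have := Nat.find_min hex (m := m) (by omega)
      push_neg at this
      rw [hm]
      exact this
  have hterm : ∀ k : ℕ, ∫⁻ s in A k, ENNReal.ofReal (‖s - c‖ ^ p)
      ≤ ENNReal.ofReal ((4 * ((2:ℝ)^(-p) * R^(p+2))) * ((2:ℝ)^(-(p+2)))^k) := by
    intro k
    have h1 : 0 < R * u^(k+1) := by positivity
    calc ∫⁻ s in A k, ENNReal.ofReal (‖s - c‖ ^ p)
        ≤ ENNReal.ofReal ((R * u^(k+1)) ^ p) * volume (Metric.ball c (R * u^k)) :=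
          ann_le c _ hp₂.le h1
      _ = ENNReal.ofReal ((R * u^(k+1)) ^ p) * (ENNReal.ofReal ((R * u^k)^2) * NNReal.pi) := by
          rw [Complex.volume_ball, ENNReal.ofReal_pow (by positivity)]
      _ ≤ ENNReal.ofReal ((R * u^(k+1)) ^ p) * (ENNReal.ofReal ((R * u^k)^2) * ENNReal.ofReal 4) :=
          by gcongr; exact pi_le
      _ = ENNReal.ofReal ((R * u^(k+1)) ^ p * ((R * u^k)^2 * 4)) := by
          rw [ENNReal.ofReal_mul (by positivity), ENNReal.ofReal_mul (by positivity)]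
      _ ≤ ENNReal.ofReal ((4 * ((2:ℝ)^(-p) * R^(p+2))) * ((2:ℝ)^(-(p+2)))^k) := by
          apply ENNReal.ofReal_le_ofReal
          apply le_of_eq
          have e1 : (R * u^(k+1)) ^ p = R ^ p * (u^p)^(k+1) := by
            rw [Real.mul_rpow hR.le (by positivity), rpow_npow hu0]
          have e2 : (u:ℝ)^p = (2:ℝ)^(-p) := by
            rw [hu, ← Real.rpow_neg_one (2:ℝ), ← Real.rpow_mul (by norm_num)]
            norm_num
          have e3 : ((2:ℝ)^(-(p+2)) : ℝ) = u^p * u^2 := by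
            rw [hu, ← Real.rpow_neg_one (2:ℝ), ← Real.rpow_natCast ((2:ℝ)^(-1:ℝ)) 2,
              ← Real.rpow_mul (by norm_num), ← Real.rpow_mul (by norm_num),
              ← Real.rpow_add (by norm_num)]
            norm_num
            rw [add_comm]
          have e4 : R ^ p * R^(2:ℕ) = R ^ (p+2) := by
            rw [← Real.rpow_natCast R 2, ← Real.rpow_add hR]; norm_num
          rw [e1, ← e2, e3, ← e4]
          ring
  have hq1 : (2:ℝ)^(-(p+2)) < 1 :=
    Real.rpow_lt_one_of_one_lt_of_neg (by norm_num) (by linarith)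
  calc ∫⁻ s in Metric.ball c R, ENNReal.ofReal (‖s - c‖ ^ p)
      ≤ ∫⁻ s in ({c} ∪ ⋃ k, A k), ENNReal.ofReal (‖s - c‖ ^ p) :=
        lintegral_mono_set hcover
    _ ≤ (∫⁻ s in ({c} : Set ℂ), ENNReal.ofReal (‖s - c‖ ^ p))
        + ∫⁻ s in (⋃ k, A k), ENNReal.ofReal (‖s - c‖ ^ p) :=
        lintegral_union_le _ _ _
    _ ≤ 0 + ∑' k, ∫⁻ s in A k, ENNReal.ofReal (‖s - c‖ ^ p) := by
        gcongr
        · exact le_of_eq (setLIntegral_measure_zero _ _ (measure_singleton c))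
        · exact lintegral_iUnion_le _ _
    _ ≤ ∑' k, ENNReal.ofReal ((4 * ((2:ℝ)^(-p) * R^(p+2))) * ((2:ℝ)^(-(p+2)))^k) := by
        rw [zero_add]; exact ENNReal.tsum_le_tsum hterm
    _ ≤ ENNReal.ofReal ((4 * ((2:ℝ)^(-p) * R^(p+2))) * (1 - (2:ℝ)^(-(p+2)))⁻¹) :=
        tsum_geo_ofReal (by positivity) (by positivity) hq1
    _ = ENNReal.ofReal (Cball p * R ^ (p + 2)) := by
        unfold Cball; congr 1; ring



lemma lint_tail (c : ℂ) {p : ℝ} (hp : p < -2) {K : ℝ} (hK : 0 < K) :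
    ∫⁻ s in {s : ℂ | K ≤ ‖s - c‖}, ENNReal.ofReal (‖s - c‖ ^ p)
      ≤ ENNReal.ofReal (Ctail p * K ^ (p + 2)) := by
  set A : ℕ → Set ℂ := fun k =>
    {s : ℂ | K * 2^k ≤ ‖s - c‖} ∩ Metric.ball c (K * 2^(k+1)) with hA
  have hcover : {s : ℂ | K ≤ ‖s - c‖} ⊆ ⋃ k, A k := by
    intro s hs
    set t := ‖s - c‖ with ht
    have htK : K ≤ t := hs
    have hex : ∃ n : ℕ, t < K * 2^(n+1) := by
      obtain ⟨n, hn⟩ := pow_unbounded_of_one_lt (t / K) (by norm_num : (1:ℝ) < 2)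
      refine ⟨n, ?_⟩
      have h2 : t < K * 2 ^ n := by
        have := (div_lt_iff₀ hK).mp hn
        linarith
      have : (2:ℝ)^n ≤ 2^(n+1) := by
        apply pow_le_pow_right₀ (by norm_num) (Nat.le_succ n)
      nlinarith
    set k := Nat.find hex with hk
    refine Set.mem_iUnion.2 ⟨k, ⟨?_, ?_⟩⟩
    · rcases Nat.eq_zero_or_pos k with h0 | h0
      · rw [h0]; simpa using htK
      · obtain ⟨m, hm⟩ := Nat.exists_eq_succ_of_ne_zero h0.ne'
        have := Nat.find_min hex (m := m) (by omega)
        push_neg at this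
        rw [hm]; exact this
    · rw [mem_ball, Complex.dist_eq, ← ht]; exact Nat.find_spec hex
  have hterm : ∀ k : ℕ, ∫⁻ s in A k, ENNReal.ofReal (‖s - c‖ ^ p)
      ≤ ENNReal.ofReal ((16 * K^(p+2)) * ((2:ℝ)^(p+2))^k) := by
    intro k
    have h1 : 0 < K * 2^k := by positivity
    calc ∫⁻ s in A k, ENNReal.ofReal (‖s - c‖ ^ p)
        ≤ ENNReal.ofReal ((K * 2^k) ^ p) * volume (Metric.ball c (K * 2^(k+1))) :=
          ann_le c _ (by linarith) h1
      _ = ENNReal.ofReal ((K * 2^k) ^ p) * (ENNReal.ofReal ((K * 2^(k+1))^2) * NNReal.pi) := by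
          rw [Complex.volume_ball, ENNReal.ofReal_pow (by positivity)]
      _ ≤ ENNReal.ofReal ((K * 2^k) ^ p) * (ENNReal.ofReal ((K * 2^(k+1))^2) * ENNReal.ofReal 4) := by
          gcongr; exact pi_le
      _ = ENNReal.ofReal ((K * 2^k) ^ p * ((K * 2^(k+1))^2 * 4)) := by
          rw [ENNReal.ofReal_mul (by positivity), ENNReal.ofReal_mul (by positivity)]
      _ ≤ ENNReal.ofReal ((16 * K^(p+2)) * ((2:ℝ)^(p+2))^k) := by
          apply ENNReal.ofReal_le_ofReal
          apply le_of_eq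
          have e1 : (K * (2:ℝ)^k) ^ p = K ^ p * ((2:ℝ)^p)^k := by
            rw [Real.mul_rpow hK.le (by positivity), rpow_npow (by norm_num)]
          have e3 : ((2:ℝ)^(p+2))^k = ((2:ℝ)^p)^k * ((2:ℝ)^(k:ℕ))^2 := by
            have : (2:ℝ)^(p+2) = (2:ℝ)^p * (2:ℝ)^(2:ℕ) := by
              rw [← Real.rpow_natCast (2:ℝ) 2, ← Real.rpow_add (by norm_num)]
              norm_num
            rw [this, mul_pow]
            congr 1
            rw [show ((2:ℝ)^(2:ℕ)) = 2^2 from rfl, ← pow_mul, ← pow_mul, mul_comm]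
          have e4 : K ^ p * K^2 = K ^ (p+2) := by
            rw [← Real.rpow_natCast K 2, ← Real.rpow_add hK]; norm_num
          rw [e1, e3, ← e4]
          ring
  calc ∫⁻ s in {s : ℂ | K ≤ ‖s - c‖}, ENNReal.ofReal (‖s - c‖ ^ p)
      ≤ ∫⁻ s in (⋃ k, A k), ENNReal.ofReal (‖s - c‖ ^ p) :=
        lintegral_mono_set hcover
    _ ≤ ∑' k, ∫⁻ s in A k, ENNReal.ofReal (‖s - c‖ ^ p) := lintegral_iUnion_le _ _
    _ ≤ ∑' k, ENNReal.ofReal ((16 * K^(p+2)) * ((2:ℝ)^(p+2))^k) := ENNReal.tsum_le_tsum hterm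
    _ ≤ ENNReal.ofReal ((16 * K^(p+2)) * (1 - (2:ℝ)^(p+2))⁻¹) :=
        tsum_geo_ofReal (by positivity) (by positivity)
          (Real.rpow_lt_one_of_one_lt_of_neg (by norm_num) (by linarith))
    _ = ENNReal.ofReal (Ctail p * K ^ (p + 2)) := by unfold Ctail; congr 1; ring

lemma lint_log_aux (c : ℂ) {r : ℝ} (hr : 0 < r) (N : ℕ) :
    ∫⁻ s in {s : ℂ | r ≤ ‖s - c‖} ∩ Metric.ball c (r * 2^N),
      ENNReal.ofReal (‖s - c‖ ^ (-2 : ℝ)) ≤ N * ENNReal.ofReal 16 := by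
  induction N with
  | zero =>
    have : {s : ℂ | r ≤ ‖s - c‖} ∩ Metric.ball c (r * 2^0) = ∅ := by
      ext s
      simp only [mem_inter_iff, mem_setOf_eq, mem_ball, Complex.dist_eq, mem_empty_iff_false,
        iff_false, not_and, pow_zero, mul_one]
      intro h1 h2
      exact absurd h2 (not_lt.mpr h1)
    rw [this]
    simp
  | succ N ih =>
    have hsub : {s : ℂ | r ≤ ‖s - c‖} ∩ Metric.ball c (r * 2^(N+1)) ⊆
        ({s : ℂ | r ≤ ‖s - c‖} ∩ Metric.ball c (r * 2^N)) ∪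
        ({s : ℂ | r * 2^N ≤ ‖s - c‖} ∩ Metric.ball c (r * 2^(N+1))) := by
      intro s hs
      rcases lt_or_ge (‖s - c‖) (r * 2^N) with h | h
      · exact Or.inl ⟨hs.1, by rwa [mem_ball, Complex.dist_eq]⟩
      · exact Or.inr ⟨h, hs.2⟩
    calc ∫⁻ s in {s : ℂ | r ≤ ‖s - c‖} ∩ Metric.ball c (r * 2^(N+1)),
          ENNReal.ofReal (‖s - c‖ ^ (-2 : ℝ))
        ≤ _ := lintegral_mono_set hsub
      _ ≤ (∫⁻ s in {s : ℂ | r ≤ ‖s - c‖} ∩ Metric.ball c (r * 2^N),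
            ENNReal.ofReal (‖s - c‖ ^ (-2 : ℝ)))
          + ∫⁻ s in {s : ℂ | r * 2^N ≤ ‖s - c‖} ∩ Metric.ball c (r * 2^(N+1)),
            ENNReal.ofReal (‖s - c‖ ^ (-2 : ℝ)) := lintegral_union_le _ _ _
      _ ≤ N * ENNReal.ofReal 16 + ENNReal.ofReal 16 := by
          refine add_le_add ih ?_
          calc ∫⁻ s in {s : ℂ | r * 2^N ≤ ‖s - c‖} ∩ Metric.ball c (r * 2^(N+1)),
                ENNReal.ofReal (‖s - c‖ ^ (-2 : ℝ))
              ≤ ENNReal.ofReal ((r * 2^N) ^ (-2:ℝ)) * volume (Metric.ball c (r * 2^(N+1))) :=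
                ann_le c _ (by norm_num) (by positivity)
            _ = ENNReal.ofReal ((r * 2^N) ^ (-2:ℝ)) * (ENNReal.ofReal ((r * 2^(N+1))^2) * NNReal.pi) := by
                rw [Complex.volume_ball, ENNReal.ofReal_pow (by positivity)]
            _ ≤ ENNReal.ofReal ((r * 2^N) ^ (-2:ℝ)) * (ENNReal.ofReal ((r * 2^(N+1))^2) * ENNReal.ofReal 4) := by
                gcongr; exact pi_le
            _ = ENNReal.ofReal ((r * 2^N) ^ (-2:ℝ) * ((r * 2^(N+1))^2 * 4)) := by
                rw [ENNReal.ofReal_mul (by positivity), ENNReal.ofReal_mul (by positivity)]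
            _ ≤ ENNReal.ofReal 16 := by
                apply ENNReal.ofReal_le_ofReal
                apply le_of_eq
                have h0 : (0:ℝ) < r * 2^N := by positivity
                rw [show ((-2:ℝ)) = -(2:ℕ) by norm_num, Real.rpow_neg h0.le,
                  Real.rpow_natCast]
                rw [pow_succ]
                field_simp
                ring
      _ = (N+1 : ℕ) * ENNReal.ofReal 16 := by
          push_cast
          ring

lemma lint_log (c : ℂ) {r R : ℝ} (hr : 0 < r) (hrR : r ≤ R) :
    ∫⁻ s in {s : ℂ | r ≤ ‖s - c‖} ∩ Metric.ball c R,
      ENNReal.ofReal (‖s - c‖ ^ (-2 : ℝ))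
      ≤ ENNReal.ofReal (48 * (1 + Real.log (R / r))) := by
  set N : ℕ := ⌊Real.logb 2 (R / r)⌋₊ + 1 with hN
  have hRr1 : (1:ℝ) ≤ R / r := (one_le_div hr).mpr hrR
  have hlogb0 : 0 ≤ Real.logb 2 (R / r) := Real.logb_nonneg (by norm_num) hRr1
  have hRN : R ≤ r * 2^N := by
    have h1 : (R / r) ≤ 2^(N:ℝ) := by
      rw [← Real.rpow_logb (by norm_num : (0:ℝ) < 2) (by norm_num) (by linarith : 0 < R / r)]
      apply Real.rpow_le_rpow_of_exponent_le (by norm_num)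
      push_cast [hN]
      have := Nat.lt_floor_add_one (Real.logb 2 (R / r))
      linarith
    rw [Real.rpow_natCast] at h1
    calc R = r * (R / r) := by field_simp
      _ ≤ r * 2^N := by nlinarith
  have hNle : (N:ℝ) ≤ 2 + 2 * Real.log (R / r) := by
    have h1 : (⌊Real.logb 2 (R / r)⌋₊ : ℝ) ≤ Real.logb 2 (R / r) := Nat.floor_le hlogb0
    have h2 : Real.logb 2 (R / r) ≤ 2 * Real.log (R / r) := by
      rw [Real.logb, div_le_iff₀ (Real.log_pos (by norm_num))]
      have hl2 : (0.6931471803 : ℝ) < Real.log 2 := by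
        have := Real.log_two_gt_d9; linarith
      have hlog0 : 0 ≤ Real.log (R / r) := Real.log_nonneg hRr1
      nlinarith
    push_cast [hN]
    linarith
  calc ∫⁻ s in {s : ℂ | r ≤ ‖s - c‖} ∩ Metric.ball c R,
        ENNReal.ofReal (‖s - c‖ ^ (-2 : ℝ))
      ≤ ∫⁻ s in {s : ℂ | r ≤ ‖s - c‖} ∩ Metric.ball c (r * 2^N),
        ENNReal.ofReal (‖s - c‖ ^ (-2 : ℝ)) :=
        lintegral_mono_set (inter_subset_inter_right _ (ball_subset_ball hRN))
    _ ≤ N * ENNReal.ofReal 16 := lint_log_aux c hr N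
    _ = ENNReal.ofReal (N * 16) := by
        rw [ENNReal.ofReal_mul (by positivity), ENNReal.ofReal_natCast]
    _ ≤ ENNReal.ofReal (48 * (1 + Real.log (R / r))) := by
        apply ENNReal.ofReal_le_ofReal
        have hlog0 : 0 ≤ Real.log (R / r) := Real.log_nonneg hRr1
        nlinarith



lemma Cball_pos {p : ℝ} (hp₁ : -2 < p) (hp₂ : p < 0) : 0 < Cball p := by
  unfold Cball
  have h1 : (2:ℝ)^(-(p+2)) < 1 :=
    Real.rpow_lt_one_of_one_lt_of_neg (by norm_num) (by linarith)
  have h2 : (0:ℝ) < (2:ℝ)^(-p) := Real.rpow_pos_of_pos (by norm_num) _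
  have h3 : (0:ℝ) < (1 - (2:ℝ)^(-(p+2)))⁻¹ := inv_pos.mpr (by linarith)
  positivity

lemma Ctail_pos {p : ℝ} (hp : p < -2) : 0 < Ctail p := by
  unfold Ctail
  have h1 : (2:ℝ)^(p+2) < 1 :=
    Real.rpow_lt_one_of_one_lt_of_neg (by norm_num) (by linarith)
  have h3 : (0:ℝ) < (1 - (2:ℝ)^(p+2))⁻¹ := inv_pos.mpr (by linarith)
  positivity

lemma phi_nonneg {x : ℝ} (hx : 0 ≤ x) : 0 ≤ phi x :=
  mul_nonneg hx (le_trans zero_le_one (le_max_right _ _))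

lemma le_phi {x : ℝ} (hx : 0 ≤ x) : x ≤ phi x :=
  le_mul_of_one_le_right hx (le_max_right _ _)

lemma div3 {w y z A B : ℝ} (hw : 0 ≤ w) (hwA : w ≤ A) (hy : 0 ≤ y) (hzB : B ≤ z)
    (hB : 0 < B) : w / (y * z) ≤ (A / B) * y⁻¹ := by
  rcases hy.eq_or_lt' with h | h
  · rw [h]
    simp
  have hz : 0 < z := lt_of_lt_of_le hB hzB
  have h1 : w / (y * z) ≤ A / (y * B) := by
    apply div_le_div₀ (le_trans hw hwA) hwA (by positivity)
    exact mul_le_mul_of_nonneg_left hzB hy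
  calc w / (y * z) ≤ A / (y * B) := h1
    _ = (A / B) * y⁻¹ := by
      rw [mul_comm y B, ← div_div, div_eq_mul_inv (A / B)]

lemma pw {x y q : ℝ} (hx : 0 ≤ x) (hy : 0 ≤ y) (hq : q < 0) :
    x ^ q / y ≤ x ^ (q - 1) + y ^ (q - 1) := by
  rcases eq_or_lt_of_le hx with h | hx'
  · rw [← h, Real.zero_rpow hq.ne, zero_div]
    positivity
  rcases eq_or_lt_of_le hy with h | hy'
  · rw [← h, div_zero]
    positivity
  rcases le_total x y with h | h
  · have h1 : x ^ q / y ≤ x ^ q / x := by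
      gcongr
    have h2 : x ^ q / x = x ^ (q - 1) := by
      rw [Real.rpow_sub hx', Real.rpow_one]
    have : (0:ℝ) ≤ y ^ (q-1) := by positivity
    linarith [h1.trans h2.le]
  · have h1 : x ^ q ≤ y ^ q := Real.rpow_le_rpow_of_nonpos hy' h hq.le
    have h2 : x ^ q / y ≤ y ^ q / y := by gcongr
    have h3 : y ^ q / y = y ^ (q - 1) := by
      rw [Real.rpow_sub hy', Real.rpow_one]
    have : (0:ℝ) ≤ x ^ (q-1) := by positivity
    linarith [h2.trans h3.le]

lemma mp_log_le {m ν : ℝ} (hm : 0 < m) (hν1 : ν < 1) :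
    m ^ (ν - 1) * max (Real.log m) 0 ≤ 1 / (1 - ν) := by
  rcases le_total m 1 with h | h
  · rw [max_eq_right (Real.log_nonpos hm.le h)]
    rw [mul_zero]
    have : (0:ℝ) < 1 - ν := by linarith
    positivity
  · rw [max_eq_left (Real.log_nonneg h)]
    have h1 : (1 - ν) * Real.log m ≤ m ^ (1 - ν) := by
      rw [← Real.log_rpow hm]
      have := Real.log_le_sub_one_of_pos (Real.rpow_pos_of_pos hm (1 - ν))
      linarith
    have h2 : Real.log m ≤ m ^ (1 - ν) / (1 - ν) := by
      rw [le_div_iff₀ (by linarith)]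
      linarith [h1]
    have h3 : m ^ (ν - 1) * (m ^ (1 - ν) / (1 - ν)) = 1 / (1 - ν) := by
      rw [mul_div_assoc', ← Real.rpow_add hm]
      norm_num
    calc m ^ (ν - 1) * Real.log m ≤ m ^ (ν - 1) * (m ^ (1 - ν) / (1 - ν)) := by
          apply mul_le_mul_of_nonneg_left h2 (by positivity)
      _ = 1 / (1 - ν) := h3

lemma log_account {m d ν : ℝ} (hm : 0 < m) (hd : 0 < d) (hν0 : 0 < ν) (hν1 : ν < 1) :
    m ^ (ν - 1) * (d * (1 + Real.log ((4 * m + 4 * d) / d)))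
      ≤ (5 + 1 / (1 - ν)) * ((1 + m ^ (ν - 1)) * phi d) := by
  set mp := m ^ (ν - 1) with hmp
  have hmp0 : 0 < mp := Real.rpow_pos_of_pos hm _
  have hφd : d ≤ phi d := le_phi hd.le
  have hφ0 : 0 ≤ phi d := phi_nonneg hd.le
  have hν' : (0:ℝ) < 1 - ν := by linarith
  have hAν : 0 < 1 / (1 - ν) := by positivity
  rcases le_total m d with hcase | hcase
  · -- m ≤ d : log ((4m+4d)/d) ≤ log 8 ≤ 3
    have h8 : (4 * m + 4 * d) / d ≤ 8 := by
      rw [div_le_iff₀ hd]; linarith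
    have hpos : (0:ℝ) < (4 * m + 4 * d) / d := by positivity
    have hlog : Real.log ((4 * m + 4 * d) / d) ≤ 3 := by
      calc Real.log ((4 * m + 4 * d) / d) ≤ Real.log 8 := Real.log_le_log hpos h8
        _ ≤ 3 := by
          have := Real.log_le_sub_one_of_pos (by norm_num : (0:ℝ) < 8)
          have h2 : Real.log 8 = 3 * Real.log 2 := by
            rw [show (8:ℝ) = 2 ^ (3:ℕ) by norm_num, Real.log_pow]; push_cast; ring
          have := Real.log_two_lt_d9
          nlinarith
    have key : mp * (d * (1 + Real.log ((4*m+4*d)/d))) ≤ 4 * (mp * d) := by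
      nlinarith [mul_le_mul_of_nonneg_left (show 1 + Real.log ((4*m+4*d)/d) ≤ 4 by linarith)
        (mul_pos hmp0 hd).le]
    have h2 : mp * d ≤ (1 + mp) * phi d := by
      nlinarith [mul_le_mul_of_nonneg_left hφd hmp0.le, hφ0]
    have h5 : (0:ℝ) ≤ (1 + mp) * phi d := by positivity
    nlinarith [mul_nonneg hAν.le h5]
  · -- d ≤ m
    have hlog : Real.log ((4 * m + 4 * d) / d) ≤ Real.log 8 + Real.log m + (- Real.log d) := by
      have h1 : (4 * m + 4 * d) / d ≤ 8 * m / d := by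
        gcongr
        linarith
      have h2 : Real.log ((4*m+4*d)/d) ≤ Real.log (8 * m / d) :=
        Real.log_le_log (by positivity) h1
      have h3 : Real.log (8 * m / d) = Real.log 8 + Real.log m - Real.log d := by
        rw [Real.log_div (by positivity) hd.ne', Real.log_mul (by norm_num) hm.ne']
      linarith
    have hlog8 : Real.log 8 ≤ 3 := by
      have := Real.log_le_sub_one_of_pos (by norm_num : (0:ℝ) < 8)
      have h2 : Real.log 8 = 3 * Real.log 2 := by
        rw [show (8:ℝ) = 2 ^ (3:ℕ) by norm_num, Real.log_pow]; push_cast; ring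
      have := Real.log_two_lt_d9
      nlinarith
    have hlogm : Real.log m ≤ max (Real.log m) 0 := le_max_left _ _
    have hlogd : -Real.log d ≤ max (-Real.log d) 1 := le_max_left _ _
    have hmax0 : (0:ℝ) ≤ max (Real.log m) 0 := le_max_right _ _
    have hmax1 : (1:ℝ) ≤ max (-Real.log d) 1 := le_max_right _ _
    have hA : mp * max (Real.log m) 0 ≤ 1 / (1 - ν) := mp_log_le hm hν1
    -- mp * d * (1 + log(...)) ≤ mp*d*(4 + max(log m,0) + max(-log d,1))
    have step1 : mp * (d * (1 + Real.log ((4*m+4*d)/d)))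
        ≤ mp * d * 4 + (mp * max (Real.log m) 0) * d + mp * (d * max (-Real.log d) 1) := by
      have expand : 1 + Real.log ((4*m+4*d)/d) ≤ 4 + max (Real.log m) 0 + max (-Real.log d) 1 := by
        have := hlog; linarith
      nlinarith [mul_le_mul_of_nonneg_left expand (mul_pos hmp0 hd).le]
    have e1 : mp * (d * max (-Real.log d) 1) = mp * phi d := by rw [phi]
    have e2 : mp * d * 4 ≤ 4 * ((1 + mp) * phi d) := by
      nlinarith [mul_le_mul_of_nonneg_left hφd hmp0.le, hφ0]
    have e3 : (mp * max (Real.log m) 0) * d ≤ (1 / (1-ν)) * ((1 + mp) * phi d) := by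
      have h1 : (mp * max (Real.log m) 0) * d ≤ (1/(1-ν)) * d :=
        mul_le_mul_of_nonneg_right hA hd.le
      have h2 : (1/(1-ν)) * d ≤ (1/(1-ν)) * ((1+mp) * phi d) := by
        apply mul_le_mul_of_nonneg_left ?_ hAν.le
        nlinarith [mul_nonneg hmp0.le hφ0]
      linarith
    have e4 : mp * phi d ≤ 1 * ((1 + mp) * phi d) := by nlinarith [hφ0]
    rw [e1] at step1
    linarith


set_option maxHeartbeats 1000000 in
lemma key (ν : ℝ) (hν0 : 0 < ν) (hν1 : ν < 1) :
    ∃ C > 0, ∀ z₁ z₂ : ℂ, z₁ ≠ 0 → z₂ ≠ 0 → z₁ ≠ z₂ → ‖z₂‖ ≤ ‖z₁‖ →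
      ENNReal.ofReal (‖z₁ - z₂‖) *
        ∫⁻ s, ENNReal.ofReal (‖s‖ ^ (ν - 1) /
          (‖s - z₁‖ * ‖s - z₂‖)) ≤
      ENNReal.ofReal (C * ((1 + ‖z₁‖ ^ (ν - 1)) * phi (‖z₁ - z₂‖))) := by
  have hCb1 := Cball_pos (show (-2:ℝ) < -1 by norm_num) (by norm_num)
  have hCb2 := Cball_pos (show (-2:ℝ) < ν-2 by linarith) (by linarith)
  have hCbν := Cball_pos (show (-2:ℝ) < ν-1 by linarith) (by linarith)
  have hCt := Ctail_pos (show ν-3 < (-2:ℝ) by linarith)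
  have hν' : (0:ℝ) < 1 - ν := by linarith
  set c₁ : ℝ := 2*Cball (-1) + 6*Cball (ν-2) with hc₁
  set c₂ : ℝ := 4*Cball (-1) + 12*Cball (ν-2) with hc₂
  set c₃ : ℝ := 16*Cball (ν-1) with hc₃
  set c₄ : ℝ := 288*(5 + 1/(1-ν)) with hc₄
  set c₅ : ℝ := 4*Ctail (ν-3) with hc₅
  have hc₁0 : 0 < c₁ := by positivity
  have hc₂0 : 0 < c₂ := by positivity
  have hc₃0 : 0 < c₃ := by positivity
  have hc₄0 : 0 < c₄ := by positivity
  have hc₅0 : 0 < c₅ := by positivity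
  refine ⟨c₁ + (c₂ + (c₃ + (c₄ + c₅))), by positivity, ?_⟩
  intro z₁ z₂ hz₁ hz₂ hne hz21
  set d := ‖z₁ - z₂‖ with hd_def
  set m := ‖z₁‖ with hm_def
  set b := ‖z₂‖ with hb_def
  have hd : 0 < d := norm_pos_iff.mpr (sub_ne_zero.mpr hne)
  have hm : 0 < m := norm_pos_iff.mpr hz₁
  have hb : 0 < b := norm_pos_iff.mpr hz₂
  have hz21' : b ≤ m := hz21
  have hdm2 : d ≤ 2*m := by
    have h1 : ‖z₁ - z₂‖ ≤ ‖z₁‖ + ‖z₂‖ := norm_sub_le _ _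
    simp only [← hd_def, ← hm_def, ← hb_def] at h1
    linarith
  have hmbd : m ≤ b + d := by
    have h1 : ‖z₁‖ ≤ ‖z₂‖ + ‖z₁ - z₂‖ := by
      calc ‖z₁‖ = ‖z₂ + (z₁ - z₂)‖ := by ring_nf
        _ ≤ ‖z₂‖ + ‖z₁ - z₂‖ := norm_add_le _ _
    simp only [← hd_def, ← hm_def, ← hb_def] at h1
    linarith
  set mp := m ^ (ν-1:ℝ) with hmp_def
  have hmp0 : 0 < mp := Real.rpow_pos_of_pos hm _
  set X := (1 + mp) * phi d with hX_def
  have hφd : d ≤ phi d := le_phi hd.le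
  have hφ0 : 0 ≤ phi d := phi_nonneg hd.le
  have hX0 : 0 ≤ X := by positivity
  have hmpdX : mp * d ≤ X := by
    rw [hX_def]
    nlinarith [mul_le_mul_of_nonneg_left hφd hmp0.le]
  have hdX : d ≤ X := by
    rw [hX_def]
    nlinarith [mul_nonneg hmp0.le hφ0]
  -- triangle inequalities
  have htri1 : ∀ s : ℂ, m ≤ ‖s‖ + ‖s - z₁‖ := by
    intro s
    have h1 : ‖z₁‖ ≤ ‖s‖ + ‖s - z₁‖ := by
      calc ‖z₁‖ = ‖s - (s - z₁)‖ := by ring_nf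
        _ ≤ ‖s‖ + ‖s - z₁‖ := norm_sub_le _ _
    simp only [← hm_def] at h1
    linarith
  have htri1' : ∀ s : ℂ, b ≤ ‖s‖ + ‖s - z₂‖ := by
    intro s
    have h1 : ‖z₂‖ ≤ ‖s‖ + ‖s - z₂‖ := by
      calc ‖z₂‖ = ‖s - (s - z₂)‖ := by ring_nf
        _ ≤ ‖s‖ + ‖s - z₂‖ := norm_sub_le _ _
    simp only [← hb_def] at h1
    linarith
  have htri2 : ∀ s : ℂ, ‖s - z₁‖ ≤ ‖s - z₂‖ + d := by
    intro s
    have h1 : ‖s - z₁‖ ≤ ‖s - z₂‖ + ‖z₁ - z₂‖ := by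
      calc ‖s - z₁‖ = ‖(s - z₂) - (z₁ - z₂)‖ := by ring_nf
        _ ≤ ‖s - z₂‖ + ‖z₁ - z₂‖ := norm_sub_le _ _
    simp only [← hd_def] at h1
    linarith
  have htri3 : ∀ s : ℂ, d ≤ ‖s - z₁‖ + ‖s - z₂‖ := by
    intro s
    have h1 : ‖z₁ - z₂‖ ≤ ‖s - z₂‖ + ‖s - z₁‖ := by
      calc ‖z₁ - z₂‖ = ‖(s - z₂) - (s - z₁)‖ := by ring_nf
        _ ≤ ‖s - z₂‖ + ‖s - z₁‖ := norm_sub_le _ _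
    simp only [← hd_def] at h1
    linarith
  have htri4 : ∀ s : ℂ, ‖s - z₁‖ ≤ ‖s‖ + m := by
    intro s
    have h1 : ‖s - z₁‖ ≤ ‖s‖ + ‖z₁‖ := norm_sub_le _ _
    simp only [← hm_def] at h1
    linarith
  have htri6 : ∀ s : ℂ, ‖s‖ ≤ m + ‖s - z₁‖ := by
    intro s
    have h1 : ‖s‖ ≤ ‖z₁‖ + ‖s - z₁‖ := by
      calc ‖s‖ = ‖z₁ + (s - z₁)‖ := by ring_nf
        _ ≤ ‖z₁‖ + ‖s - z₁‖ := norm_add_le _ _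
    simp only [← hm_def] at h1
    linarith
  have htri6' : ∀ s : ℂ, ‖s‖ ≤ b + ‖s - z₂‖ := by
    intro s
    have h1 : ‖s‖ ≤ ‖z₂‖ + ‖s - z₂‖ := by
      calc ‖s‖ = ‖z₂ + (s - z₂)‖ := by ring_nf
        _ ≤ ‖z₂‖ + ‖s - z₂‖ := norm_add_le _ _
    simp only [← hb_def] at h1
    linarith
  set G : ℂ → ℝ≥0∞ := fun s => ENNReal.ofReal (‖s‖ ^ (ν - 1) /
    (‖s - z₁‖ * ‖s - z₂‖)) with hG
  set K := 2*m + 2*d with hK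
  set S₁ := Metric.ball z₁ (d/2) with hS₁
  set S₂ := Metric.ball z₂ (d/2) with hS₂
  set Sa := Metric.ball (0:ℂ) (m/2) \ S₂ with hSa
  set Sb := ((Metric.ball z₁ K \ Metric.ball z₁ (d/2)) \ Metric.ball (0:ℂ) (m/2)) \ S₂ with hSb
  set Sc := {s : ℂ | K ≤ ‖s - z₁‖} with hSc
  -- membership unfoldings
  have hmem_ball : ∀ (c : ℂ) (r : ℝ) (s : ℂ), s ∈ Metric.ball c r ↔ ‖s - c‖ < r := by
    intro c r s; rw [mem_ball, Complex.dist_eq]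
  have hmem_ball0 : ∀ (r : ℝ) (s : ℂ), s ∈ Metric.ball (0:ℂ) r ↔ ‖s‖ < r := by
    intro r s; rw [mem_ball, Complex.dist_eq, sub_zero]
  have hcover : (univ : Set ℂ) ⊆ S₁ ∪ (S₂ ∪ (Sa ∪ (Sb ∪ Sc))) := by
    intro s _
    by_cases h1 : s ∈ S₁
    · exact Or.inl h1
    by_cases h2 : s ∈ S₂
    · exact Or.inr (Or.inl h2)
    by_cases hc : s ∈ Sc
    · exact Or.inr (Or.inr (Or.inr (Or.inr hc)))
    by_cases h0 : s ∈ Metric.ball (0:ℂ) (m/2)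
    · exact Or.inr (Or.inr (Or.inl ⟨h0, h2⟩))
    · refine Or.inr (Or.inr (Or.inr (Or.inl ⟨⟨⟨?_, h1⟩, h0⟩, h2⟩)))
      rw [hmem_ball]
      rw [hSc, mem_setOf_eq] at hc
      push_neg at hc
      exact hc
  have hhalf : ∀ r : ℝ, 0 < r → (r/2)^(ν-1) ≤ 2 * r^(ν-1) := by
    intro r hr
    rw [Real.div_rpow hr.le (by norm_num : (0:ℝ) ≤ 2)]
    have h2 : (1:ℝ)/2 ≤ (2:ℝ)^(ν-1) := by
      calc (1:ℝ)/2 = (2:ℝ)^(-1:ℝ) := by rw [Real.rpow_neg_one]; norm_num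
        _ ≤ (2:ℝ)^(ν-1) := Real.rpow_le_rpow_of_exponent_le one_le_two (by linarith)
    calc r^(ν-1)/(2:ℝ)^(ν-1) ≤ r^(ν-1)/(1/2) := by
          gcongr
      _ = 2 * r^(ν-1) := by ring
  have hBa : ENNReal.ofReal d * ∫⁻ s in Sa, G s ≤ ENNReal.ofReal (c₃ * X) := by
    have hSa_meas : MeasurableSet Sa := measurableSet_ball.diff measurableSet_ball
    have hpta : ∀ s ∈ Sa, G s ≤ ENNReal.ofReal (16/m^2)
        * ENNReal.ofReal (‖s - 0‖ ^ (ν-1)) := by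
      intro s hs
      obtain ⟨hs0, hs2⟩ := hs
      rw [hmem_ball0] at hs0
      have hr2' : d/2 ≤ ‖s - z₂‖ := by
        by_contra hcon
        push_neg at hcon
        exact hs2 ((hmem_ball z₂ (d/2) s).mpr hcon)
      have hr1 : m/2 ≤ ‖s - z₁‖ := by have := htri1 s; linarith
      have hr2 : m/8 ≤ ‖s - z₂‖ := by
        have h1 := htri2 s
        rcases le_total d (3*m/8) with hcd | hcd
        · linarith
        · linarith
      simp only [hG, sub_zero]
      rw [← ENNReal.ofReal_mul (by positivity)]
      apply ENNReal.ofReal_le_ofReal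
      have hnum : (0:ℝ) ≤ ‖s‖ ^ (ν-1) := Real.rpow_nonneg (norm_nonneg s) _
      calc ‖s‖ ^ (ν-1) / (‖s - z₁‖ * ‖s - z₂‖)
          ≤ ‖s‖ ^ (ν-1) / ((m/2) * (m/8)) := by
            apply div_le_div_of_nonneg_left hnum (by positivity)
            exact mul_le_mul hr1 hr2 (by positivity) (le_trans (by positivity) hr1)
        _ = 16/m^2 * ‖s‖ ^ (ν-1) := by field_simp; ring
    calc ENNReal.ofReal d * ∫⁻ s in Sa, G s
        ≤ ENNReal.ofReal d * ∫⁻ s in Sa, (ENNReal.ofReal (16/m^2)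
            * ENNReal.ofReal (‖s - 0‖ ^ (ν-1))) :=
          mul_le_mul_right (setLIntegral_mono' hSa_meas hpta) _
      _ = ENNReal.ofReal d * (ENNReal.ofReal (16/m^2)
            * ∫⁻ s in Sa, ENNReal.ofReal (‖s - 0‖ ^ (ν-1))) := by
          rw [lintegral_const_mul' _ _ ENNReal.ofReal_ne_top]
      _ ≤ ENNReal.ofReal d * (ENNReal.ofReal (16/m^2)
            * ENNReal.ofReal (Cball (ν-1) * (m/2) ^ ((ν-1) + 2))) := by
          gcongr
          calc ∫⁻ s in Sa, ENNReal.ofReal (‖s - 0‖ ^ (ν-1))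
              ≤ ∫⁻ s in Metric.ball (0:ℂ) (m/2), ENNReal.ofReal (‖s - 0‖ ^ (ν-1)) :=
                lintegral_mono_set diff_subset
            _ ≤ _ := lint_ball 0 (by linarith) (by linarith) (by positivity)
      _ ≤ ENNReal.ofReal (c₃ * X) := by
          rw [← ENNReal.ofReal_mul (by positivity), ← ENNReal.ofReal_mul hd.le]
          apply ENNReal.ofReal_le_ofReal
          have e0 : (ν - 1) + 2 = ν + 1 := by ring
          rw [e0]
          have e1 : (m/2) ^ (ν+1) ≤ m ^ (ν+1) :=
            Real.rpow_le_rpow (by positivity) (by linarith) (by linarith)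
          have e2 : m ^ (ν+1) = mp * m^2 := by
            rw [hmp_def, ← Real.rpow_natCast m 2, ← Real.rpow_add hm]
            norm_num
            congr 1
            ring
          have hbound : d * (16/m^2 * (Cball (ν-1) * (m/2)^(ν+1))) ≤ c₃ * (mp * d) := by
            rw [hc₃]
            calc d * (16/m^2 * (Cball (ν-1) * (m/2)^(ν+1)))
                ≤ d * (16/m^2 * (Cball (ν-1) * m^(ν+1))) := by gcongr
              _ = 16*Cball (ν-1) * (mp*d) := by rw [e2]; field_simp
          have h2 : c₃ * (mp*d) ≤ c₃ * X := mul_le_mul_of_nonneg_left hmpdX hc₃0.le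
          linarith
  have hBc : ENNReal.ofReal d * ∫⁻ s in Sc, G s ≤ ENNReal.ofReal (c₅ * X) := by
    have hSc_meas : MeasurableSet Sc := measurableSet_ge z₁ K
    have hptc : ∀ s ∈ Sc, G s ≤ ENNReal.ofReal 4
        * ENNReal.ofReal (‖s - z₁‖ ^ (ν-3)) := by
      intro s hs
      rw [hSc, mem_setOf_eq] at hs
      have hKpos : (0:ℝ) < K := by rw [hK]; linarith
      have hr₁pos : 0 < ‖s - z₁‖ := lt_of_lt_of_le hKpos hs
      have hKm : m ≤ ‖s - z₁‖ / 2 := by rw [hK] at hs; linarith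
      have hKd : d ≤ ‖s - z₁‖ / 2 := by rw [hK] at hs; linarith
      have hsabs : ‖s - z₁‖ / 2 ≤ ‖s‖ := by
        have := htri4 s; linarith
      have hr2 : ‖s - z₁‖ / 2 ≤ ‖s - z₂‖ := by
        have := htri2 s; linarith
      simp only [hG]
      rw [← ENNReal.ofReal_mul (by norm_num)]
      apply ENNReal.ofReal_le_ofReal
      have ha : (‖s - z₁‖/2)^(ν-1) ≤ 2 * ‖s - z₁‖^(ν-1) :=
        hhalf _ hr₁pos
      calc ‖s‖ ^ (ν-1) / (‖s - z₁‖ * ‖s - z₂‖)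
          ≤ (‖s - z₁‖/2) ^ (ν-1)
              / (‖s - z₁‖ * (‖s - z₁‖/2)) := by
            apply div_le_div₀ (by positivity)
              (Real.rpow_le_rpow_of_nonpos (by positivity) hsabs (by linarith))
              (by positivity)
              (mul_le_mul_of_nonneg_left hr2 hr₁pos.le)
        _ ≤ (2 * ‖s - z₁‖^(ν-1))
              / (‖s - z₁‖ * (‖s - z₁‖/2)) :=
            div_le_div₀ (by positivity) ha (by positivity) le_rfl
        _ = 4 * ‖s - z₁‖ ^ (ν-3) := by
            have e1 : ‖s - z₁‖^(ν-3)
                = ‖s - z₁‖^(ν-1) / ‖s - z₁‖^(2:ℕ) := by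
              rw [← Real.rpow_natCast (‖s - z₁‖) 2, ← Real.rpow_sub hr₁pos]
              norm_num
              congr 1
              ring
            rw [e1]
            field_simp
            ring
    calc ENNReal.ofReal d * ∫⁻ s in Sc, G s
        ≤ ENNReal.ofReal d * ∫⁻ s in Sc, (ENNReal.ofReal 4
            * ENNReal.ofReal (‖s - z₁‖ ^ (ν-3))) :=
          mul_le_mul_right (setLIntegral_mono' hSc_meas hptc) _
      _ = ENNReal.ofReal d * (ENNReal.ofReal 4
            * ∫⁻ s in Sc, ENNReal.ofReal (‖s - z₁‖ ^ (ν-3))) := by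
          rw [lintegral_const_mul' _ _ ENNReal.ofReal_ne_top]
      _ ≤ ENNReal.ofReal d * (ENNReal.ofReal 4
            * ENNReal.ofReal (Ctail (ν-3) * K ^ ((ν-3) + 2))) := by
          gcongr
          exact lint_tail z₁ (by linarith) (by rw [hK]; linarith)
      _ ≤ ENNReal.ofReal (c₅ * X) := by
          rw [← ENNReal.ofReal_mul (by norm_num), ← ENNReal.ofReal_mul hd.le]
          apply ENNReal.ofReal_le_ofReal
          have e0 : (ν - 3) + 2 = ν - 1 := by ring
          rw [e0]
          have eK : K ^ (ν-1) ≤ mp := by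
            have h1 : K ^ (ν-1) ≤ (2*m) ^ (ν-1) :=
              Real.rpow_le_rpow_of_nonpos (by linarith) (by rw [hK]; linarith) (by linarith)
            have h2 : (2*m) ^ (ν-1) = (2:ℝ)^(ν-1) * m^(ν-1) :=
              Real.mul_rpow (by norm_num) hm.le
            have h3 : (2:ℝ)^(ν-1) ≤ 1 :=
              Real.rpow_le_one_of_one_le_of_nonpos one_le_two (by linarith)
            have h4 : (2:ℝ)^(ν-1) * m^(ν-1) ≤ 1 * m^(ν-1) :=
              mul_le_mul_of_nonneg_right h3 (by positivity)
            rw [hmp_def]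
            calc K ^ (ν-1) ≤ (2*m)^(ν-1) := h1
              _ = (2:ℝ)^(ν-1) * m^(ν-1) := h2
              _ ≤ 1 * m^(ν-1) := h4
              _ = m^(ν-1) := one_mul _
          have hbound : d * (4 * (Ctail (ν-3) * K^(ν-1))) ≤ c₅ * (mp * d) := by
            rw [hc₅]
            calc d * (4 * (Ctail (ν-3) * K^(ν-1))) ≤ d * (4 * (Ctail (ν-3) * mp)) := by gcongr
              _ = 4*Ctail (ν-3) * (mp*d) := by ring
          have h2 : c₅ * (mp*d) ≤ c₅ * X := mul_le_mul_of_nonneg_left hmpdX hc₅0.le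
          linarith
  have hBb : ENNReal.ofReal d * ∫⁻ s in Sb, G s ≤ ENNReal.ofReal (c₄ * X) := by
    have hSb_meas : MeasurableSet Sb :=
      ((measurableSet_ball.diff measurableSet_ball).diff measurableSet_ball).diff measurableSet_ball
    have hptb : ∀ s ∈ Sb, G s ≤ ENNReal.ofReal (6*mp)
        * ENNReal.ofReal (‖s - z₁‖ ^ (-2:ℝ)) := by
      intro s hs
      obtain ⟨⟨⟨hsK, hs1⟩, hs0⟩, hs2⟩ := hs
      have hr₁ : d/2 ≤ ‖s - z₁‖ := by
        by_contra hcon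
        push_neg at hcon
        exact hs1 ((hmem_ball z₁ (d/2) s).mpr hcon)
      have hr₁pos : 0 < ‖s - z₁‖ := lt_of_lt_of_le (by linarith) hr₁
      have hr2' : d/2 ≤ ‖s - z₂‖ := by
        by_contra hcon
        push_neg at hcon
        exact hs2 ((hmem_ball z₂ (d/2) s).mpr hcon)
      have hs0' : m/2 ≤ ‖s‖ := by
        by_contra hcon
        push_neg at hcon
        exact hs0 ((hmem_ball0 (m/2) s).mpr hcon)
      have hr2 : ‖s - z₁‖/3 ≤ ‖s - z₂‖ := by
        have h1 := htri2 s
        rcases le_total (‖s - z₁‖) (3/2*d) with hcd | hcd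
        · linarith
        · linarith
      have hsa : ‖s‖ ^ (ν-1) ≤ 2*mp := by
        have h1 : ‖s‖ ^ (ν-1) ≤ (m/2) ^ (ν-1) :=
          Real.rpow_le_rpow_of_nonpos (by positivity) hs0' (by linarith)
        have h2 := hhalf m hm
        rw [hmp_def]
        linarith
      simp only [hG]
      rw [← ENNReal.ofReal_mul (by positivity)]
      apply ENNReal.ofReal_le_ofReal
      calc ‖s‖ ^ (ν-1) / (‖s - z₁‖ * ‖s - z₂‖)
          ≤ (2*mp) / (‖s - z₁‖ * (‖s - z₁‖/3)) := by
            apply div_le_div₀ (by positivity) hsa (by positivity)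
            exact mul_le_mul_of_nonneg_left hr2 hr₁pos.le
        _ = 6*mp * ‖s - z₁‖ ^ (-2:ℝ) := by
            have e1 : ‖s - z₁‖ ^ (-2:ℝ) = (‖s - z₁‖^(2:ℕ))⁻¹ := by
              rw [← Real.rpow_natCast (‖s - z₁‖) 2, ← Real.rpow_neg hr₁pos.le]
              norm_num
            rw [e1]
            field_simp
            ring
    have hsub : Sb ⊆ {s : ℂ | d/2 ≤ ‖s - z₁‖} ∩ Metric.ball z₁ K := by
      intro s hs
      obtain ⟨⟨⟨hsK, hs1⟩, _⟩, _⟩ := hs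
      refine ⟨?_, hsK⟩
      rw [mem_setOf_eq]
      by_contra hcon
      push_neg at hcon
      exact hs1 ((hmem_ball z₁ (d/2) s).mpr hcon)
    calc ENNReal.ofReal d * ∫⁻ s in Sb, G s
        ≤ ENNReal.ofReal d * ∫⁻ s in Sb, (ENNReal.ofReal (6*mp)
            * ENNReal.ofReal (‖s - z₁‖ ^ (-2:ℝ))) :=
          mul_le_mul_right (setLIntegral_mono' hSb_meas hptb) _
      _ = ENNReal.ofReal d * (ENNReal.ofReal (6*mp)
            * ∫⁻ s in Sb, ENNReal.ofReal (‖s - z₁‖ ^ (-2:ℝ))) := by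
          rw [lintegral_const_mul' _ _ ENNReal.ofReal_ne_top]
      _ ≤ ENNReal.ofReal d * (ENNReal.ofReal (6*mp)
            * ENNReal.ofReal (48 * (1 + Real.log (K / (d/2))))) := by
          gcongr
          calc ∫⁻ s in Sb, ENNReal.ofReal (‖s - z₁‖ ^ (-2:ℝ))
              ≤ ∫⁻ s in {s : ℂ | d/2 ≤ ‖s - z₁‖} ∩ Metric.ball z₁ K,
                  ENNReal.ofReal (‖s - z₁‖ ^ (-2:ℝ)) := lintegral_mono_set hsub
            _ ≤ _ := lint_log z₁ (by linarith) (by rw [hK]; linarith)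
      _ ≤ ENNReal.ofReal (c₄ * X) := by
          rw [← ENNReal.ofReal_mul (by positivity), ← ENNReal.ofReal_mul hd.le]
          apply ENNReal.ofReal_le_ofReal
          have earg : K / (d/2) = (4*m+4*d)/d := by
            rw [hK]; field_simp; ring
          rw [earg]
          have hacc := log_account hm hd hν0 hν1
          rw [← hmp_def, ← hX_def] at hacc
          calc d * (6*mp * (48 * (1 + Real.log ((4*m+4*d)/d))))
              = 288 * (mp * (d * (1 + Real.log ((4*m+4*d)/d)))) := by ring
            _ ≤ 288 * ((5 + 1/(1-ν)) * X) :=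
                mul_le_mul_of_nonneg_left hacc (by norm_num)
            _ = c₄ * X := by rw [hc₄]; ring
  have hB1 : ENNReal.ofReal d * ∫⁻ s in S₁, G s ≤ ENNReal.ofReal (c₁ * X) := by
    rcases le_or_gt m d with hcase | hcase
    · -- small case : m ≤ d
      have hpt : ∀ s ∈ S₁, G s ≤ ENNReal.ofReal (2/d)
          * (ENNReal.ofReal (‖s - 0‖ ^ (ν-2))
            + ENNReal.ofReal (‖s - z₁‖ ^ (ν-2))) := by
        intro s hs
        rw [hS₁, hmem_ball] at hs
        have hr2 : d/2 ≤ ‖s - z₂‖ := by have := htri3 s; linarith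
        have hppw : ‖s‖ ^ (ν-1) / ‖s - z₁‖
            ≤ ‖s‖ ^ (ν-2) + ‖s - z₁‖ ^ (ν-2) := by
          have := pw (norm_nonneg s) (norm_nonneg (s - z₁))
            (show ν-1 < 0 by linarith)
          rw [show ν-1-1 = ν-2 by ring] at this
          exact this
        have hmain : ‖s‖ ^ (ν-1) / (‖s - z₁‖ * ‖s - z₂‖)
            ≤ (2/d) * (‖s‖ ^ (ν-2) + ‖s - z₁‖ ^ (ν-2)) := by
          have h1 : ‖s‖ ^ (ν-1) / (‖s - z₁‖ * ‖s - z₂‖)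
              = (‖s‖ ^ (ν-1) / ‖s - z₁‖) / ‖s - z₂‖ := by
            rw [div_div]
          rw [h1]
          calc (‖s‖ ^ (ν-1) / ‖s - z₁‖) / ‖s - z₂‖
              ≤ (‖s‖ ^ (ν-1) / ‖s - z₁‖) / (d/2) := by
                apply div_le_div_of_nonneg_left (by positivity) (by positivity) hr2
            _ = (2/d) * (‖s‖ ^ (ν-1) / ‖s - z₁‖) := by
                field_simp
            _ ≤ (2/d) * (‖s‖ ^ (ν-2) + ‖s - z₁‖ ^ (ν-2)) := by
                apply mul_le_mul_of_nonneg_left hppw (by positivity)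
        simp only [hG, sub_zero]
        calc ENNReal.ofReal (‖s‖ ^ (ν-1)
              / (‖s - z₁‖ * ‖s - z₂‖))
            ≤ ENNReal.ofReal ((2/d) * (‖s‖ ^ (ν-2)
                + ‖s - z₁‖ ^ (ν-2))) := ENNReal.ofReal_le_ofReal hmain
          _ = ENNReal.ofReal (2/d) * (ENNReal.ofReal (‖s‖ ^ (ν-2))
                + ENNReal.ofReal (‖s - z₁‖ ^ (ν-2))) := by
              rw [ENNReal.ofReal_mul (by positivity), ENNReal.ofReal_add (by positivity)
                (by positivity)]
      have hsub0 : S₁ ⊆ Metric.ball (0:ℂ) (2*d) := by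
        intro s hs
        rw [hS₁, hmem_ball] at hs
        rw [hmem_ball0]
        have := htri6 s
        linarith
      calc ENNReal.ofReal d * ∫⁻ s in S₁, G s
          ≤ ENNReal.ofReal d * ∫⁻ s in S₁, (ENNReal.ofReal (2/d)
              * (ENNReal.ofReal (‖s - 0‖ ^ (ν-2))
                + ENNReal.ofReal (‖s - z₁‖ ^ (ν-2)))) :=
            mul_le_mul_right (setLIntegral_mono' measurableSet_ball hpt) _
        _ = ENNReal.ofReal d * (ENNReal.ofReal (2/d)
              * ((∫⁻ s in S₁, ENNReal.ofReal (‖s - 0‖ ^ (ν-2)))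
                + ∫⁻ s in S₁, ENNReal.ofReal (‖s - z₁‖ ^ (ν-2)))) := by
            rw [lintegral_const_mul' _ _ ENNReal.ofReal_ne_top,
              lintegral_add_left (measurable_w 0 (ν-2))]
        _ ≤ ENNReal.ofReal d * (ENNReal.ofReal (2/d)
              * (ENNReal.ofReal (Cball (ν-2) * (2*d) ^ ((ν-2) + 2))
                + ENNReal.ofReal (Cball (ν-2) * (d/2) ^ ((ν-2) + 2)))) := by
            gcongr
            · calc ∫⁻ s in S₁, ENNReal.ofReal (‖s - 0‖ ^ (ν-2))
                  ≤ ∫⁻ s in Metric.ball (0:ℂ) (2*d),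
                      ENNReal.ofReal (‖s - 0‖ ^ (ν-2)) := lintegral_mono_set hsub0
                _ ≤ _ := lint_ball 0 (by linarith) (by linarith) (by positivity)
            · exact lint_ball z₁ (by linarith) (by linarith) (by positivity)
        _ ≤ ENNReal.ofReal (c₁ * X) := by
            rw [← ENNReal.ofReal_add (by positivity) (by positivity),
              ← ENNReal.ofReal_mul (by positivity), ← ENNReal.ofReal_mul hd.le]
            apply ENNReal.ofReal_le_ofReal
            have e0 : (ν - 2) + 2 = ν := by ring
            rw [e0]
            have e1 : (2*d) ^ ν ≤ 2 * d^ν := by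
              rw [Real.mul_rpow (by norm_num) hd.le]
              have h2 : (2:ℝ)^ν ≤ 2 := by
                calc (2:ℝ)^ν ≤ (2:ℝ)^(1:ℝ) :=
                      Real.rpow_le_rpow_of_exponent_le one_le_two (by linarith)
                  _ = 2 := Real.rpow_one 2
              exact mul_le_mul_of_nonneg_right h2 (by positivity)
            have e2 : (d/2) ^ ν ≤ d^ν :=
              Real.rpow_le_rpow (by positivity) (by linarith) (by linarith)
            have e3 : d ^ ν = d ^ (ν-1) * d := by
              have := Real.rpow_add hd (ν-1) 1
              rw [show ν-1+1 = ν by ring, Real.rpow_one] at this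
              exact this
            have e4 : d ^ (ν-1) ≤ mp := by
              rw [hmp_def]
              exact Real.rpow_le_rpow_of_nonpos hm hcase (by linarith)
            have hfin : d * (2/d * (Cball (ν-2) * (2*d)^ν + Cball (ν-2) * (d/2)^ν))
                ≤ 6 * Cball (ν-2) * (mp * d) := by
              have h5 : Cball (ν-2) * (2*d)^ν + Cball (ν-2) * (d/2)^ν
                  ≤ Cball (ν-2) * (3 * d^ν) := by nlinarith
              have h6 : d * (2/d * (Cball (ν-2) * (3 * d^ν))) = 6 * Cball (ν-2) * d^ν := by
                field_simp
                ring
              have h7 : d * (2/d * (Cball (ν-2) * (2*d)^ν + Cball (ν-2) * (d/2)^ν))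
                  ≤ d * (2/d * (Cball (ν-2) * (3 * d^ν))) := by
                apply mul_le_mul_of_nonneg_left ?_ hd.le
                apply mul_le_mul_of_nonneg_left h5 (by positivity)
              rw [h6] at h7
              have h8 : (6:ℝ) * Cball (ν-2) * d^ν ≤ 6 * Cball (ν-2) * (mp * d) := by
                rw [e3]
                have h8a : d ^ (ν-1) * d ≤ mp * d := mul_le_mul_of_nonneg_right e4 hd.le
                apply mul_le_mul_of_nonneg_left h8a (by positivity)
              linarith
            have h9 : 6 * Cball (ν-2) * (mp * d) ≤ c₁ * X := by
              have h10 : (6:ℝ) * Cball (ν-2) ≤ c₁ := by rw [hc₁]; linarith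
              have h12 : (0:ℝ) ≤ mp * d := by positivity
              exact mul_le_mul h10 hmpdX h12 hc₁0.le
            exact le_trans hfin h9
    · -- big case : d < m
      have hpt : ∀ s ∈ S₁, G s ≤ ENNReal.ofReal ((m/2)^(ν-1)/(d/2))
          * ENNReal.ofReal (‖s - z₁‖ ^ (-1:ℝ)) := by
        intro s hs
        rw [hS₁, hmem_ball] at hs
        have hr2 : d/2 ≤ ‖s - z₂‖ := by have := htri3 s; linarith
        have hs0' : m/2 ≤ ‖s‖ := by have := htri1 s; linarith
        have hsa : ‖s‖ ^ (ν-1) ≤ (m/2) ^ (ν-1) :=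
          Real.rpow_le_rpow_of_nonpos (by positivity) hs0' (by linarith)
        simp only [hG]
        rw [← ENNReal.ofReal_mul (by positivity)]
        apply ENNReal.ofReal_le_ofReal
        have := div3 (w := ‖s‖ ^ (ν-1)) (y := ‖s - z₁‖)
          (z := ‖s - z₂‖) (A := (m/2)^(ν-1)) (B := d/2)
          (by positivity) hsa (norm_nonneg _) hr2 (by positivity)
        rwa [← Real.rpow_neg_one (‖s - z₁‖)] at this
      calc ENNReal.ofReal d * ∫⁻ s in S₁, G s
          ≤ ENNReal.ofReal d * ∫⁻ s in S₁, (ENNReal.ofReal ((m/2)^(ν-1)/(d/2))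
              * ENNReal.ofReal (‖s - z₁‖ ^ (-1:ℝ))) :=
            mul_le_mul_right (setLIntegral_mono' measurableSet_ball hpt) _
        _ = ENNReal.ofReal d * (ENNReal.ofReal ((m/2)^(ν-1)/(d/2))
              * ∫⁻ s in S₁, ENNReal.ofReal (‖s - z₁‖ ^ (-1:ℝ))) := by
            rw [lintegral_const_mul' _ _ ENNReal.ofReal_ne_top]
        _ ≤ ENNReal.ofReal d * (ENNReal.ofReal ((m/2)^(ν-1)/(d/2))
              * ENNReal.ofReal (Cball (-1) * (d/2) ^ ((-1:ℝ) + 2))) := by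
            gcongr
            exact lint_ball z₁ (by norm_num) (by norm_num) (by positivity)
        _ ≤ ENNReal.ofReal (c₁ * X) := by
            rw [← ENNReal.ofReal_mul (by positivity), ← ENNReal.ofReal_mul hd.le]
            apply ENNReal.ofReal_le_ofReal
            have e0 : (-1:ℝ) + 2 = 1 := by norm_num
            rw [e0, Real.rpow_one]
            have e1 : (m/2)^(ν-1) ≤ 2 * mp := by
              have := hhalf m hm
              rw [hmp_def]
              linarith
            have hfin : d * ((m/2)^(ν-1)/(d/2) * (Cball (-1) * (d/2)))
                = Cball (-1) * ((m/2)^(ν-1) * d) := by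
              field_simp
            rw [hfin]
            have h8 : Cball (-1) * ((m/2)^(ν-1) * d) ≤ Cball (-1) * (2 * (mp * d)) := by
              apply mul_le_mul_of_nonneg_left ?_ hCb1.le
              have := mul_le_mul_of_nonneg_right e1 hd.le
              calc (m/2)^(ν-1) * d ≤ 2 * mp * d := this
                _ = 2 * (mp * d) := by ring
            have h9 : Cball (-1) * (2 * (mp * d)) ≤ 2 * Cball (-1) * X := by
              calc Cball (-1) * (2 * (mp * d)) = 2 * Cball (-1) * (mp * d) := by ring
                _ ≤ 2 * Cball (-1) * X := mul_le_mul_of_nonneg_left hmpdX (by positivity)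
            have h10 : (2:ℝ) * Cball (-1) * X ≤ c₁ * X := by
              rw [hc₁]
              apply mul_le_mul_of_nonneg_right ?_ hX0
              linarith
            exact le_trans h8 (le_trans h9 h10)
  have hB2 : ENNReal.ofReal d * ∫⁻ s in S₂, G s ≤ ENNReal.ofReal (c₂ * X) := by
    rcases le_or_gt b d with hcase | hcase
    · -- small case : b ≤ d
      have hpt : ∀ s ∈ S₂, G s ≤ ENNReal.ofReal (2/d)
          * (ENNReal.ofReal (‖s - 0‖ ^ (ν-2))
            + ENNReal.ofReal (‖s - z₂‖ ^ (ν-2))) := by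
        intro s hs
        rw [hS₂, hmem_ball] at hs
        have hr1 : d/2 ≤ ‖s - z₁‖ := by have := htri3 s; linarith
        have hppw : ‖s‖ ^ (ν-1) / ‖s - z₂‖
            ≤ ‖s‖ ^ (ν-2) + ‖s - z₂‖ ^ (ν-2) := by
          have := pw (norm_nonneg s) (norm_nonneg (s - z₂))
            (show ν-1 < 0 by linarith)
          rw [show ν-1-1 = ν-2 by ring] at this
          exact this
        have hmain : ‖s‖ ^ (ν-1) / (‖s - z₁‖ * ‖s - z₂‖)
            ≤ (2/d) * (‖s‖ ^ (ν-2) + ‖s - z₂‖ ^ (ν-2)) := by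
          have h1 : ‖s‖ ^ (ν-1) / (‖s - z₁‖ * ‖s - z₂‖)
              = (‖s‖ ^ (ν-1) / ‖s - z₂‖) / ‖s - z₁‖ := by
            rw [div_div, mul_comm]
          rw [h1]
          calc (‖s‖ ^ (ν-1) / ‖s - z₂‖) / ‖s - z₁‖
              ≤ (‖s‖ ^ (ν-1) / ‖s - z₂‖) / (d/2) := by
                apply div_le_div_of_nonneg_left (by positivity) (by positivity) hr1
            _ = (2/d) * (‖s‖ ^ (ν-1) / ‖s - z₂‖) := by
                field_simp
            _ ≤ (2/d) * (‖s‖ ^ (ν-2) + ‖s - z₂‖ ^ (ν-2)) := by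
                apply mul_le_mul_of_nonneg_left hppw (by positivity)
        simp only [hG, sub_zero]
        calc ENNReal.ofReal (‖s‖ ^ (ν-1)
              / (‖s - z₁‖ * ‖s - z₂‖))
            ≤ ENNReal.ofReal ((2/d) * (‖s‖ ^ (ν-2)
                + ‖s - z₂‖ ^ (ν-2))) := ENNReal.ofReal_le_ofReal hmain
          _ = ENNReal.ofReal (2/d) * (ENNReal.ofReal (‖s‖ ^ (ν-2))
                + ENNReal.ofReal (‖s - z₂‖ ^ (ν-2))) := by
              rw [ENNReal.ofReal_mul (by positivity), ENNReal.ofReal_add (by positivity)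
                (by positivity)]
      have hsub0 : S₂ ⊆ Metric.ball (0:ℂ) (2*d) := by
        intro s hs
        rw [hS₂, hmem_ball] at hs
        rw [hmem_ball0]
        have := htri6' s
        linarith
      calc ENNReal.ofReal d * ∫⁻ s in S₂, G s
          ≤ ENNReal.ofReal d * ∫⁻ s in S₂, (ENNReal.ofReal (2/d)
              * (ENNReal.ofReal (‖s - 0‖ ^ (ν-2))
                + ENNReal.ofReal (‖s - z₂‖ ^ (ν-2)))) :=
            mul_le_mul_right (setLIntegral_mono' measurableSet_ball hpt) _
        _ = ENNReal.ofReal d * (ENNReal.ofReal (2/d)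
              * ((∫⁻ s in S₂, ENNReal.ofReal (‖s - 0‖ ^ (ν-2)))
                + ∫⁻ s in S₂, ENNReal.ofReal (‖s - z₂‖ ^ (ν-2)))) := by
            rw [lintegral_const_mul' _ _ ENNReal.ofReal_ne_top,
              lintegral_add_left (measurable_w 0 (ν-2))]
        _ ≤ ENNReal.ofReal d * (ENNReal.ofReal (2/d)
              * (ENNReal.ofReal (Cball (ν-2) * (2*d) ^ ((ν-2) + 2))
                + ENNReal.ofReal (Cball (ν-2) * (d/2) ^ ((ν-2) + 2)))) := by
            gcongr
            · calc ∫⁻ s in S₂, ENNReal.ofReal (‖s - 0‖ ^ (ν-2))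
                  ≤ ∫⁻ s in Metric.ball (0:ℂ) (2*d),
                      ENNReal.ofReal (‖s - 0‖ ^ (ν-2)) := lintegral_mono_set hsub0
                _ ≤ _ := lint_ball 0 (by linarith) (by linarith) (by positivity)
            · exact lint_ball z₂ (by linarith) (by linarith) (by positivity)
        _ ≤ ENNReal.ofReal (c₂ * X) := by
            rw [← ENNReal.ofReal_add (by positivity) (by positivity),
              ← ENNReal.ofReal_mul (by positivity), ← ENNReal.ofReal_mul hd.le]
            apply ENNReal.ofReal_le_ofReal
            have e0 : (ν - 2) + 2 = ν := by ring
            rw [e0]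
            have e1 : (2*d) ^ ν ≤ 2 * d^ν := by
              rw [Real.mul_rpow (by norm_num) hd.le]
              have h2 : (2:ℝ)^ν ≤ 2 := by
                calc (2:ℝ)^ν ≤ (2:ℝ)^(1:ℝ) :=
                      Real.rpow_le_rpow_of_exponent_le one_le_two (by linarith)
                  _ = 2 := Real.rpow_one 2
              exact mul_le_mul_of_nonneg_right h2 (by positivity)
            have e2 : (d/2) ^ ν ≤ d^ν :=
              Real.rpow_le_rpow (by positivity) (by linarith) (by linarith)
            have e3 : d ^ ν = d ^ (ν-1) * d := by
              have := Real.rpow_add hd (ν-1) 1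
              rw [show ν-1+1 = ν by ring, Real.rpow_one] at this
              exact this
            have e4 : d ^ (ν-1) ≤ 2 * mp := by
              have hmd2 : m/2 ≤ d := by linarith
              have h1 : d ^ (ν-1) ≤ (m/2) ^ (ν-1) :=
                Real.rpow_le_rpow_of_nonpos (by positivity) hmd2 (by linarith)
              have h2 := hhalf m hm
              rw [hmp_def]
              linarith
            have hfin : d * (2/d * (Cball (ν-2) * (2*d)^ν + Cball (ν-2) * (d/2)^ν))
                ≤ 12 * Cball (ν-2) * (mp * d) := by
              have h5 : Cball (ν-2) * (2*d)^ν + Cball (ν-2) * (d/2)^ν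
                  ≤ Cball (ν-2) * (3 * d^ν) := by nlinarith
              have h6 : d * (2/d * (Cball (ν-2) * (3 * d^ν))) = 6 * Cball (ν-2) * d^ν := by
                field_simp
                ring
              have h7 : d * (2/d * (Cball (ν-2) * (2*d)^ν + Cball (ν-2) * (d/2)^ν))
                  ≤ d * (2/d * (Cball (ν-2) * (3 * d^ν))) := by
                apply mul_le_mul_of_nonneg_left ?_ hd.le
                apply mul_le_mul_of_nonneg_left h5 (by positivity)
              rw [h6] at h7
              have h8 : (6:ℝ) * Cball (ν-2) * d^ν ≤ 12 * Cball (ν-2) * (mp * d) := by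
                rw [e3]
                have h8a : d ^ (ν-1) * d ≤ 2 * mp * d := mul_le_mul_of_nonneg_right e4 hd.le
                calc (6:ℝ) * Cball (ν-2) * (d ^ (ν-1) * d)
                    ≤ 6 * Cball (ν-2) * (2 * mp * d) :=
                      mul_le_mul_of_nonneg_left h8a (by positivity)
                  _ = 12 * Cball (ν-2) * (mp * d) := by ring
              linarith
            have h9 : 12 * Cball (ν-2) * (mp * d) ≤ c₂ * X := by
              have h10 : (12:ℝ) * Cball (ν-2) ≤ c₂ := by rw [hc₂]; linarith
              have h12 : (0:ℝ) ≤ mp * d := by positivity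
              exact mul_le_mul h10 hmpdX h12 hc₂0.le
            exact le_trans hfin h9
    · -- big case : d < b
      have hpt : ∀ s ∈ S₂, G s ≤ ENNReal.ofReal ((b/2)^(ν-1)/(d/2))
          * ENNReal.ofReal (‖s - z₂‖ ^ (-1:ℝ)) := by
        intro s hs
        rw [hS₂, hmem_ball] at hs
        have hr1 : d/2 ≤ ‖s - z₁‖ := by have := htri3 s; linarith
        have hs0' : b/2 ≤ ‖s‖ := by have := htri1' s; linarith
        have hsa : ‖s‖ ^ (ν-1) ≤ (b/2) ^ (ν-1) :=
          Real.rpow_le_rpow_of_nonpos (by positivity) hs0' (by linarith)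
        simp only [hG]
        rw [← ENNReal.ofReal_mul (by positivity)]
        apply ENNReal.ofReal_le_ofReal
        have hcomm : ‖s - z₁‖ * ‖s - z₂‖
            = ‖s - z₂‖ * ‖s - z₁‖ := mul_comm _ _
        rw [hcomm]
        have := div3 (w := ‖s‖ ^ (ν-1)) (y := ‖s - z₂‖)
          (z := ‖s - z₁‖) (A := (b/2)^(ν-1)) (B := d/2)
          (by positivity) hsa (norm_nonneg _) hr1 (by positivity)
        rwa [← Real.rpow_neg_one (‖s - z₂‖)] at this
      calc ENNReal.ofReal d * ∫⁻ s in S₂, G s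
          ≤ ENNReal.ofReal d * ∫⁻ s in S₂, (ENNReal.ofReal ((b/2)^(ν-1)/(d/2))
              * ENNReal.ofReal (‖s - z₂‖ ^ (-1:ℝ))) :=
            mul_le_mul_right (setLIntegral_mono' measurableSet_ball hpt) _
        _ = ENNReal.ofReal d * (ENNReal.ofReal ((b/2)^(ν-1)/(d/2))
              * ∫⁻ s in S₂, ENNReal.ofReal (‖s - z₂‖ ^ (-1:ℝ))) := by
            rw [lintegral_const_mul' _ _ ENNReal.ofReal_ne_top]
        _ ≤ ENNReal.ofReal d * (ENNReal.ofReal ((b/2)^(ν-1)/(d/2))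
              * ENNReal.ofReal (Cball (-1) * (d/2) ^ ((-1:ℝ) + 2))) := by
            gcongr
            exact lint_ball z₂ (by norm_num) (by norm_num) (by positivity)
        _ ≤ ENNReal.ofReal (c₂ * X) := by
            rw [← ENNReal.ofReal_mul (by positivity), ← ENNReal.ofReal_mul hd.le]
            apply ENNReal.ofReal_le_ofReal
            have e0 : (-1:ℝ) + 2 = 1 := by norm_num
            rw [e0, Real.rpow_one]
            have hfin : d * ((b/2)^(ν-1)/(d/2) * (Cball (-1) * (d/2)))
                = Cball (-1) * ((b/2)^(ν-1) * d) := by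
              field_simp
            rw [hfin]
            have ebb : (b/2)^(ν-1) ≤ 2 * b^(ν-1) := hhalf b hb
            rcases le_or_gt 1 b with hb1 | hb1
            · -- 1 ≤ b : b^(ν-1) ≤ 1
              have h1 : b^(ν-1) ≤ 1 :=
                Real.rpow_le_one_of_one_le_of_nonpos hb1 (by linarith)
              have h2 : (b/2)^(ν-1) * d ≤ 2 * d := by
                have h3 : (b/2)^(ν-1) ≤ 2 := by linarith
                exact mul_le_mul_of_nonneg_right h3 hd.le
              calc Cball (-1) * ((b/2)^(ν-1) * d) ≤ Cball (-1) * (2 * d) :=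
                    mul_le_mul_of_nonneg_left h2 hCb1.le
                _ = 2 * Cball (-1) * d := by ring
                _ ≤ 2 * Cball (-1) * X := mul_le_mul_of_nonneg_left hdX (by positivity)
                _ ≤ c₂ * X := by
                    apply mul_le_mul_of_nonneg_right ?_ hX0
                    rw [hc₂]
                    linarith
            · -- b < 1 : then m ≤ 2b so b^(ν-1) ≤ (m/2)^(ν-1) ≤ 2 mp
              have hm2b : m/2 ≤ b := by linarith
              have h1 : b^(ν-1) ≤ (m/2)^(ν-1) :=
                Real.rpow_le_rpow_of_nonpos (by positivity) hm2b (by linarith)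
              have h2 := hhalf m hm
              have h3 : (b/2)^(ν-1) ≤ 4 * mp := by
                rw [hmp_def]
                linarith
              have h4 : (b/2)^(ν-1) * d ≤ 4 * (mp * d) := by
                have := mul_le_mul_of_nonneg_right h3 hd.le
                calc (b/2)^(ν-1) * d ≤ 4 * mp * d := this
                  _ = 4 * (mp * d) := by ring
              calc Cball (-1) * ((b/2)^(ν-1) * d) ≤ Cball (-1) * (4 * (mp * d)) :=
                    mul_le_mul_of_nonneg_left h4 hCb1.le
                _ = 4 * Cball (-1) * (mp * d) := by ring
                _ ≤ 4 * Cball (-1) * X := mul_le_mul_of_nonneg_left hmpdX (by positivity)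
                _ ≤ c₂ * X := by
                    apply mul_le_mul_of_nonneg_right ?_ hX0
                    rw [hc₂]
                    linarith
  have hsplit : ∫⁻ s, G s ≤ (∫⁻ s in S₁, G s) + ((∫⁻ s in S₂, G s) + ((∫⁻ s in Sa, G s)
      + ((∫⁻ s in Sb, G s) + (∫⁻ s in Sc, G s)))) := by
    calc ∫⁻ s, G s = ∫⁻ s in (univ : Set ℂ), G s := (setLIntegral_univ _).symm
      _ ≤ ∫⁻ s in S₁ ∪ (S₂ ∪ (Sa ∪ (Sb ∪ Sc))), G s := lintegral_mono_set hcover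
      _ ≤ (∫⁻ s in S₁, G s) + (∫⁻ s in S₂ ∪ (Sa ∪ (Sb ∪ Sc)), G s) := lintegral_union_le _ _ _
      _ ≤ _ := by
        gcongr
        calc ∫⁻ s in S₂ ∪ (Sa ∪ (Sb ∪ Sc)), G s
            ≤ (∫⁻ s in S₂, G s) + (∫⁻ s in Sa ∪ (Sb ∪ Sc), G s) := lintegral_union_le _ _ _
          _ ≤ _ := by
            gcongr
            calc ∫⁻ s in Sa ∪ (Sb ∪ Sc), G s
                ≤ (∫⁻ s in Sa, G s) + (∫⁻ s in Sb ∪ Sc, G s) := lintegral_union_le _ _ _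
              _ ≤ _ := by
                gcongr
                exact lintegral_union_le _ _ _
  calc ENNReal.ofReal d * ∫⁻ s, G s
      ≤ ENNReal.ofReal d * ((∫⁻ s in S₁, G s) + ((∫⁻ s in S₂, G s) + ((∫⁻ s in Sa, G s)
        + ((∫⁻ s in Sb, G s) + (∫⁻ s in Sc, G s))))) := mul_le_mul_right hsplit _
    _ = ENNReal.ofReal d * (∫⁻ s in S₁, G s) + (ENNReal.ofReal d * (∫⁻ s in S₂, G s)
        + (ENNReal.ofReal d * (∫⁻ s in Sa, G s) + (ENNReal.ofReal d * (∫⁻ s in Sb, G s)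
        + ENNReal.ofReal d * (∫⁻ s in Sc, G s)))) := by ring
    _ ≤ ENNReal.ofReal (c₁ * X) + (ENNReal.ofReal (c₂ * X) + (ENNReal.ofReal (c₃ * X)
        + (ENNReal.ofReal (c₄ * X) + ENNReal.ofReal (c₅ * X)))) := by
        exact add_le_add hB1 (add_le_add hB2 (add_le_add hBa (add_le_add hBb hBc)))
    _ = ENNReal.ofReal (c₁ * X + (c₂ * X + (c₃ * X + (c₄ * X + c₅ * X)))) := by
        rw [← ENNReal.ofReal_add (by positivity) (by positivity),
          ← ENNReal.ofReal_add (by positivity) (by positivity),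
          ← ENNReal.ofReal_add (by positivity) (by positivity),
          ← ENNReal.ofReal_add (by positivity) (by positivity)]
    _ = ENNReal.ofReal ((c₁ + (c₂ + (c₃ + (c₄ + c₅)))) * ((1 + mp) * phi d)) := by
        rw [hX_def]; congr 1; ring



lemma point_bound {ν a y z fv M : ℝ} (hν1 : ν < 1) (ha : 0 ≤ a) (hy : 0 ≤ y) (hz : 0 ≤ z)
    (hf : |fv| ≤ M) : |fv| / (a ^ (1-ν) * y * z) ≤ M * (a ^ (ν-1) / (y * z)) := by
  have e1 : a ^ (1-ν) = (a ^ (ν-1))⁻¹ := by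
    rw [show (1-ν) = -(ν-1) by ring, Real.rpow_neg ha]
  rw [e1]
  have e2 : |fv| / ((a^(ν-1))⁻¹ * y * z) = |fv| * a^(ν-1) / (y * z) := by
    rw [div_eq_mul_inv, div_eq_mul_inv, mul_inv, mul_inv, mul_inv, inv_inv]
    ring
  rw [e2]
  rcases eq_or_lt_of_le (mul_nonneg hy hz) with h0 | h0
  · rw [← h0, div_zero, div_zero, mul_zero]
  · rw [← mul_div_assoc]
    apply div_le_div₀ (mul_nonneg (le_trans (abs_nonneg fv) hf) (Real.rpow_nonneg ha _))
      (mul_le_mul_of_nonneg_right hf (Real.rpow_nonneg ha _)) h0 le_rfl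


end IthreeAux

theorem Ithree_estimate_second (ν : ℝ) (hν0 : 0 < ν) (hν1 : ν < 1) :
    ∃ C > 0, ∀ (z₁ z₂ : ℂ) (f : ℂ → ℝ), z₁ ≠ 0 → z₂ ≠ 0 → z₁ ≠ z₂ → Measurable f →
      MemLp f 1 volume → MemLp f ⊤ volume →
      ENNReal.ofReal ‖z₁ - z₂‖ *
        ∫⁻ s, ENNReal.ofReal (|f s| /
          (‖s‖ ^ (1 - ν) * ‖s - z₁‖ * ‖s - z₂‖)) ≤
      ENNReal.ofReal (C * (eLpNorm f ⊤ volume).toReal *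
        (1 + min (‖z₁‖ ^ (ν - 1)) (‖z₂‖ ^ (ν - 1))) *
        phi ‖z₁ - z₂‖) := by
  obtain ⟨C, hC, hkey⟩ := IthreeAux.key ν hν0 hν1
  refine ⟨C, hC, ?_⟩
  intro z₁ z₂ f hz₁ hz₂ hne hmeas hL1 hLtop
  set M := (eLpNorm f ⊤ volume).toReal with hM
  have hM0 : 0 ≤ M := ENNReal.toReal_nonneg
  have hae : ∀ᵐ s : ℂ, |f s| ≤ M := by
    have h1 : ∀ᵐ s : ℂ, ‖f s‖₊ ≤ eLpNormEssSup f volume := ae_le_eLpNormEssSup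
    have hfin : eLpNorm f ⊤ volume ≠ ⊤ := hLtop.2.ne
    filter_upwards [h1] with s hs
    have h2 : (‖f s‖₊ : ℝ≥0∞) ≤ eLpNorm f ⊤ volume := by
      rw [eLpNorm_exponent_top]; exact hs
    have h3 := ENNReal.toReal_mono hfin h2
    simpa [hM, Real.norm_eq_abs] using h3
  have hstep : ∀ w₁ w₂ : ℂ,
      (∫⁻ s, ENNReal.ofReal (|f s| /
        (‖s‖ ^ (1 - ν) * ‖s - w₁‖ * ‖s - w₂‖)))
      ≤ ENNReal.ofReal M * ∫⁻ s, ENNReal.ofReal (‖s‖ ^ (ν - 1) /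
        (‖s - w₁‖ * ‖s - w₂‖)) := by
    intro w₁ w₂
    calc (∫⁻ s, ENNReal.ofReal (|f s| /
          (‖s‖ ^ (1 - ν) * ‖s - w₁‖ * ‖s - w₂‖)))
        ≤ ∫⁻ s, ENNReal.ofReal (M * (‖s‖ ^ (ν - 1) /
            (‖s - w₁‖ * ‖s - w₂‖))) := by
          apply lintegral_mono_ae
          filter_upwards [hae] with s hs
          exact ENNReal.ofReal_le_ofReal (IthreeAux.point_bound hν1 (norm_nonneg s)
            (norm_nonneg _) (norm_nonneg _) hs)
      _ = ∫⁻ s, ENNReal.ofReal M * ENNReal.ofReal (‖s‖ ^ (ν - 1) /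
            (‖s - w₁‖ * ‖s - w₂‖)) := by
          simp_rw [ENNReal.ofReal_mul hM0]
      _ = ENNReal.ofReal M * ∫⁻ s, ENNReal.ofReal (‖s‖ ^ (ν - 1) /
            (‖s - w₁‖ * ‖s - w₂‖)) :=
          lintegral_const_mul' _ _ ENNReal.ofReal_ne_top
  rcases le_total (‖z₂‖) (‖z₁‖) with hcase | hcase
  · have hmin : min (‖z₁‖ ^ (ν - 1)) (‖z₂‖ ^ (ν - 1))
        = ‖z₁‖ ^ (ν - 1) :=
      min_eq_left (Real.rpow_le_rpow_of_nonpos (norm_pos_iff.mpr hz₂) hcase (by linarith))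
    calc ENNReal.ofReal (‖z₁ - z₂‖) *
          ∫⁻ s, ENNReal.ofReal (|f s| /
            (‖s‖ ^ (1 - ν) * ‖s - z₁‖ * ‖s - z₂‖))
        ≤ ENNReal.ofReal (‖z₁ - z₂‖) * (ENNReal.ofReal M
            * ∫⁻ s, ENNReal.ofReal (‖s‖ ^ (ν - 1) /
              (‖s - z₁‖ * ‖s - z₂‖))) :=
          mul_le_mul_right (hstep z₁ z₂) _
      _ = ENNReal.ofReal M * (ENNReal.ofReal (‖z₁ - z₂‖)
            * ∫⁻ s, ENNReal.ofReal (‖s‖ ^ (ν - 1) /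
              (‖s - z₁‖ * ‖s - z₂‖))) := by ring
      _ ≤ ENNReal.ofReal M * ENNReal.ofReal (C * ((1 + ‖z₁‖ ^ (ν - 1))
            * phi (‖z₁ - z₂‖))) :=
          mul_le_mul_right (hkey z₁ z₂ hz₁ hz₂ hne hcase) _
      _ = ENNReal.ofReal (M * (C * ((1 + ‖z₁‖ ^ (ν - 1))
            * phi (‖z₁ - z₂‖)))) := (ENNReal.ofReal_mul hM0).symm
      _ ≤ ENNReal.ofReal (C * M *
          (1 + min (‖z₁‖ ^ (ν - 1)) (‖z₂‖ ^ (ν - 1))) *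
          phi (‖z₁ - z₂‖)) := by
          rw [hmin]
          apply ENNReal.ofReal_le_ofReal
          apply le_of_eq
          ring
  · have hmin : min (‖z₁‖ ^ (ν - 1)) (‖z₂‖ ^ (ν - 1))
        = ‖z₂‖ ^ (ν - 1) :=
      min_eq_right (Real.rpow_le_rpow_of_nonpos (norm_pos_iff.mpr hz₁) hcase (by linarith))
    have hdsym : ‖z₂ - z₁‖ = ‖z₁ - z₂‖ := norm_sub_rev z₂ z₁
    have hswap : (∫⁻ s, ENNReal.ofReal (‖s‖ ^ (ν - 1) /
          (‖s - z₂‖ * ‖s - z₁‖)))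
        = ∫⁻ s, ENNReal.ofReal (‖s‖ ^ (ν - 1) /
          (‖s - z₁‖ * ‖s - z₂‖)) := by
      apply lintegral_congr
      intro s
      rw [mul_comm]
    have hk := hkey z₂ z₁ hz₂ hz₁ (Ne.symm hne) hcase
    rw [hdsym, hswap] at hk
    calc ENNReal.ofReal (‖z₁ - z₂‖) *
          ∫⁻ s, ENNReal.ofReal (|f s| /
            (‖s‖ ^ (1 - ν) * ‖s - z₁‖ * ‖s - z₂‖))
        ≤ ENNReal.ofReal (‖z₁ - z₂‖) * (ENNReal.ofReal M
            * ∫⁻ s, ENNReal.ofReal (‖s‖ ^ (ν - 1) /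
              (‖s - z₁‖ * ‖s - z₂‖))) :=
          mul_le_mul_right (hstep z₁ z₂) _
      _ = ENNReal.ofReal M * (ENNReal.ofReal (‖z₁ - z₂‖)
            * ∫⁻ s, ENNReal.ofReal (‖s‖ ^ (ν - 1) /
              (‖s - z₁‖ * ‖s - z₂‖))) := by ring
      _ ≤ ENNReal.ofReal M * ENNReal.ofReal (C * ((1 + ‖z₂‖ ^ (ν - 1))
            * phi (‖z₁ - z₂‖))) := mul_le_mul_right hk _
      _ = ENNReal.ofReal (M * (C * ((1 + ‖z₂‖ ^ (ν - 1))
            * phi (‖z₁ - z₂‖)))) := (ENNReal.ofReal_mul hM0).symm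
      _ ≤ ENNReal.ofReal (C * M *
          (1 + min (‖z₁‖ ^ (ν - 1)) (‖z₂‖ ^ (ν - 1))) *
          phi (‖z₁ - z₂‖)) := by
          rw [hmin]
          apply ENNReal.ofReal_le_ofReal
          apply le_of_eq
          ring
end

section
/- For 1/2 < ν < 1 and 0 < ε ≤ 1, with Ψ_ε(z) = (z^{1/ν} - iε)/(1 + ε² + iε z^{1/ν}) and Ψ_ε⁻¹(w) = (w/(1 - iεw) + iε)^ν, the inverse derivative satisfies |(Ψ_ε)_z(Ψ_ε⁻¹(w))|^{-2} ≤ C_ν · |w + iε|^{2ν - 2} for all w in the upper half plane ℍ, where C_ν depends only on ν. -/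
/-- The Riemann map Ψ_ε from Ω_ε onto the upper half plane. -/
noncomputable def PsiEps (ν ε : ℝ) (z : ℂ) : ℂ :=
  (z ^ ((1/(ν:ℂ))) - Complex.I * ε) / (1 + (ε:ℂ)^2 + Complex.I * ε * z ^ ((1/(ν:ℂ))))

/-- The inverse map Ψ_ε⁻¹(w) = (w/(1 - iεw) + iε)^ν. -/
noncomputable def PsiEpsInv (ν ε : ℝ) (w : ℂ) : ℂ :=
  (w / (1 - Complex.I * ε * w) + Complex.I * ε) ^ ((ν : ℂ))

set_option maxHeartbeats 1000000 in
theorem PsiEps_inv_deriv_bound (ν : ℝ) (hν1 : 1/2 < ν) (hν2 : ν < 1) :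
    ∃ C > 0, ∀ ε : ℝ, 0 < ε → ε ≤ 1 → ∀ w : ℂ, 0 < w.im →
      ‖deriv (PsiEps ν ε) (PsiEpsInv ν ε w)‖ ^ (-2 : ℝ) ≤
        C * ‖w + Complex.I * ε‖ ^ (2*ν - 2) := by
  refine ⟨1, one_pos, ?_⟩
  intro ε hε hε1 w hw
  have hν0 : 0 < ν := by linarith
  have hνC : (ν:ℂ) ≠ 0 := by exact_mod_cast hν0.ne'
  set c : ℂ := 1/(ν:ℂ) with hc
  set B : ℂ := 1 - Complex.I * ε * w with hB
  set u : ℂ := w / B + Complex.I * ε with hu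
  set z0 : ℂ := u ^ ((ν:ℂ)) with hz0
  have hz0def : PsiEpsInv ν ε w = z0 := rfl
  -- components of B
  have hBre : B.re = 1 + ε * w.im := by
    simp [hB, Complex.sub_re, Complex.mul_re, Complex.mul_im]
  have hBim : B.im = -(ε * w.re) := by
    simp [hB, Complex.sub_im, Complex.mul_re, Complex.mul_im]
  have hBne : B ≠ 0 := by
    intro h
    rw [h] at hBre
    simp at hBre
    nlinarith
  -- u has positive imaginary part
  have hBnorm : 0 < Complex.normSq B := Complex.normSq_pos.mpr hBne
  have hwB_im : (w / B).im = (w.im * B.re - w.re * B.im) / Complex.normSq B := by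
    rw [Complex.div_im]; ring
  have hu_im : 0 < u.im := by
    have h1 : u.im = (w / B).im + ε := by simp [hu]
    have h2 : 0 < w.im * B.re - w.re * B.im := by
      rw [hBre, hBim]
      nlinarith [mul_pos hε (mul_pos hw hw), mul_nonneg hε.le (mul_self_nonneg w.re)]
    rw [h1, hwB_im]
    positivity
  have hu_ne : u ≠ 0 := by
    intro h; rw [h] at hu_im; simp at hu_im
  have hu_slit : u ∈ Complex.slitPlane := Complex.mem_slitPlane_iff.mpr (Or.inr hu_im.ne')
  -- arg bounds
  have harg_pos : 0 < u.arg := by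
    rcases (Complex.arg_nonneg_iff.mpr hu_im.le).lt_or_eq with h | h
    · exact h
    · exfalso
      have := Complex.arg_eq_zero_iff.mp h.symm
      exact hu_im.ne' this.2
  have harg_le : u.arg ≤ Real.pi := Complex.arg_le_pi u
  -- z0 in upper half plane
  have hlog_im : (Complex.log u * (ν:ℂ)).im = u.arg * ν := by
    simp [Complex.mul_im, Complex.log_im]
  have hνarg_pos : 0 < u.arg * ν := mul_pos harg_pos hν0
  have hνarg_lt : u.arg * ν < Real.pi := by
    have : u.arg * ν < u.arg * 1 := by
      apply mul_lt_mul_of_pos_left hν2 harg_pos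
    nlinarith
  have hz0_im : 0 < z0.im := by
    rw [hz0, Complex.cpow_def_of_ne_zero hu_ne, Complex.exp_im, hlog_im]
    have := Real.sin_pos_of_pos_of_lt_pi hνarg_pos hνarg_lt
    positivity
  have hz0_slit : z0 ∈ Complex.slitPlane := Complex.mem_slitPlane_iff.mpr (Or.inr hz0_im.ne')
  have hz0_ne : z0 ≠ 0 := Complex.slitPlane_ne_zero hz0_slit
  -- z0 ^ c = u
  have hpow : z0 ^ c = u := by
    rw [hz0, ← Complex.cpow_mul]
    · rw [hc, mul_one_div, div_self hνC, Complex.cpow_one]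
    · rw [hlog_im]; nlinarith [Real.pi_pos]
    · rw [hlog_im]; linarith
  -- derivative computation
  have hG : HasDerivAt (fun z : ℂ => z ^ c) (c * z0 ^ (c-1)) z0 :=
    (Complex.hasStrictDerivAt_cpow_const hz0_slit).hasDerivAt
  set g' : ℂ := c * z0 ^ (c-1) with hg'
  have hN : HasDerivAt (fun z : ℂ => z ^ c - Complex.I * ε) g' z0 := hG.sub_const _
  have hD : HasDerivAt (fun z : ℂ => 1 + (ε:ℂ)^2 + Complex.I * ε * z ^ c)
      (Complex.I * ε * g') z0 := (hG.const_mul (Complex.I * (ε:ℂ))).const_add _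
  have hDinv : 1 + (ε:ℂ)^2 + Complex.I * ε * u = B⁻¹ := by
    apply eq_inv_of_mul_eq_one_right
    rw [hu, hB]
    have hBne' : (1 : ℂ) - Complex.I * ε * w ≠ 0 := hBne
    field_simp
    ring_nf
    linear_combination ((ε:ℂ)^2 - (ε:ℂ)^3*Complex.I*w) * Complex.I_sq
  have hDne : 1 + (ε:ℂ)^2 + Complex.I * ε * z0 ^ c ≠ 0 := by
    rw [hpow, hDinv]; exact inv_ne_zero hBne
  have hquot := hN.div hD hDne
  have hfun : PsiEps ν ε = fun z : ℂ =>
      (z ^ c - Complex.I * ε) / (1 + (ε:ℂ)^2 + Complex.I * ε * z ^ c) := rfl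
  have hderiv : deriv (PsiEps ν ε) z0 =
      (g' * (1 + (ε:ℂ)^2 + Complex.I * ε * z0 ^ c) -
        (z0 ^ c - Complex.I * ε) * (Complex.I * ε * g')) /
        (1 + (ε:ℂ)^2 + Complex.I * ε * z0 ^ c) ^ 2 := by
    rw [hfun]; exact hquot.deriv
  have hnum : g' * (1 + (ε:ℂ)^2 + Complex.I * ε * u) -
      (u - Complex.I * ε) * (Complex.I * ε * g') = g' := by
    linear_combination (ε:ℂ)^2 * g' * Complex.I_sq
  have hderiv2 : deriv (PsiEps ν ε) z0 = g' * B^2 := by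
    rw [hderiv, hpow, hnum, hDinv]
    field_simp
  -- absolute values
  set W : ℝ := ‖w + Complex.I * ε‖ with hW
  have hWim : (w + Complex.I * ε).im = w.im + ε := by simp
  have hWpos : 0 < W := by
    rw [hW]
    apply norm_pos_iff.mpr
    intro h
    rw [h] at hWim
    simp at hWim
    linarith
  set Bp : ℝ := ‖B‖ with hBp
  have hBppos : 0 < Bp := norm_pos_iff.mpr hBne
  have hBsq : Bp^2 = B.re^2 + B.im^2 := by
    rw [hBp, Complex.sq_norm, Complex.normSq_apply]; ring
  have hBp1 : 1 ≤ Bp := by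
    rw [hBre, hBim] at hBsq
    nlinarith [mul_pos hε hw, sq_nonneg (ε*w.re), sq_nonneg (ε*w.im)]
  set N : ℂ := (1+(ε:ℂ)^2)*w + Complex.I*ε with hNdef
  have hu_eq : u = N / B := by
    rw [hu, hNdef, eq_div_iff hBne, add_mul, div_mul_cancel₀ w hBne, hB]
    linear_combination (-w*(ε:ℂ)^2) * Complex.I_sq
  have hNre : N.re = (1+ε^2)*w.re := by
    simp [hNdef, Complex.add_re, Complex.mul_re, ← Complex.ofReal_pow]
  have hNim : N.im = (1+ε^2)*w.im + ε := by
    simp [hNdef, Complex.add_im, Complex.mul_im, ← Complex.ofReal_pow]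
  have hWN : W ≤ ‖N‖ := by
    have h1 : W^2 = w.re^2 + (w.im+ε)^2 := by
      rw [hW, Complex.sq_norm, Complex.normSq_apply]
      simp [Complex.add_re, Complex.add_im, Complex.mul_re, Complex.mul_im]
      ring
    have h2 : ‖N‖^2 = ((1+ε^2)*w.re)^2 + ((1+ε^2)*w.im+ε)^2 := by
      rw [Complex.sq_norm, Complex.normSq_apply, hNre, hNim]; ring
    have hsq : W^2 ≤ ‖N‖^2 := by
      rw [h1, h2]
      have ha : w.re^2 ≤ ((1+ε^2)*w.re)^2 := by
        nlinarith [sq_nonneg (ε*w.re), sq_nonneg (ε*ε*w.re)]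
      have hb : (w.im+ε)^2 ≤ ((1+ε^2)*w.im+ε)^2 := by
        nlinarith [sq_nonneg (ε*w.im), sq_nonneg (ε*ε*w.im),
          mul_pos (mul_pos (mul_pos hε hε) hε) hw]
      linarith
    nlinarith [hsq, norm_nonneg N, hWpos]
  -- absolute value of the derivative
  have hab_c : ‖c‖ = ν⁻¹ := by
    rw [hc, norm_div, norm_one]
    rw [Complex.norm_real, Real.norm_eq_abs, abs_of_pos hν0, one_div]
  have hc1 : c - 1 = ((1/ν - 1 : ℝ) : ℂ) := by rw [hc]; push_cast; ring
  have habsz0 : ‖z0‖ = ‖u‖ ^ ν := by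
    rw [hz0]; exact Complex.norm_cpow_real u ν
  have habs : ‖deriv (PsiEps ν ε) z0‖ =
      ν⁻¹ * ‖u‖ ^ (1-ν) * Bp^2 := by
    rw [hderiv2, norm_mul, norm_pow, hg', norm_mul, hab_c, hc1, Complex.norm_cpow_real,
      habsz0, ← Real.rpow_mul (norm_nonneg u), ← hBp]
    have : ν * (1/ν - 1) = 1 - ν := by field_simp
    rw [this]
  have hAu : ‖u‖ = ‖N‖ / Bp := by
    rw [hu_eq, norm_div, hBp]
  -- lower bound on the derivative
  have hlow : W ^ (1-ν) ≤ ‖deriv (PsiEps ν ε) z0‖ := by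
    rw [habs, hAu, Real.div_rpow (norm_nonneg N) (norm_nonneg B)]
    have h1 : W^(1-ν) ≤ ‖N‖ ^ (1-ν) :=
      Real.rpow_le_rpow hWpos.le hWN (by linarith)
    have h3 : 0 < Bp ^ (1-ν) := Real.rpow_pos_of_pos hBppos _
    have h2 : Bp ^ (1-ν) ≤ Bp^2 := by
      have := Real.rpow_le_rpow_of_exponent_le hBp1 (by linarith : 1-ν ≤ (2:ℝ))
      rwa [Real.rpow_two] at this
    have h4 : (1:ℝ) ≤ ν⁻¹ := by
      rw [le_inv_comm₀ one_pos hν0]; linarith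
    have key : ‖N‖ ^ (1-ν) ≤ ‖N‖ ^ (1-ν) / Bp ^ (1-ν) * Bp^2 := by
      rw [div_mul_eq_mul_div, le_div_iff₀ h3]
      exact mul_le_mul_of_nonneg_left h2 (Real.rpow_nonneg (norm_nonneg N) _)
    calc W^(1-ν) ≤ ‖N‖ ^ (1-ν) := h1
      _ ≤ ‖N‖ ^ (1-ν) / Bp ^ (1-ν) * Bp^2 := key
      _ ≤ ν⁻¹ * (‖N‖ ^ (1-ν) / Bp ^ (1-ν)) * Bp^2 := by
          have hnn : 0 ≤ ‖N‖ ^ (1-ν) / Bp ^ (1-ν) * Bp^2 := by positivity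
          nlinarith [hnn]
  -- conclude
  rw [hz0def, one_mul]
  have hfinal := Real.rpow_le_rpow_of_nonpos (Real.rpow_pos_of_pos hWpos (1-ν)) hlow
    (by norm_num : (-2:ℝ) ≤ 0)
  calc ‖deriv (PsiEps ν ε) z0‖ ^ (-2:ℝ)
      ≤ (W ^ (1-ν)) ^ (-2:ℝ) := hfinal
    _ = W ^ ((1-ν) * (-2)) := (Real.rpow_mul hWpos.le _ _).symm
    _ = W ^ (2*ν - 2) := by ring_nf
end

section
/- Let 1/2 < ν < 1, ε ∈ (0,1), and let Y : [0,T] → closure(ℍ₊) be continuously differentiable with Y(0) = y ∈ ℍ₊ and suppose Re(dY/dt) ≥ ((b₀ - ε)/ν²)·|Re Y(t)|^{2-2ν} on [0,T] for some b₀ > ε. If Re(Y(0)) ≥ 0 then for all t ∈ [0,T]: |Y(t)| ≥ Re(Y(t)) ≥ [ (2ν-1)(b₀-ε) t / ν² ]^{1/(2ν-1)}. -/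
open Set

theorem flow_moves_right (ν ε b₀ T : ℝ) (hν1 : 1/2 < ν) (hν2 : ν < 1)
    (hε1 : 0 < ε) (hε2 : ε < 1) (hb : ε < b₀) (hT : 0 < T)
    (Y Y' : ℝ → ℂ)
    (hderiv : ∀ t ∈ Icc (0:ℝ) T, HasDerivAt Y (Y' t) t)
    (hcont : ContinuousOn Y' (Icc 0 T))
    (hrange : ∀ t ∈ Icc (0:ℝ) T, 0 ≤ (Y t).re ∧ 0 ≤ (Y t).im)
    (hY0 : 0 < (Y 0).re ∧ 0 < (Y 0).im)
    (hineq : ∀ t ∈ Icc (0:ℝ) T,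
      ((b₀ - ε) / ν^2) * |(Y t).re| ^ (2 - 2*ν) ≤ (Y' t).re) :
    ∀ t ∈ Icc (0:ℝ) T,
      ((2*ν - 1) * (b₀ - ε) * t / ν^2) ^ ((1:ℝ)/(2*ν - 1)) ≤ (Y t).re ∧
      (Y t).re ≤ ‖Y t‖ := by
  have hν0 : (0:ℝ) < ν := lt_trans (by norm_num) hν1
  set p : ℝ := 2*ν - 1 with hp_def
  have hp : 0 < p := by simp only [hp_def]; linarith
  set c : ℝ := (b₀ - ε) / ν^2 with hc_def
  have hc : 0 < c := div_pos (by linarith) (by positivity)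
  set g : ℝ → ℝ := fun t => (Y t).re with hg_def
  -- derivative of g
  have hgderiv : ∀ t ∈ Icc (0:ℝ) T, HasDerivAt g ((Y' t).re) t := by
    intro t ht
    have := (Complex.reCLM.hasFDerivAt (x := Y t)).comp_hasDerivAt t (hderiv t ht)
    exact this
  have hgcont : ContinuousOn g (Icc 0 T) := fun t ht =>
    (hgderiv t ht).continuousAt.continuousWithinAt
  -- g' nonneg
  have hY'nonneg : ∀ t ∈ Icc (0:ℝ) T, 0 ≤ (Y' t).re := by
    intro t ht
    refine le_trans ?_ (hineq t ht)
    positivity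
  have hint : interior (Icc (0:ℝ) T) = Ioo 0 T := interior_Icc
  have hmem : ∀ t ∈ Ioo (0:ℝ) T, t ∈ Icc (0:ℝ) T := fun t ht => Ioo_subset_Icc_self ht
  have hgmono : MonotoneOn g (Icc 0 T) := by
    apply monotoneOn_of_hasDerivWithinAt_nonneg (convex_Icc 0 T) hgcont
    · intro t ht
      rw [hint] at ht
      exact ((hgderiv t (hmem t ht)).hasDerivWithinAt)
    · intro t ht
      rw [hint] at ht
      exact hY'nonneg t (hmem t ht)
  have h0mem : (0:ℝ) ∈ Icc (0:ℝ) T := ⟨le_refl 0, hT.le⟩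
  have hgpos : ∀ t ∈ Icc (0:ℝ) T, 0 < g t := fun t ht =>
    lt_of_lt_of_le hY0.1 (hgmono h0mem ht ht.1)
  -- F t = g t ^ p - p * c * t
  set F : ℝ → ℝ := fun t => g t ^ p - p * c * t with hF_def
  have hFderiv : ∀ t ∈ Icc (0:ℝ) T,
      HasDerivAt F ((Y' t).re * p * g t ^ (p - 1) - p * c) t := by
    intro t ht
    have h1 := (hgderiv t ht).rpow_const (p := p) (Or.inl (hgpos t ht).ne')
    have h2 : HasDerivAt (fun t : ℝ => p * c * t) (p * c) t := by
      simpa using (hasDerivAt_id t).const_mul (p * c)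
    exact h1.sub h2
  have hFderiv_nonneg : ∀ t ∈ Icc (0:ℝ) T,
      0 ≤ (Y' t).re * p * g t ^ (p - 1) - p * c := by
    intro t ht
    have hgt := hgpos t ht
    have habs : |(Y t).re| = g t := abs_of_pos hgt
    have h1 : c * g t ^ (2 - 2*ν) ≤ (Y' t).re := by
      have := hineq t ht; rwa [habs] at this
    have hpow : g t ^ (2 - 2*ν) * g t ^ (p - 1) = 1 := by
      rw [← Real.rpow_add hgt]
      have : (2 - 2*ν) + (p - 1) = 0 := by rw [hp_def]; ring
      rw [this, Real.rpow_zero]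
    have key : p * c ≤ (Y' t).re * p * g t ^ (p - 1) := by
      have h2 : (c * g t ^ (2 - 2*ν)) * p * g t ^ (p - 1)
          ≤ (Y' t).re * p * g t ^ (p - 1) := by
        apply mul_le_mul_of_nonneg_right (mul_le_mul_of_nonneg_right h1 hp.le)
        positivity
      calc p * c = (c * g t ^ (2 - 2*ν)) * p * g t ^ (p - 1) := by
            rw [mul_comm p c]
            rw [show (c * g t ^ (2 - 2*ν)) * p * g t ^ (p - 1)
                = c * p * (g t ^ (2 - 2*ν) * g t ^ (p - 1)) by ring, hpow, mul_one]
        _ ≤ _ := h2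
    linarith
  have hFcont : ContinuousOn F (Icc 0 T) := fun t ht =>
    (hFderiv t ht).continuousAt.continuousWithinAt
  have hFmono : MonotoneOn F (Icc 0 T) := by
    apply monotoneOn_of_hasDerivWithinAt_nonneg (convex_Icc 0 T) hFcont
    · intro t ht
      rw [hint] at ht
      exact ((hFderiv t (hmem t ht)).hasDerivWithinAt)
    · intro t ht
      rw [hint] at ht
      exact hFderiv_nonneg t (hmem t ht)
  intro t ht
  constructor
  · -- main inequality
    have hF0 : (0:ℝ) ≤ F 0 := by
      simp only [hF_def, mul_zero, sub_zero]
      exact Real.rpow_nonneg (hgpos 0 h0mem).le p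
    have hFt : F 0 ≤ F t := hFmono h0mem ht ht.1
    have hkey : p * c * t ≤ g t ^ p := by
      have : 0 ≤ F t := le_trans hF0 hFt
      simp only [hF_def] at this
      linarith
    have hgt := hgpos t ht
    have hrw : (2*ν - 1) * (b₀ - ε) * t / ν^2 = p * c * t := by
      rw [hp_def, hc_def]; ring
    rw [hrw]
    calc (p * c * t) ^ ((1:ℝ)/(2*ν-1))
        ≤ (g t ^ p) ^ ((1:ℝ)/(2*ν-1)) := by
          exact Real.rpow_le_rpow (mul_nonneg (by positivity) ht.1) hkey
            (one_div_nonneg.mpr (by linarith))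
      _ = g t := by
          rw [← Real.rpow_mul hgt.le, hp_def, mul_one_div,
            div_self (by linarith : (2*ν-1) ≠ 0), Real.rpow_one]
  · exact Complex.re_le_norm (Y t)
end
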